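/- arXiv:1201.4267 — 7 statements merged into one kernel-verified Lean document; each statement's English description precedes it below -/
import Mathlib

section
/- Let k be an algebraically closed field of characteristic zero and let A, B be finite-dimensional k-algebras. If S is a simple finite-dimensional left A-module and T a simple finite-dimensional left B-module, then S ⊗_k T is a simple left module over the tensor product algebra A ⊗_k B. Moreover, every simple left A ⊗_k B-module is isomorphic to S ⊗_k T for some simple left A-module S and simple left B-module T. -/
open TensorProduct

universe u v

section Aux

variable {k : Type u} [Field k]
variable {A : Type v} [Ring A] [Algebra k A] {B : Type v} [Ring B] [Algebra k B]

/-- Schur's lemma over an algebraically closed field: endomorphisms of a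
finite-dimensional simple module are scalars. -/
theorem schur_scalar [IsAlgClosed k] {S : Type v} [AddCommGroup S] [Module k S] [Module A S]
    [IsScalarTower k A S] [FiniteDimensional k S] (hS : IsSimpleModule A S) (g : S →ₗ[A] S) :
    ∃ c : k, ∀ s, g s = c • s := by
  haveI := hS
  haveI : Nontrivial S := IsSimpleModule.nontrivial A S
  let g' : S →ₗ[k] S :=
    { toFun := g
      map_add' := g.map_add
      map_smul' := fun c s => by
        simp only [RingHom.id_apply, ← algebraMap_smul A c s, ← algebraMap_smul A c (g s),
          map_smul] }
  obtain ⟨c, hc⟩ := Module.End.exists_eigenvalue (g' : Module.End k S)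
  obtain ⟨v, hv⟩ := hc.exists_hasEigenvector
  refine ⟨c, fun s => ?_⟩
  let h : S →ₗ[A] S :=
    { toFun := fun s => g s - c • s
      map_add' := fun x y => by rw [map_add, smul_add]; abel
      map_smul' := fun a x => by
        dsimp only [RingHom.id_apply]
        rw [map_smul, smul_sub]
        rw [← algebraMap_smul A c x, ← algebraMap_smul A c (a • x), smul_smul, smul_smul,
          Algebra.commutes] }
  have hker : h v = 0 := by
    have : g v = c • v := hv.apply_eq_smul
    simp only [h, LinearMap.coe_mk, AddHom.coe_mk, this, sub_self]
  have hzero : h = 0 := by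
    rcases h.injective_or_eq_zero with hinj | h0
    · exact absurd (hinj (by simpa using hker)) hv.2
    · exact h0
  have := congrArg (fun f : S →ₗ[A] S => f s) hzero
  simpa [h, sub_eq_zero] using this

variable {S : Type v} [AddCommGroup S] [Module k S] [Module A S] [IsScalarTower k A S]
variable {T : Type v} [AddCommGroup T] [Module k T]

/-- The projection `S ⊗ T → S` given by the `i`-th coordinate w.r.t. a basis of `T`. -/
noncomputable def projS {ι : Type*} (b : Module.Basis ι k T) (i : ι) : S ⊗[k] T →ₗ[k] S :=
  TensorProduct.lift (LinearMap.mk₂ k (fun s t => b.repr t i • s)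
    (fun s s' _ => by rw [smul_add])
    (fun c s t => by rw [smul_comm])
    (fun s t t' => by rw [map_add, Finsupp.add_apply, add_smul])
    (fun c s t => by rw [map_smul, Finsupp.smul_apply, smul_assoc]))

lemma projS_tmul {ι : Type*} (b : Module.Basis ι k T) (i : ι) (s : S) (t : T) :
    projS b i (s ⊗ₜ[k] t) = b.repr t i • s := rfl

lemma projS_expansion {ι : Type*} [Fintype ι] (b : Module.Basis ι k T) (x : S ⊗[k] T) :
    ∑ i, (projS b i x) ⊗ₜ[k] b i = x := by
  induction x using TensorProduct.induction_on with
  | zero => simp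
  | tmul s t =>
      simp_rw [projS_tmul, smul_tmul]
      rw [← TensorProduct.tmul_sum]
      congr 1
      exact b.sum_repr t
  | add x y hx hy => simp only [map_add, add_tmul, Finset.sum_add_distrib, hx, hy]

lemma projS_Asmul {ι : Type*} (b : Module.Basis ι k T) (i : ι) (a : A) (x : S ⊗[k] T) :
    projS b i (a • x) = a • projS b i x := by
  induction x using TensorProduct.induction_on with
  | zero => simp
  | tmul s t => rw [smul_tmul', projS_tmul, projS_tmul, smul_comm]
  | add x y hx hy => rw [smul_add, map_add, map_add, hx, hy, smul_add]

/-- `projS` as an `A`-linear map. -/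
noncomputable def projSA {ι : Type*} (b : Module.Basis ι k T) (i : ι) : S ⊗[k] T →ₗ[A] S :=
  { toFun := projS b i
    map_add' := fun x y => map_add _ x y
    map_smul' := fun a x => projS_Asmul b i a x }

lemma projSA_apply {ι : Type*} (b : Module.Basis ι k T) (i : ι) (x : S ⊗[k] T) :
    projSA (A := A) b i x = projS b i x := rfl

lemma tmul_ne_zero' {s : S} {t : T} (hs : s ≠ 0) (ht : t ≠ 0) : s ⊗ₜ[k] t ≠ (0 : S ⊗[k] T) := by
  classical
  let b := Module.Basis.ofVectorSpace k T
  have hrepr : b.repr t ≠ 0 := fun h => ht (by simpa using (LinearEquiv.map_eq_zero_iff b.repr).mp h)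
  obtain ⟨i, hi⟩ := Finsupp.ne_iff.mp hrepr
  intro h0
  have := congrArg (projS (S := S) b i) h0
  rw [projS_tmul] at this
  simp only [map_zero] at this
  exact smul_ne_zero (by simpa using hi) hs this

end Aux

section Part1

variable {k : Type u} [Field k] [IsAlgClosed k]
variable {A : Type v} [Ring A] [Algebra k A] {B : Type v} [Ring B] [Algebra k B]

theorem tensor_simple
    {S T : Type v} [AddCommGroup S] [Module k S] [Module A S] [IsScalarTower k A S]
    [FiniteDimensional k S]
    [AddCommGroup T] [Module k T] [Module B T] [IsScalarTower k B T] [FiniteDimensional k T]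
    (hS : IsSimpleModule A S) (hT : IsSimpleModule B T)
    [Module (A ⊗[k] B) (S ⊗[k] T)]
    (hact : ∀ (a : A) (b : B) (s : S) (t : T),
      (a ⊗ₜ[k] b : A ⊗[k] B) • (s ⊗ₜ[k] t : S ⊗[k] T) = (a • s) ⊗ₜ[k] (b • t)) :
    IsSimpleModule (A ⊗[k] B) (S ⊗[k] T) := by
  classical
  haveI := hS; haveI := hT
  haveI : Nontrivial S := IsSimpleModule.nontrivial A S
  haveI : Nontrivial T := IsSimpleModule.nontrivial B T
  obtain ⟨s0, hs0⟩ := exists_ne (0 : S)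
  obtain ⟨t0', ht0'⟩ := exists_ne (0 : T)
  have hAcompat : ∀ (a : A) (x : S ⊗[k] T), (a ⊗ₜ[k] (1 : B)) • x = a • x := by
    intro a x
    induction x using TensorProduct.induction_on with
    | zero => simp
    | tmul s t => rw [hact, one_smul, smul_tmul']
    | add x y hx hy => rw [smul_add, smul_add, hx, hy]
  haveI : Nontrivial (S ⊗[k] T) := ⟨⟨s0 ⊗ₜ t0', 0, tmul_ne_zero' hs0 ht0'⟩⟩
  haveI : Nontrivial (Submodule (A ⊗[k] B) (S ⊗[k] T)) :=
    ⟨⟨⊥, ⊤, fun h => by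
      obtain ⟨x, hx⟩ := exists_ne (0 : S ⊗[k] T)
      exact hx ((Submodule.mem_bot _).mp (h ▸ Submodule.mem_top))⟩⟩
  refine IsSimpleModule.mk (toIsSimpleOrder := ⟨fun W => ?_⟩)
  by_cases hW : W = ⊥
  · exact Or.inl hW
  refine Or.inr ?_
  -- W as an A-submodule
  let WA : Submodule A (S ⊗[k] T) :=
    { carrier := W
      add_mem' := fun hx hy => W.add_mem hx hy
      zero_mem' := W.zero_mem
      smul_mem' := fun a x hx => by
        have : a • x = (a ⊗ₜ[k] (1 : B)) • x := (hAcompat a x).symm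
        exact this ▸ W.smul_mem _ hx }
  haveI : IsArtinian A (S ⊗[k] T) := isArtinian_of_tower k inferInstance
  have hWA : WA ≠ ⊥ := by
    obtain ⟨x, hxW, hx0⟩ := Submodule.exists_mem_ne_zero_of_ne_bot hW
    intro h
    have hxWA : x ∈ WA := hxW
    rw [h, Submodule.mem_bot] at hxWA
    exact hx0 hxWA
  obtain ⟨m, hm, hmle⟩ := (eq_bot_or_exists_atom_le WA).resolve_left hWA
  haveI hmS : IsSimpleModule A ↥m := isSimpleModule_iff_isAtom.mpr hm
  -- a basis of T
  let n := Module.finrank k T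
  let bT : Module.Basis (Fin n) k T := Module.finBasis k T
  -- a projection not vanishing on m
  have hproj : ∃ j, (projSA (A := A) bT j).comp m.subtype ≠ 0 := by
    by_contra hall
    push_neg at hall
    apply hm.1
    rw [eq_bot_iff]
    intro x hx
    have hx0 : ∀ i, projS (S := S) bT i x = 0 := fun i => by
      have := congrArg (fun f : ↥m →ₗ[A] S => f ⟨x, hx⟩) (hall i)
      simpa [projSA] using this
    have := projS_expansion bT x
    rw [Submodule.mem_bot]
    rw [← this]
    simp [hx0]
  obtain ⟨j, hj⟩ := hproj
  have hbij := LinearMap.bijective_of_ne_zero hj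
  let e := LinearEquiv.ofBijective _ hbij
  let φ : S →ₗ[A] S ⊗[k] T := m.subtype.comp (e.symm : S →ₗ[A] ↥m)
  have hφW : ∀ s, φ s ∈ W := fun s => hmle (e.symm s).2
  have hφinj : Function.Injective φ :=
    m.injective_subtype.comp e.symm.injective
  -- φ s = s ⊗ t₀
  have hchoice : ∀ i : Fin n, ∃ c : k, ∀ s, ((projSA (A := A) bT i).comp φ) s = c • s :=
    fun i => schur_scalar hS _
  choose c hc using hchoice
  set t₀ : T := ∑ i, c i • bT i with ht₀
  have hφ_eq : ∀ s, φ s = s ⊗ₜ[k] t₀ := by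
    intro s
    conv_lhs => rw [← projS_expansion bT (φ s)]
    have : ∀ i, projS (S := S) bT i (φ s) = c i • s := fun i => hc i s
    rw [ht₀, TensorProduct.tmul_sum]
    refine Finset.sum_congr rfl fun i _ => ?_
    rw [this i, smul_tmul]
  have ht₀0 : t₀ ≠ 0 := by
    intro h
    have : φ s0 = 0 := by rw [hφ_eq, h, TensorProduct.tmul_zero]
    exact hs0 (hφinj (by simpa using this))
  -- the B-submodule of T of elements t with S ⊗ t ⊆ W
  let TW : Submodule B T :=
    { carrier := { t | ∀ s : S, s ⊗ₜ[k] t ∈ W }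
      zero_mem' := fun s => by rw [TensorProduct.tmul_zero]; exact W.zero_mem
      add_mem' := fun {t t'} ht ht' s => by
        rw [TensorProduct.tmul_add]; exact W.add_mem (ht s) (ht' s)
      smul_mem' := fun b t ht s => by
        have : s ⊗ₜ[k] (b • t) = (1 ⊗ₜ[k] b : A ⊗[k] B) • (s ⊗ₜ[k] t) := by
          rw [hact, one_smul]
        rw [this]
        exact W.smul_mem _ (ht s) }
  have ht₀TW : t₀ ∈ TW := fun s => (hφ_eq s) ▸ hφW s
  have hTW : TW = ⊤ := by
    rcases eq_bot_or_eq_top TW with h | h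
    · exact absurd ((Submodule.mem_bot _).mp (h ▸ ht₀TW)) ht₀0
    · exact h
  rw [eq_top_iff]
  intro x _
  induction x using TensorProduct.induction_on with
  | zero => exact W.zero_mem
  | tmul s t =>
      have : t ∈ TW := hTW ▸ Submodule.mem_top
      exact this s
  | add x y hx hy => exact W.add_mem (hx Submodule.mem_top) (hy Submodule.mem_top)

end Part1

/-- A factorization of a left `A ⊗[k] B`-module `X` as the tensor product `S ⊗[k] T` of a
simple left `A`-module `S` and a simple left `B`-module `T`, where `S ⊗[k] T` is a left
`A ⊗[k] B`-module via `(a ⊗ b) • (s ⊗ t) = (a • s) ⊗ (b • t)`. -/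
structure SimpleTensorFactorization (k : Type u) [Field k]
    (A : Type v) [Ring A] [Algebra k A] (B : Type v) [Ring B] [Algebra k B]
    (X : Type v) [AddCommGroup X] [Module (A ⊗[k] B) X] where
  S : Type v
  T : Type v
  [addS : AddCommGroup S]
  [modkS : Module k S]
  [modAS : Module A S]
  [towS : IsScalarTower k A S]
  [addT : AddCommGroup T]
  [modkT : Module k T]
  [modBT : Module B T]
  [towT : IsScalarTower k B T]
  [modST : Module (A ⊗[k] B) (S ⊗[k] T)]
  simpleS : IsSimpleModule A S
  simpleT : IsSimpleModule B T
  hact : ∀ (a : A) (b : B) (s : S) (t : T),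
    (a ⊗ₜ[k] b : A ⊗[k] B) • (s ⊗ₜ[k] t : S ⊗[k] T) = (a • s) ⊗ₜ[k] (b • t)
  equiv : X ≃ₗ[A ⊗[k] B] S ⊗[k] T

set_option maxHeartbeats 3000000 in
/-- Let `k` be an algebraically closed field of characteristic zero and let
`A`, `B` be finite-dimensional `k`-algebras.  If `S` is a simple finite-dimensional left
`A`-module and `T` a simple finite-dimensional left `B`-module, then `S ⊗[k] T` is a simple
left module over `A ⊗[k] B` (acting by `(a ⊗ b) • (s ⊗ t) = (a • s) ⊗ (b • t)`).  Moreover,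
every simple left `A ⊗[k] B`-module is isomorphic to such an `S ⊗[k] T`. -/
theorem simple_modules_of_tensor_algebra
    (k : Type u) [Field k] [IsAlgClosed k] [CharZero k]
    (A : Type v) [Ring A] [Algebra k A] [FiniteDimensional k A]
    (B : Type v) [Ring B] [Algebra k B] [FiniteDimensional k B]
    (S : Type v) [AddCommGroup S] [Module k S] [Module A S] [IsScalarTower k A S]
    [FiniteDimensional k S] (hS : IsSimpleModule A S)
    (T : Type v) [AddCommGroup T] [Module k T] [Module B T] [IsScalarTower k B T]
    [FiniteDimensional k T] (hT : IsSimpleModule B T)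
    [Module (A ⊗[k] B) (S ⊗[k] T)]
    (hact : ∀ (a : A) (b : B) (s : S) (t : T),
      (a ⊗ₜ[k] b : A ⊗[k] B) • (s ⊗ₜ[k] t : S ⊗[k] T) = (a • s) ⊗ₜ[k] (b • t)) :
    IsSimpleModule (A ⊗[k] B) (S ⊗[k] T)
    ∧ ∀ (X : Type v) [AddCommGroup X] [Module (A ⊗[k] B) X], IsSimpleModule (A ⊗[k] B) X →
        Nonempty (SimpleTensorFactorization k A B X) := by
  constructor
  · exact tensor_simple hS hT hact
  · intro X _ _ hX
    classical
    haveI := hX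
    -- scalar restrictions
    letI instkX : Module k X := Module.compHom X (algebraMap k (A ⊗[k] B))
    letI instAX : Module A X :=
      Module.compHom X (Algebra.TensorProduct.includeLeftRingHom (R := k) (A := A) (B := B))
    have hsmulk : ∀ (c : k) (x : X), c • x = algebraMap k (A ⊗[k] B) c • x := fun _ _ => rfl
    have hsmulA : ∀ (a : A) (x : X), a • x = (a ⊗ₜ[k] (1 : B)) • x := fun _ _ => rfl
    haveI : IsScalarTower k (A ⊗[k] B) X := ⟨fun c r x => by
      rw [Algebra.smul_def, mul_smul, hsmulk]⟩
    haveI : IsScalarTower k A X := ⟨fun c a x => by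
      rw [hsmulA, hsmulA, hsmulk, smul_smul, Algebra.TensorProduct.algebraMap_apply,
        Algebra.TensorProduct.tmul_mul_tmul, one_mul, ← Algebra.smul_def]⟩
    haveI : SMulCommClass A k X := ⟨fun a c x => by
      have h1 : a • (c • x) = ((a ⊗ₜ[k] (1:B)) * algebraMap k (A ⊗[k] B) c) • x := by
        rw [hsmulk c x, hsmulA a (algebraMap k (A ⊗[k] B) c • x), smul_smul]
      have h2 : c • (a • x) = (algebraMap k (A ⊗[k] B) c * (a ⊗ₜ[k] (1:B))) • x := by
        rw [hsmulA a x, hsmulk c ((a ⊗ₜ[k] (1:B) : A ⊗[k] B) • x), smul_smul]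
      rw [h1, h2, Algebra.commutes]⟩
    -- X is finite dimensional over k
    haveI : Nontrivial X := IsSimpleModule.nontrivial (A ⊗[k] B) X
    obtain ⟨x0, hx0⟩ := exists_ne (0 : X)
    have hgen := (isSimpleModule_iff_toSpanSingleton_surjective.mp hX).2 x0 hx0
    haveI : FiniteDimensional k X := by
      refine Module.Finite.of_surjective (R := k) (M := A ⊗[k] B) (σ := RingHom.id k)
        { toFun := fun r : A ⊗[k] B => r • x0
          map_add' := fun r r' => add_smul r r' x0
          map_smul' := fun c r => by
            exact smul_assoc c r x0 } ?_
      exact hgen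
    -- a simple A-submodule S₀ of X
    haveI : IsArtinian A X := isArtinian_of_tower k inferInstance
    obtain ⟨S₀, hS₀atom, -⟩ := (eq_bot_or_exists_atom_le (⊤ : Submodule A X)).resolve_left (by
      intro h
      obtain ⟨x, hx⟩ := exists_ne (0 : X)
      have : x ∈ (⊥ : Submodule A X) := by rw [← h]; trivial
      exact hx ((Submodule.mem_bot _).mp this))
    haveI hS₀ : IsSimpleModule A ↥S₀ := isSimpleModule_iff_isAtom.mpr hS₀atom
    haveI : FiniteDimensional k ↥S₀ := FiniteDimensional.of_injective
      ({ toFun := Subtype.val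
         map_add' := fun _ _ => rfl
         map_smul' := fun _ _ => rfl } : ↥S₀ →ₗ[k] X) Subtype.val_injective
    -- the B-module TT := Hom_A(S₀, X)
    let ρ : B →+* Module.End A X :=
      { toFun := fun b =>
          { toFun := fun x => ((1 : A) ⊗ₜ[k] b : A ⊗[k] B) • x
            map_add' := fun x y => smul_add _ x y
            map_smul' := fun a x => by
              dsimp only [RingHom.id_apply]
              rw [hsmulA, hsmulA, smul_smul, smul_smul, Algebra.TensorProduct.tmul_mul_tmul,
                Algebra.TensorProduct.tmul_mul_tmul, one_mul, mul_one, one_mul, mul_one] }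
        map_one' := LinearMap.ext fun x => by
          show ((1 : A) ⊗ₜ[k] (1 : B) : A ⊗[k] B) • x = x
          rw [← Algebra.TensorProduct.one_def, one_smul]
        map_mul' := fun b b' => LinearMap.ext fun x => by
          show ((1 : A) ⊗ₜ[k] (b * b') : A ⊗[k] B) • x = _
          rw [Module.End.mul_apply]
          show _ = ((1:A) ⊗ₜ[k] b : A ⊗[k] B) • (((1:A) ⊗ₜ[k] b' : A ⊗[k] B) • x)
          rw [smul_smul, Algebra.TensorProduct.tmul_mul_tmul, one_mul]
        map_zero' := LinearMap.ext fun x => by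
          show ((1 : A) ⊗ₜ[k] (0 : B) : A ⊗[k] B) • x = 0
          rw [TensorProduct.tmul_zero, zero_smul]
        map_add' := fun b b' => LinearMap.ext fun x => by
          show ((1 : A) ⊗ₜ[k] (b + b') : A ⊗[k] B) • x = _
          rw [TensorProduct.tmul_add, add_smul]; rfl }
    letI instBT : Module B (↥S₀ →ₗ[A] X) := Module.compHom _ ρ
    have hBf : ∀ (b : B) (f : ↥S₀ →ₗ[A] X) (s : ↥S₀),
        (b • f) s = ((1 : A) ⊗ₜ[k] b : A ⊗[k] B) • f s := fun _ _ _ => rfl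
    have hkf : ∀ (c : k) (f : ↥S₀ →ₗ[A] X) (s : ↥S₀), (c • f) s = c • f s := fun _ _ _ => rfl
    haveI : IsScalarTower k B (↥S₀ →ₗ[A] X) := ⟨fun c b f => LinearMap.ext fun s => by
      rw [hBf, hkf, hBf, hsmulk, smul_smul, TensorProduct.tmul_smul, Algebra.smul_def]⟩
    have hincl : (S₀.subtype : ↥S₀ →ₗ[A] X) ≠ 0 := by
      obtain ⟨x, hxS, hx0⟩ := Submodule.exists_mem_ne_zero_of_ne_bot hS₀atom.1
      intro h
      exact hx0 (by simpa using congrArg (fun f : ↥S₀ →ₗ[A] X => f ⟨x, hxS⟩) h)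
    haveI : FiniteDimensional k (↥S₀ →ₗ[A] X) := by
      refine FiniteDimensional.of_injective
        ({ toFun := fun f =>
            { toFun := f
              map_add' := f.map_add
              map_smul' := fun c s => by
                dsimp only [RingHom.id_apply]
                rw [← algebraMap_smul A c s, map_smul, algebraMap_smul] }
           map_add' := fun f g => rfl
           map_smul' := fun c f => rfl } : (↥S₀ →ₗ[A] X) →ₗ[k] (↥S₀ →ₗ[k] X))
        (fun f g h => LinearMap.ext fun s => congrArg (fun F : ↥S₀ →ₗ[k] X => F s) h)
    -- the sup of ranges over a nonzero B-submodule is everything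
    have hU : ∀ (T' : Submodule B (↥S₀ →ₗ[A] X)), T' ≠ ⊥ →
        (⨆ f : T', LinearMap.range (f : ↥S₀ →ₗ[A] X) : Submodule A X) = ⊤ := by
      intro T' hT'
      set U : Submodule A X := ⨆ f : T', LinearMap.range (f : ↥S₀ →ₗ[A] X) with hUdef
      let UAB : Submodule (A ⊗[k] B) X :=
        { carrier := U
          add_mem' := fun hx hy => U.add_mem hx hy
          zero_mem' := U.zero_mem
          smul_mem' := by
            intro r x hx
            induction r using TensorProduct.induction_on with
            | zero => rw [zero_smul]; exact U.zero_mem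
            | tmul a b =>
              refine Submodule.iSup_induction (motive := fun y => (a ⊗ₜ[k] b : A ⊗[k] B) • y ∈ U)
                _ hx ?_ ?_ ?_
              · rintro f y ⟨s, rfl⟩
                have h2 : (a ⊗ₜ[k] b : A ⊗[k] B) • ((f : ↥S₀ →ₗ[A] X) s)
                    = (b • (f : ↥S₀ →ₗ[A] X)) (a • s) := by
                  have h1 : (a ⊗ₜ[k] b : A ⊗[k] B)
                      = (a ⊗ₜ[k] (1 : B)) * ((1 : A) ⊗ₜ[k] b) := by
                    rw [Algebra.TensorProduct.tmul_mul_tmul, mul_one, one_mul]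
                  rw [h1, mul_smul, ← hBf, ← hsmulA, ← map_smul]
                rw [h2]
                exact Submodule.mem_iSup_of_mem ⟨b • ↑f, T'.smul_mem b f.2⟩ ⟨a • s, rfl⟩
              · rw [smul_zero]; exact U.zero_mem
              · intro y z hy hz; rw [smul_add]; exact U.add_mem hy hz
            | add r r' hr hr' => rw [add_smul]; exact U.add_mem hr hr' }
      obtain ⟨f₀, hf₀T', hf₀⟩ := Submodule.exists_mem_ne_zero_of_ne_bot hT'
      have hUAB : UAB ≠ ⊥ := by
        have : ∃ s : ↥S₀, f₀ s ≠ 0 := by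
          by_contra hall
          push_neg at hall
          exact hf₀ (LinearMap.ext fun s => by rw [hall s]; rfl)
        obtain ⟨s, hs⟩ := this
        intro h
        have hmem : f₀ s ∈ UAB := Submodule.mem_iSup_of_mem ⟨f₀, hf₀T'⟩ ⟨s, rfl⟩
        rw [h, Submodule.mem_bot] at hmem
        exact hs hmem
      have hUABtop : UAB = ⊤ := (eq_bot_or_eq_top UAB).resolve_left hUAB
      refine Submodule.eq_top_iff'.mpr fun x => ?_
      have : x ∈ UAB := by rw [hUABtop]; trivial
      exact this
    -- TT is a simple B-module
    have hTsimple : IsSimpleModule B (↥S₀ →ₗ[A] X) := by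
      haveI : Nontrivial (Submodule B (↥S₀ →ₗ[A] X)) := ⟨⟨⊥, ⊤, fun h => hincl (by
        have : (S₀.subtype : ↥S₀ →ₗ[A] X) ∈ (⊥ : Submodule B (↥S₀ →ₗ[A] X)) := by
          rw [h]; trivial
        simpa using this)⟩⟩
      refine IsSimpleModule.mk (toIsSimpleOrder := ⟨fun T' => ?_⟩)
      by_cases hT' : T' = ⊥
      · exact Or.inl hT'
      refine Or.inr ?_
      have hTk : ∀ (c : k) (f : ↥S₀ →ₗ[A] X), f ∈ T' → c • f ∈ T' := by
        intro c f hf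
        have : c • f = (c • (1 : B)) • f := by
          refine LinearMap.ext fun s => ?_
          rw [hkf, hBf, TensorProduct.tmul_smul, ← Algebra.TensorProduct.one_def,
            ← Algebra.algebraMap_eq_smul_one, hsmulk]
        rw [this]; exact T'.smul_mem _ hf
      let T'k : Submodule k (↥S₀ →ₗ[A] X) :=
        { carrier := T'
          add_mem' := fun hx hy => T'.add_mem hx hy
          zero_mem' := T'.zero_mem
          smul_mem' := fun c f hf => hTk c f hf }
      obtain ⟨sf, hsf⟩ := IsNoetherian.noetherian T'k
      have hsf_mem : ∀ f ∈ sf, f ∈ T' := fun f hf => by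
        have : f ∈ T'k := by rw [← hsf]; exact Submodule.subset_span hf
        exact this
      have hrange_le : ∀ g : ↥S₀ →ₗ[A] X, g ∈ Submodule.span k (↑sf : Set (↥S₀ →ₗ[A] X)) →
          LinearMap.range g ≤ (⨆ f ∈ sf, LinearMap.range f : Submodule A X) := by
        intro g hg
        induction hg using Submodule.span_induction with
        | mem f hf => exact le_biSup _ hf
        | zero => rintro x ⟨s, rfl⟩; simp
        | add g h _ _ ihg ihh =>
            rintro x ⟨s, rfl⟩
            have : (g + h) s = g s + h s := rfl
            rw [this]
            exact Submodule.add_mem _ (ihg ⟨s, rfl⟩) (ihh ⟨s, rfl⟩)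
        | smul c g _ ih =>
            rintro x ⟨s, rfl⟩
            rw [hkf]
            exact Submodule.smul_of_tower_mem _ c (ih ⟨s, rfl⟩)
      have hYtop : (⨆ f ∈ sf, LinearMap.range f : Submodule A X) = ⊤ := by
        rw [eq_top_iff]
        intro x _
        have hx : x ∈ (⨆ f : T', LinearMap.range (f : ↥S₀ →ₗ[A] X) : Submodule A X) := by
          rw [hU T' hT']; trivial
        refine (iSup_le fun f : T' => hrange_le ↑f ?_) hx
        have hfk : (f : ↥S₀ →ₗ[A] X) ∈ T'k := f.2
        rw [← hsf] at hfk; exact hfk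
      have main : ∀ u : Finset (↥S₀ →ₗ[A] X), (∀ f ∈ u, f ∈ T') →
          ∀ g : ↥S₀ →ₗ[A] X,
            LinearMap.range g ≤ (⨆ f ∈ u, LinearMap.range f : Submodule A X) → g ∈ T' := by
        intro u
        induction u using Finset.induction_on with
        | empty =>
            intro _ g hg
            have : g = 0 := by
              ext s
              have := hg ⟨s, rfl⟩
              simpa using this
            rw [this]; exact T'.zero_mem
        | @insert f u hfu ih =>
            intro hmem g hg
            set Y' : Submodule A X := ⨆ f' ∈ u, LinearMap.range f' with hY'
            have hins : (⨆ f' ∈ insert f u, LinearMap.range f' : Submodule A X)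
                = LinearMap.range f ⊔ Y' := by
              rw [Finset.iSup_insert]
            rw [hins] at hg
            by_cases hqf : Y'.mkQ.comp f = 0
            · refine ih (fun f' hf' => hmem f' (Finset.mem_insert_of_mem hf')) g
                (hg.trans (sup_le ?_ le_rfl))
              rintro x ⟨s, rfl⟩
              have h0 : Y'.mkQ (f s) = 0 := by
                have := congrArg (fun F : ↥S₀ →ₗ[A] X ⧸ Y' => F s) hqf
                simpa using this
              rwa [Submodule.mkQ_apply, Submodule.Quotient.mk_eq_zero] at h0
            · have hinj : Function.Injective (Y'.mkQ.comp f) := LinearMap.injective_of_ne_zero hqf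
              have hle : ∀ s : ↥S₀, Y'.mkQ (g s) ∈ LinearMap.range (Y'.mkQ.comp f) := by
                intro s
                have hgs : g s ∈ LinearMap.range f ⊔ Y' := hg ⟨s, rfl⟩
                obtain ⟨y, hy, z, hz, hyz⟩ := Submodule.mem_sup.mp hgs
                obtain ⟨s', rfl⟩ := hy
                have hz0 : Y'.mkQ z = 0 := by
                  rw [Submodule.mkQ_apply, Submodule.Quotient.mk_eq_zero]; exact hz
                refine ⟨s', ?_⟩
                rw [LinearMap.comp_apply, ← hyz, map_add, hz0, add_zero]
              let e := LinearEquiv.ofInjective _ hinj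
              let h : ↥S₀ →ₗ[A] ↥S₀ :=
                e.symm.toLinearMap.comp
                  (LinearMap.codRestrict (LinearMap.range (Y'.mkQ.comp f)) (Y'.mkQ.comp g) hle)
              obtain ⟨c, hc⟩ := schur_scalar (k := k) hS₀ h
              have hkey : ∀ s, Y'.mkQ (g s) = Y'.mkQ ((c • f : ↥S₀ →ₗ[A] X) s) := by
                intro s
                have h1 : (e (h s) : X ⧸ Y') = Y'.mkQ (g s) := by
                  have heh : e (h s)
                      = LinearMap.codRestrict (LinearMap.range (Y'.mkQ.comp f))
                          (Y'.mkQ.comp g) hle s := by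
                    simp only [h, LinearMap.comp_apply, LinearEquiv.coe_coe,
                      LinearEquiv.apply_symm_apply]
                  rw [heh]; rfl
                have h2 : (e (h s) : X ⧸ Y') = Y'.mkQ (f (h s)) := by
                  rw [LinearEquiv.ofInjective_apply]; rfl
                rw [← h1, h2, hc s, hkf]
                congr 1
                rw [← algebraMap_smul A c s, map_smul, algebraMap_smul]
              have hsub : g - c • f ∈ T' := by
                refine ih (fun f' hf' => hmem f' (Finset.mem_insert_of_mem hf')) _ ?_
                rintro x ⟨s, rfl⟩
                have hz : Y'.mkQ ((g - c • f) s) = 0 := by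
                  have hse : (g - c • f) s = g s - (c • f : ↥S₀ →ₗ[A] X) s := rfl
                  rw [hse, map_sub, hkey, sub_self]
                rwa [Submodule.mkQ_apply, Submodule.Quotient.mk_eq_zero] at hz
              have hge : g = (g - c • f) + c • f := (sub_add_cancel g (c • f)).symm
              rw [hge]
              exact T'.add_mem hsub (hTk c f (hmem f (Finset.mem_insert_self f u)))
      refine Submodule.eq_top_iff'.mpr fun g => ?_
      exact main sf hsf_mem g (by rw [hYtop]; exact le_top)
    -- module structure on ↥S₀ ⊗ TT
    haveI : SMulCommClass k B (↥S₀ →ₗ[A] X) := ⟨fun c b f => LinearMap.ext fun s => by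
      rw [hkf, hBf, hBf, hkf, hsmulk, hsmulk, smul_smul, smul_smul, Algebra.commutes]⟩
    let actT : B →+* Module.End k (↥S₀ →ₗ[A] X) :=
      { toFun := fun b =>
          { toFun := fun f => b • f
            map_add' := fun f g => smul_add b f g
            map_smul' := fun c f => by
              dsimp only [RingHom.id_apply]; rw [smul_comm] }
        map_one' := LinearMap.ext fun f => one_smul B f
        map_mul' := fun b b' => LinearMap.ext fun f => mul_smul b b' f
        map_zero' := LinearMap.ext fun f => zero_smul B f
        map_add' := fun b b' => LinearMap.ext fun f => add_smul b b' f }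
    let ρB : B →+* Module.End k (↥S₀ ⊗[k] (↥S₀ →ₗ[A] X)) :=
      { toFun := fun b => LinearMap.lTensor ↥S₀ (actT b)
        map_one' := by
          have : actT 1 = LinearMap.id := LinearMap.ext fun f => one_smul B f
          rw [this, LinearMap.lTensor_id]; rfl
        map_mul' := fun b b' => by
          have : actT (b * b') = (actT b).comp (actT b') :=
            LinearMap.ext fun f => mul_smul b b' f
          rw [this, LinearMap.lTensor_comp]; rfl
        map_zero' := by
          have : actT 0 = 0 := LinearMap.ext fun f => zero_smul B f
          rw [this, LinearMap.lTensor_zero]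
        map_add' := fun b b' => by
          have : actT (b + b') = actT b + actT b' := LinearMap.ext fun f => add_smul b b' f
          rw [this, LinearMap.lTensor_add] }
    letI instBst : Module B (↥S₀ ⊗[k] (↥S₀ →ₗ[A] X)) := Module.compHom _ ρB
    have hbst : ∀ (b : B) (s : ↥S₀) (f : ↥S₀ →ₗ[A] X),
        b • (s ⊗ₜ[k] f) = s ⊗ₜ[k] (b • f) := fun b s f => by
      show LinearMap.lTensor ↥S₀ (actT b) (s ⊗ₜ[k] f) = _
      rw [LinearMap.lTensor_tmul]; rfl
    haveI : IsScalarTower k B (↥S₀ ⊗[k] (↥S₀ →ₗ[A] X)) := ⟨fun c b x => by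
      show ρB (c • b) x = c • ρB b x
      have h1 : actT (c • b) = c • actT b := LinearMap.ext fun f => smul_assoc c b f
      show LinearMap.lTensor ↥S₀ (actT (c • b)) x = _
      rw [h1, LinearMap.lTensor_smul, LinearMap.smul_apply]
      rfl⟩
    haveI : SMulCommClass A B (↥S₀ ⊗[k] (↥S₀ →ₗ[A] X)) := ⟨fun a b x => by
      induction x using TensorProduct.induction_on with
      | zero => simp only [smul_zero]
      | tmul s f => rw [hbst, smul_tmul', smul_tmul', hbst]
      | add x y hx hy => simp only [smul_add, hx, hy]⟩
    letI modST : Module (A ⊗[k] B) (↥S₀ ⊗[k] (↥S₀ →ₗ[A] X)) := TensorProduct.Algebra.module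
    have hact2 : ∀ (a : A) (b : B) (s : ↥S₀) (f : ↥S₀ →ₗ[A] X),
        (a ⊗ₜ[k] b : A ⊗[k] B) • (s ⊗ₜ[k] f) = (a • s) ⊗ₜ[k] (b • f) := by
      intro a b s f
      have h0 : (a ⊗ₜ[k] b : A ⊗[k] B) • (s ⊗ₜ[k] f) = a • b • (s ⊗ₜ[k] f) := rfl
      rw [h0, hbst, smul_tmul']
    -- the evaluation map
    let ev : (↥S₀ ⊗[k] (↥S₀ →ₗ[A] X)) →ₗ[k] X := TensorProduct.lift
      (LinearMap.mk₂ k (fun (s : ↥S₀) (f : ↥S₀ →ₗ[A] X) => f s)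
        (fun s s' f => map_add f s s')
        (fun c s f => by
          rw [← algebraMap_smul A c s, map_smul, algebraMap_smul])
        (fun s f g => rfl)
        (fun c s f => rfl))
    have hev_tmul : ∀ (s : ↥S₀) (f : ↥S₀ →ₗ[A] X), ev (s ⊗ₜ[k] f) = f s := fun _ _ => rfl
    have hev_lin : ∀ (r : A ⊗[k] B) x, ev (r • x) = r • ev x := by
      intro r x
      induction r using TensorProduct.induction_on with
      | zero => rw [zero_smul, zero_smul, map_zero]
      | tmul a b =>
          induction x using TensorProduct.induction_on with
          | zero => rw [smul_zero, map_zero, smul_zero]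
          | tmul s f =>
              rw [hact2, hev_tmul, hev_tmul]
              have h1 : (b • f) (a • s) = a • ((b • f) s) := map_smul _ a s
              rw [h1, hBf, hsmulA, smul_smul, Algebra.TensorProduct.tmul_mul_tmul,
                mul_one, one_mul]
          | add x y hx hy => rw [smul_add, map_add, map_add, hx, hy, smul_add]
      | add r r' hr hr' => rw [add_smul, map_add, hr, hr', add_smul]
    let evAB : (↥S₀ ⊗[k] (↥S₀ →ₗ[A] X)) →ₗ[A ⊗[k] B] X :=
      { toFun := ev
        map_add' := map_add ev
        map_smul' := fun r x => hev_lin r x }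
    have hTne : (⊤ : Submodule B (↥S₀ →ₗ[A] X)) ≠ ⊥ := fun h => hincl (by
      have : (S₀.subtype : ↥S₀ →ₗ[A] X) ∈ (⊥ : Submodule B (↥S₀ →ₗ[A] X)) := by
        rw [← h]; trivial
      simpa using this)
    have hsurj : Function.Surjective evAB := by
      intro x
      have hx : x ∈ (⨆ f : (⊤ : Submodule B (↥S₀ →ₗ[A] X)),
          LinearMap.range (f : ↥S₀ →ₗ[A] X) : Submodule A X) := by
        rw [hU ⊤ hTne]; trivial
      refine Submodule.iSup_induction (motive := fun y => ∃ z, evAB z = y) _ hx ?_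
        ⟨0, map_zero _⟩ ?_
      · rintro f y ⟨s, rfl⟩; exact ⟨s ⊗ₜ[k] ↑f, rfl⟩
      · rintro y z ⟨u, rfl⟩ ⟨v, rfl⟩; exact ⟨u + v, map_add _ u v⟩
    haveI hSTsimple : IsSimpleModule (A ⊗[k] B) (↥S₀ ⊗[k] (↥S₀ →ₗ[A] X)) :=
      tensor_simple hS₀ hTsimple hact2
    have hinj : Function.Injective evAB := by
      rw [← LinearMap.ker_eq_bot]
      rcases eq_bot_or_eq_top (LinearMap.ker evAB) with h | h
      · exact h
      · exfalso
        obtain ⟨x, hx⟩ := exists_ne (0 : X)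
        obtain ⟨z, hz⟩ := hsurj x
        have hzz : z ∈ LinearMap.ker evAB := by rw [h]; trivial
        rw [LinearMap.mem_ker, hz] at hzz
        exact hx hzz
    exact ⟨{ S := ↥S₀
             T := ↥S₀ →ₗ[A] X
             addS := inferInstance
             modkS := inferInstance
             modAS := inferInstance
             towS := inferInstance
             addT := inferInstance
             modkT := inferInstance
             modBT := instBT
             towT := inferInstance
             modST := modST
             simpleS := hS₀
             simpleT := hTsimple
             hact := hact2
             equiv := (LinearEquiv.ofBijective evAB ⟨hinj, hsurj⟩).symm }⟩
end

section
/- Let k be an algebraically closed field of characteristic zero and let A, B be finite-dimensional k-algebras. Let S be a simple left A-module with projective cover P, and T a simple left B-module with projective cover Q. Then P ⊗_k Q is a projective cover of the simple A ⊗_k B-module S ⊗_k T. -/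
open TensorProduct

universe u v

set_option maxHeartbeats 1000000


/-- The image of an atom under a linear map lies in the socle. -/
private lemma map_atom_le_socle {R M N : Type*} [Ring R] [AddCommGroup M] [Module R M]
    [AddCommGroup N] [Module R N] (β : M →ₗ[R] N) {W : Submodule R M} (hW : IsAtom W) :
    W.map β ≤ sSup {V : Submodule R N | IsAtom V} := by
  rcases eq_or_ne (W.map β) ⊥ with h | h
  · simp [h]
  · haveI : IsSimpleModule R W := isSimpleModule_iff_isAtom.2 hW
    set β' : W →ₗ[R] N := β.comp W.subtype with hβ'
    have hrange : LinearMap.range β' = W.map β := by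
      rw [hβ', LinearMap.range_comp, Submodule.range_subtype]
    rcases eq_bot_or_eq_top (LinearMap.ker β') with hk | hk
    · haveI : IsSimpleModule R (LinearMap.range β') :=
        IsSimpleModule.congr (LinearEquiv.ofInjective β' (LinearMap.ker_eq_bot.1 hk)).symm
      have : IsAtom (W.map β) := isSimpleModule_iff_isAtom.1 (hrange ▸ this)
      exact le_sSup this
    · exfalso
      apply h
      have h0 : β' = 0 := LinearMap.ker_eq_top.1 hk
      rw [← hrange, h0, LinearMap.range_zero]

/-- A submodule `W` which is superfluous (in the sense of `hsmall`) maps to zero under any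
linear map into a Noetherian semisimple module. -/
private lemma psi_zero_on_small {R P U : Type*} [Ring R] [AddCommGroup P] [Module R P]
    [AddCommGroup U] [Module R U] [IsNoetherian R U] [IsSemisimpleModule R U]
    (W : Submodule R P) (hsmall : ∀ K : Submodule R P, W ⊔ K = ⊤ → K = ⊤)
    (ψ : P →ₗ[R] U) {n : P} (hn : n ∈ W) : ψ n = 0 := by
  by_contra hu
  set u := ψ n with hudef
  have hspanne : Submodule.span R {u} ≠ ⊥ := by
    simpa [Submodule.span_singleton_eq_bot] using hu
  -- maximal proper submodule of span R {u}
  obtain ⟨N₁, hN₁mem, hN₁max⟩ :=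
    (set_has_maximal_iff_noetherian.2 ‹_›) {V | V < Submodule.span R {u}}
      ⟨⊥, bot_lt_iff_ne_bot.2 hspanne⟩
  have hN₁lt : N₁ < Submodule.span R {u} := hN₁mem
  have hcov : ∀ V : Submodule R U, N₁ < V → V ≤ Submodule.span R {u} →
      V = Submodule.span R {u} := by
    intro V h1 h2
    rcases h2.lt_or_eq with h3 | h3
    · exact absurd h1 (hN₁max V h3)
    · exact h3
  have huN₁ : u ∉ N₁ := fun h =>
    absurd (Submodule.span_le.2 (Set.singleton_subset_iff.2 h)) (not_le_of_gt hN₁lt)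
  -- complement of span R {u}
  obtain ⟨N, hN⟩ := exists_isCompl (Submodule.span R {u})
  set N' := N ⊔ N₁ with hN'def
  have huN' : u ∉ N' := by
    intro hmem
    rcases Submodule.mem_sup.1 hmem with ⟨x, hx, y, hy, hxy⟩
    have hyspan : y ∈ Submodule.span R {u} := hN₁lt.le hy
    have hxspan : x ∈ Submodule.span R {u} := by
      have : x = u - y := by rw [← hxy]; abel
      rw [this]
      exact Submodule.sub_mem _ (Submodule.mem_span_singleton_self u) hyspan
    have hx0 : x = 0 := by
      have := hN.disjoint
      rw [Submodule.disjoint_def] at this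
      exact this x hxspan hx
    apply huN₁
    rw [hx0, zero_add] at hxy
    rwa [← hxy]
  have hcoatom : IsCoatom N' := by
    constructor
    · intro htop; exact huN' (htop ▸ Submodule.mem_top)
    · intro X hX
      have hN₁X : N₁ ≤ X := le_trans le_sup_right hX.le
      have hNX : N ≤ X := le_trans le_sup_left hX.le
      have h1 : N₁ ≤ X ⊓ Submodule.span R {u} := le_inf hN₁X hN₁lt.le
      rcases h1.lt_or_eq with h2 | h2
      · have h3 : X ⊓ Submodule.span R {u} = Submodule.span R {u} := hcov _ h2 inf_le_right
        have hspanX : Submodule.span R {u} ≤ X := by rw [← h3]; exact inf_le_left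
        rw [eq_top_iff, ← hN.sup_eq_top]
        exact sup_le hspanX hNX
      · exfalso
        have hmod : (N ⊔ Submodule.span R {u}) ⊓ X = N ⊔ (Submodule.span R {u} ⊓ X) :=
          sup_inf_assoc_of_le _ hNX
        rw [sup_comm, hN.sup_eq_top, top_inf_eq, inf_comm, ← h2] at hmod
        exact hX.ne hmod.symm
  set Nhat := N'.comap ψ with hNhat
  have hnN : n ∉ Nhat := by
    intro h
    exact huN' h
  have hNhatcoatom : IsCoatom Nhat := by
    constructor
    · intro h; exact hnN (h ▸ Submodule.mem_top)
    · intro X hX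
      obtain ⟨x, hxX, hxN⟩ := SetLike.exists_of_lt hX
      haveI hsimp : IsSimpleModule R (U ⧸ N') := isSimpleModule_iff_isCoatom.2 hcoatom
      have hx0 : N'.mkQ (ψ x) ≠ 0 := by
        rw [ne_eq, Submodule.mkQ_apply, Submodule.Quotient.mk_eq_zero]
        exact fun h => hxN (by simpa [hNhat] using h)
      have hspan : Submodule.span R {N'.mkQ (ψ x)} = ⊤ := by
        rcases eq_bot_or_eq_top (Submodule.span R {N'.mkQ (ψ x)}) with h | h
        · exact absurd (Submodule.span_singleton_eq_bot.1 h) hx0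
        · exact h
      rw [eq_top_iff]
      intro p _
      have hp : N'.mkQ (ψ p) ∈ Submodule.span R {N'.mkQ (ψ x)} := hspan ▸ Submodule.mem_top
      obtain ⟨r, hr⟩ := Submodule.mem_span_singleton.1 hp
      have hsub : p - r • x ∈ Nhat := by
        rw [hNhat, Submodule.mem_comap, map_sub, map_smul]
        rw [← Submodule.Quotient.mk_eq_zero, ← Submodule.mkQ_apply, map_sub]
        rw [show (N'.mkQ) (r • ψ x) = r • N'.mkQ (ψ x) from map_smul _ _ _, hr]
        simp
      have := X.add_mem (hX.le hsub) (X.smul_mem r hxX)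
      simpa using this
  have hsup : W ⊔ Nhat = ⊤ := by
    apply hNhatcoatom.2
    rcases (le_sup_right : Nhat ≤ W ⊔ Nhat).lt_or_eq with h | h
    · exact h
    · exfalso
      exact hnN (h ▸ (Submodule.mem_sup_left hn))
  exact hnN ((hsmall _ hsup) ▸ Submodule.mem_top)



/-- Let `k` be an algebraically closed field of characteristic zero and let
`A`, `B` be finite-dimensional `k`-algebras.  Let `S` be a simple left `A`-module with
projective cover `f : P → S`, and `T` a simple left `B`-module with projective cover
`g : Q → T`.  Then `P ⊗[k] Q` (an `A ⊗[k] B`-module via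
`(a ⊗ b) • (p ⊗ q) = (a • p) ⊗ (b • q)`) is a projective cover of the simple
`A ⊗[k] B`-module `S ⊗[k] T`, via the map `f ⊗ g`. -/
theorem projective_cover_tensorProduct
    (k : Type u) [Field k] [IsAlgClosed k] [CharZero k]
    (A : Type v) [Ring A] [Algebra k A] [FiniteDimensional k A]
    (B : Type v) [Ring B] [Algebra k B] [FiniteDimensional k B]
    (S : Type v) [AddCommGroup S] [Module k S] [Module A S] [IsScalarTower k A S]
    (hS : IsSimpleModule A S)
    (T : Type v) [AddCommGroup T] [Module k T] [Module B T] [IsScalarTower k B T]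
    (hT : IsSimpleModule B T)
    (P : Type v) [AddCommGroup P] [Module k P] [Module A P] [IsScalarTower k A P]
    (hP : Module.Projective A P) (f : P →ₗ[A] S) (hfsurj : Function.Surjective f)
    (hfsmall : ∀ K : Submodule A P, LinearMap.ker f ⊔ K = ⊤ → K = ⊤)
    (Q : Type v) [AddCommGroup Q] [Module k Q] [Module B Q] [IsScalarTower k B Q]
    (hQ : Module.Projective B Q) (g : Q →ₗ[B] T) (hgsurj : Function.Surjective g)
    (hgsmall : ∀ K : Submodule B Q, LinearMap.ker g ⊔ K = ⊤ → K = ⊤)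
    [Module (A ⊗[k] B) (S ⊗[k] T)]
    (hactST : ∀ (a : A) (b : B) (s : S) (t : T),
      (a ⊗ₜ[k] b : A ⊗[k] B) • (s ⊗ₜ[k] t : S ⊗[k] T) = (a • s) ⊗ₜ[k] (b • t))
    [Module (A ⊗[k] B) (P ⊗[k] Q)]
    (hactPQ : ∀ (a : A) (b : B) (p : P) (q : Q),
      (a ⊗ₜ[k] b : A ⊗[k] B) • (p ⊗ₜ[k] q : P ⊗[k] Q) = (a • p) ⊗ₜ[k] (b • q)) :
    Module.Projective (A ⊗[k] B) (P ⊗[k] Q)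
    ∧ ∃ F : (P ⊗[k] Q) →ₗ[A ⊗[k] B] (S ⊗[k] T),
        (∀ (p : P) (q : Q), F (p ⊗ₜ[k] q) = f p ⊗ₜ[k] g q)
        ∧ Function.Surjective F
        ∧ ∀ K : Submodule (A ⊗[k] B) (P ⊗[k] Q), LinearMap.ker F ⊔ K = ⊤ → K = ⊤ := by
  classical
  set f' := f.restrictScalars k with hf'def
  set g' := g.restrictScalars k with hg'def
  -- ### The map F
  set F0 : P ⊗[k] Q →ₗ[k] S ⊗[k] T := TensorProduct.map f' g' with hF0def
  have hF0 : ∀ (p : P) (q : Q), F0 (p ⊗ₜ[k] q) = f p ⊗ₜ[k] g q := fun p q => rfl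
  have hFsmul : ∀ (x : A ⊗[k] B) (z : P ⊗[k] Q), F0 (x • z) = x • F0 z := by
    intro x
    induction x using TensorProduct.induction_on with
    | zero => intro z; rw [zero_smul, zero_smul, map_zero]
    | tmul a b =>
      intro z
      induction z using TensorProduct.induction_on with
      | zero => rw [smul_zero, map_zero, smul_zero]
      | tmul p q =>
        rw [hactPQ, hF0 (a • p) (b • q), hF0 p q, hactST,
          show f (a • p) = a • f p from map_smul f a p,
          show g (b • q) = b • g q from map_smul g b q]
      | add z w hz hw => rw [smul_add, map_add, hz, hw, map_add, smul_add]
    | add x y hx hy => intro z; rw [add_smul, map_add, hx, hy, add_smul]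
  set F : (P ⊗[k] Q) →ₗ[A ⊗[k] B] (S ⊗[k] T) :=
    { toFun := F0, map_add' := F0.map_add, map_smul' := hFsmul } with hFdef
  have hFapp : ∀ z, F z = F0 z := fun z => rfl
  -- ### Surjectivity
  have hFsurj : Function.Surjective F := by
    have : Function.Surjective F0 :=
      TensorProduct.map_surjective (show Function.Surjective f' from hfsurj)
        (show Function.Surjective g' from hgsurj)
    exact this
  -- ### Scalar tower on P ⊗ Q
  haveI towM : IsScalarTower k (A ⊗[k] B) (P ⊗[k] Q) := by
    constructor
    intro c x z
    induction x using TensorProduct.induction_on with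
    | zero => simp
    | tmul a b =>
      induction z using TensorProduct.induction_on with
      | zero => rw [smul_zero, smul_zero, smul_zero]
      | tmul p q =>
        rw [smul_tmul', hactPQ, hactPQ, smul_assoc, smul_tmul']
      | add z w hz hw => rw [smul_add, smul_add, hz, hw, smul_add]
    | add x y hx hy =>
      rw [smul_add, add_smul, add_smul, hx, hy, smul_add]
  -- ### Finiteness
  haveI : Nontrivial S := IsSimpleModule.nontrivial A S
  obtain ⟨s0, hs0⟩ := exists_ne (0 : S)
  obtain ⟨p0, hp0⟩ := hfsurj s0
  haveI hPfin : Module.Finite A P := by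
    have hspan : Submodule.span A {f p0} = ⊤ := by
      rcases eq_bot_or_eq_top (Submodule.span A {f p0}) with h | h
      · exact absurd (Submodule.span_singleton_eq_bot.1 h) (hp0 ▸ hs0)
      · exact h
    have hsup : LinearMap.ker f ⊔ Submodule.span A {p0} = ⊤ := by
      rw [eq_top_iff]
      intro p _
      have : f p ∈ Submodule.span A {f p0} := hspan ▸ Submodule.mem_top
      obtain ⟨a, ha⟩ := Submodule.mem_span_singleton.1 this
      refine Submodule.mem_sup.2 ⟨p - a • p0, ?_, a • p0,
        Submodule.smul_mem _ a (Submodule.mem_span_singleton_self p0), by abel⟩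
      rw [LinearMap.mem_ker, map_sub, map_smul, ha, sub_self]
    exact ⟨⟨{p0}, by simpa using hfsmall _ hsup⟩⟩
  haveI : Nontrivial T := IsSimpleModule.nontrivial B T
  obtain ⟨t0, ht0⟩ := exists_ne (0 : T)
  obtain ⟨q0, hq0⟩ := hgsurj t0
  haveI hQfin : Module.Finite B Q := by
    have hspan : Submodule.span B {g q0} = ⊤ := by
      rcases eq_bot_or_eq_top (Submodule.span B {g q0}) with h | h
      · exact absurd (Submodule.span_singleton_eq_bot.1 h) (hq0 ▸ ht0)
      · exact h
    have hsup : LinearMap.ker g ⊔ Submodule.span B {q0} = ⊤ := by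
      rw [eq_top_iff]
      intro q _
      have : g q ∈ Submodule.span B {g q0} := hspan ▸ Submodule.mem_top
      obtain ⟨b, hb⟩ := Submodule.mem_span_singleton.1 this
      refine Submodule.mem_sup.2 ⟨q - b • q0, ?_, b • q0,
        Submodule.smul_mem _ b (Submodule.mem_span_singleton_self q0), by abel⟩
      rw [LinearMap.mem_ker, map_sub, map_smul, hb, sub_self]
    exact ⟨⟨{q0}, by simpa using hgsmall _ hsup⟩⟩
  haveI : Module.Finite k P := Module.Finite.trans A P
  haveI : Module.Finite k Q := Module.Finite.trans B Q
  haveI : Module.Finite k (P ⊗[k] Q) := Module.Finite.tensorProduct k P Q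
  haveI hNoethM : IsNoetherian (A ⊗[k] B) (P ⊗[k] Q) :=
    isNoetherian_of_tower k inferInstance
  -- ### Projectivity
  have hproj : Module.Projective (A ⊗[k] B) (P ⊗[k] Q) := by
    obtain ⟨sP, hsP⟩ := Module.projective_def.1 hP
    obtain ⟨sQ, hsQ⟩ := Module.projective_def.1 hQ
    set e : ((P →₀ A) ⊗[k] (Q →₀ B)) ≃ₗ[k] (P × Q →₀ A ⊗[k] B) :=
      finsuppTensorFinsupp k k A B P Q with hedef
    set G0 : (P ⊗[k] Q) →ₗ[k] (P × Q →₀ A ⊗[k] B) :=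
      e.toLinearMap ∘ₗ TensorProduct.map (sP.restrictScalars k) (sQ.restrictScalars k)
      with hG0def
    have hG0tmul : ∀ (p : P) (q : Q), G0 (p ⊗ₜ[k] q) = e (sP p ⊗ₜ[k] sQ q) := fun p q => rfl
    have hesmul : ∀ (a : A) (b : B) (u : P →₀ A) (v : Q →₀ B),
        e ((a • u) ⊗ₜ[k] (b • v)) = (a ⊗ₜ[k] b) • e (u ⊗ₜ[k] v) := by
      intro a b u v
      induction u using Finsupp.induction_linear with
      | zero => simp [e.map_zero]
      | add u1 u2 h1 h2 =>
        rw [smul_add, add_tmul, e.map_add, h1, h2, add_tmul, e.map_add, smul_add]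
      | single p a' =>
        induction v using Finsupp.induction_linear with
        | zero => simp [e.map_zero]
        | add v1 v2 h1 h2 =>
          rw [smul_add, tmul_add, e.map_add, h1, h2, tmul_add, e.map_add, smul_add]
        | single q b' =>
          rw [Finsupp.smul_single, Finsupp.smul_single, finsuppTensorFinsupp_single,
            finsuppTensorFinsupp_single, Finsupp.smul_single, smul_eq_mul, smul_eq_mul,
            smul_eq_mul, Algebra.TensorProduct.tmul_mul_tmul]
    have hGsmul : ∀ (x : A ⊗[k] B) (z : P ⊗[k] Q), G0 (x • z) = x • G0 z := by
      intro x
      induction x using TensorProduct.induction_on with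
      | zero => intro z; rw [zero_smul, zero_smul, map_zero]
      | tmul a b =>
        intro z
        induction z using TensorProduct.induction_on with
        | zero => rw [smul_zero, map_zero, smul_zero]
        | tmul p q =>
          rw [hactPQ, hG0tmul, hG0tmul, show sP (a • p) = a • sP p from map_smul sP a p,
            show sQ (b • q) = b • sQ q from map_smul sQ b q, hesmul]
        | add z w hz hw => rw [smul_add, map_add, hz, hw, map_add, smul_add]
      | add x y hx hy => intro z; rw [add_smul, map_add, hx, hy, add_smul]
    set G : (P ⊗[k] Q) →ₗ[A ⊗[k] B] (P × Q →₀ A ⊗[k] B) :=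
      { toFun := G0, map_add' := G0.map_add, map_smul' := hGsmul } with hGdef
    set π : (P × Q →₀ A ⊗[k] B) →ₗ[A ⊗[k] B] (P ⊗[k] Q) :=
      Finsupp.linearCombination (A ⊗[k] B) (fun pq => pq.1 ⊗ₜ[k] pq.2) with hπdef
    have hkey : ∀ (u : P →₀ A) (v : Q →₀ B),
        π (e (u ⊗ₜ[k] v)) =
          (Finsupp.linearCombination A id u) ⊗ₜ[k] (Finsupp.linearCombination B id v) := by
      intro u v
      induction u using Finsupp.induction_linear with
      | zero => simp [e.map_zero]
      | add u1 u2 h1 h2 => rw [add_tmul, e.map_add, map_add, h1, h2, map_add, add_tmul]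
      | single p a =>
        induction v using Finsupp.induction_linear with
        | zero => simp [e.map_zero]
        | add v1 v2 h1 h2 => rw [tmul_add, e.map_add, map_add, h1, h2, map_add, tmul_add]
        | single q b =>
          rw [finsuppTensorFinsupp_single, hπdef, Finsupp.linearCombination_single,
            Finsupp.linearCombination_single, Finsupp.linearCombination_single,
            hactPQ]
          rfl
    have hπG : ∀ z, π (G z) = z := by
      intro z
      induction z using TensorProduct.induction_on with
      | zero => simp
      | tmul p q =>
        have h1 : G (p ⊗ₜ[k] q) = e (sP p ⊗ₜ[k] sQ q) := hG0tmul p q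
        rw [h1, hkey, hsP p, hsQ q]
      | add z w hz hw =>
        rw [map_add, map_add, hz, hw]
    exact Module.Projective.of_split G π (LinearMap.ext hπG)
  refine ⟨hproj, F, hF0, hFsurj, ?_⟩
  -- ### Superfluous kernel
  intro K hK
  by_contra hKne
  obtain ⟨K', hK'mem, hK'max⟩ :=
    (set_has_maximal_iff_noetherian.2 hNoethM)
      {N : Submodule (A ⊗[k] B) (P ⊗[k] Q) | K ≤ N ∧ N ≠ ⊤} ⟨K, le_refl K, hKne⟩
  have hcoatom : IsCoatom K' := by
    refine ⟨hK'mem.2, fun X hX => ?_⟩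
    by_contra hXne
    exact hK'max X ⟨hK'mem.1.trans hX.le, hXne⟩ hX
  haveI hUsimple : IsSimpleModule (A ⊗[k] B) ((P ⊗[k] Q) ⧸ K') :=
    isSimpleModule_iff_isCoatom.2 hcoatom
  haveI : Nontrivial ((P ⊗[k] Q) ⧸ K') :=
    (Submodule.Quotient.nontrivial_iff (p := K')).2 hcoatom.1
  haveI hNk : IsNoetherian k ((P ⊗[k] Q) ⧸ K') :=
    isNoetherian_of_surjective (K'.mkQ.restrictScalars k)
      (LinearMap.range_eq_top.2 K'.mkQ_surjective)
  haveI hAk : IsArtinian k ((P ⊗[k] Q) ⧸ K') :=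
    isArtinian_of_surjective _ (K'.mkQ.restrictScalars k) K'.mkQ_surjective
  -- A-side generators
  have keyA : ∀ n : P, f n = 0 → ∀ q : Q, (n ⊗ₜ[k] q) ∈ K' := by
    intro n hn q
    letI instAU : Module A ((P ⊗[k] Q) ⧸ K') :=
      Module.compHom _ (Algebra.TensorProduct.includeLeftRingHom : A →+* A ⊗[k] B)
    have hAsmul : ∀ (a : A) (u : (P ⊗[k] Q) ⧸ K'),
        a • u = (a ⊗ₜ[k] (1 : B)) • u := fun a u => rfl
    haveI : IsScalarTower k A ((P ⊗[k] Q) ⧸ K') := by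
      constructor
      intro c a u
      rw [hAsmul, hAsmul, show ((c • a) ⊗ₜ[k] (1 : B)) = c • (a ⊗ₜ[k] (1 : B)) from
        smul_tmul' c a (1 : B), smul_assoc]
    haveI : IsNoetherian A ((P ⊗[k] Q) ⧸ K') := isNoetherian_of_tower k hNk
    haveI : IsArtinian A ((P ⊗[k] Q) ⧸ K') := isArtinian_of_tower k hAk
    haveI : IsSemisimpleModule A ((P ⊗[k] Q) ⧸ K') := by
      set soc : Submodule A ((P ⊗[k] Q) ⧸ K') :=
        sSup {V : Submodule A ((P ⊗[k] Q) ⧸ K') | IsAtom V} with hsocdef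
      have hβ : ∀ (b : B), ∀ u ∈ soc, (((1 : A) ⊗ₜ[k] b) • u) ∈ soc := by
        intro b
        have hβlin : ∀ (a : A) (u : (P ⊗[k] Q) ⧸ K'),
            ((1 : A) ⊗ₜ[k] b) • a • u = a • (((1 : A) ⊗ₜ[k] b) • u) := by
          intro a u
          rw [hAsmul, hAsmul, ← mul_smul, ← mul_smul,
            Algebra.TensorProduct.tmul_mul_tmul, Algebra.TensorProduct.tmul_mul_tmul,
            one_mul, mul_one, one_mul, mul_one]
        set β : ((P ⊗[k] Q) ⧸ K') →ₗ[A] ((P ⊗[k] Q) ⧸ K') :=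
          { toFun := fun u => ((1 : A) ⊗ₜ[k] b) • u,
            map_add' := fun u v => smul_add _ u v,
            map_smul' := fun a u => hβlin a u } with hβdef
        intro u hu
        have h1 : Submodule.map β soc ≤ soc := by
          rw [hsocdef, (Submodule.gc_map_comap β).l_sSup]
          exact iSup₂_le fun V hV => map_atom_le_socle β hV
        exact h1 (Submodule.mem_map_of_mem hu)
      have hstab : ∀ (x : A ⊗[k] B) (u : (P ⊗[k] Q) ⧸ K'), u ∈ soc → x • u ∈ soc := by
        intro x
        induction x using TensorProduct.induction_on with
        | zero => intro u hu; rw [zero_smul]; exact soc.zero_mem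
        | tmul a b =>
          intro u hu
          have h2 : (a ⊗ₜ[k] b) • u = a • (((1 : A) ⊗ₜ[k] b) • u) := by
            rw [hAsmul, ← mul_smul, Algebra.TensorProduct.tmul_mul_tmul, mul_one, one_mul]
          rw [h2]
          exact soc.smul_mem a (hβ b u hu)
        | add x y hx hy => intro u hu; rw [add_smul]; exact soc.add_mem (hx u hu) (hy u hu)
      set socC : Submodule (A ⊗[k] B) ((P ⊗[k] Q) ⧸ K') :=
        { carrier := soc,
          add_mem' := fun h1 h2 => soc.add_mem h1 h2,
          zero_mem' := soc.zero_mem,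
          smul_mem' := fun c u hu => hstab c u hu } with hsocCdef
      have hne : soc ≠ ⊥ := by
        haveI : IsAtomic (Submodule A ((P ⊗[k] Q) ⧸ K')) :=
          isAtomic_of_orderBot_wellFounded_lt IsWellFounded.wf
        obtain ⟨V, hV⟩ := IsAtomic.exists_atom (α := Submodule A ((P ⊗[k] Q) ⧸ K'))
        exact fun h => hV.1 (le_bot_iff.1 (h ▸ le_sSup hV))
      have hsocCtop : socC = ⊤ := by
        rcases eq_bot_or_eq_top socC with h | h
        · exfalso
          apply hne
          rw [eq_bot_iff]
          intro x hx
          have hx' : x ∈ socC := hx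
          rw [h] at hx'
          simpa using hx'
        · exact h
      have hsoctop : soc = ⊤ := by
        rw [eq_top_iff]
        intro u _
        have : u ∈ socC := hsocCtop ▸ Submodule.mem_top
        exact this
      refine IsSemisimpleModule.of_sSup_simples_eq_top ?_
      rw [show {m : Submodule A ((P ⊗[k] Q) ⧸ K') | IsSimpleModule A m}
          = {V : Submodule A ((P ⊗[k] Q) ⧸ K') | IsAtom V} from
        Set.ext fun m => isSimpleModule_iff_isAtom, ← hsocdef, hsoctop]
    set ψ : P →ₗ[A] ((P ⊗[k] Q) ⧸ K') :=
      { toFun := fun p => K'.mkQ (p ⊗ₜ[k] q),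
        map_add' := fun p1 p2 => by rw [add_tmul, map_add],
        map_smul' := fun a p => by
          rw [RingHom.id_apply, hAsmul, ← map_smul, hactPQ, one_smul] } with hψdef
    have h0 : ψ n = 0 :=
      psi_zero_on_small (LinearMap.ker f) hfsmall ψ (show n ∈ LinearMap.ker f from hn)
    have h0' : K'.mkQ (n ⊗ₜ[k] q) = 0 := h0
    rwa [Submodule.mkQ_apply, Submodule.Quotient.mk_eq_zero] at h0'
  -- B-side generators
  have keyB : ∀ m : Q, g m = 0 → ∀ p : P, (p ⊗ₜ[k] m) ∈ K' := by
    intro m hm p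
    letI instBU : Module B ((P ⊗[k] Q) ⧸ K') :=
      Module.compHom _ ((Algebra.TensorProduct.includeRight : B →ₐ[k] A ⊗[k] B) : B →+* A ⊗[k] B)
    have hBsmul : ∀ (b : B) (u : (P ⊗[k] Q) ⧸ K'),
        b • u = ((1 : A) ⊗ₜ[k] b) • u := fun b u => rfl
    haveI : IsScalarTower k B ((P ⊗[k] Q) ⧸ K') := by
      constructor
      intro c b u
      rw [hBsmul, hBsmul, show ((1 : A) ⊗ₜ[k] (c • b)) = c • ((1 : A) ⊗ₜ[k] b) from
        tmul_smul c (1 : A) b, smul_assoc]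
    haveI : IsNoetherian B ((P ⊗[k] Q) ⧸ K') := isNoetherian_of_tower k hNk
    haveI : IsArtinian B ((P ⊗[k] Q) ⧸ K') := isArtinian_of_tower k hAk
    haveI : IsSemisimpleModule B ((P ⊗[k] Q) ⧸ K') := by
      set soc : Submodule B ((P ⊗[k] Q) ⧸ K') :=
        sSup {V : Submodule B ((P ⊗[k] Q) ⧸ K') | IsAtom V} with hsocdef
      have hβ : ∀ (a : A), ∀ u ∈ soc, ((a ⊗ₜ[k] (1 : B)) • u) ∈ soc := by
        intro a
        have hβlin : ∀ (b : B) (u : (P ⊗[k] Q) ⧸ K'),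
            (a ⊗ₜ[k] (1 : B)) • b • u = b • ((a ⊗ₜ[k] (1 : B)) • u) := by
          intro b u
          rw [hBsmul, hBsmul, ← mul_smul, ← mul_smul,
            Algebra.TensorProduct.tmul_mul_tmul, Algebra.TensorProduct.tmul_mul_tmul,
            one_mul, mul_one, one_mul, mul_one]
        set β : ((P ⊗[k] Q) ⧸ K') →ₗ[B] ((P ⊗[k] Q) ⧸ K') :=
          { toFun := fun u => (a ⊗ₜ[k] (1 : B)) • u,
            map_add' := fun u v => smul_add _ u v,
            map_smul' := fun b u => hβlin b u } with hβdef
        intro u hu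
        have h1 : Submodule.map β soc ≤ soc := by
          rw [hsocdef, (Submodule.gc_map_comap β).l_sSup]
          exact iSup₂_le fun V hV => map_atom_le_socle β hV
        exact h1 (Submodule.mem_map_of_mem hu)
      have hstab : ∀ (x : A ⊗[k] B) (u : (P ⊗[k] Q) ⧸ K'), u ∈ soc → x • u ∈ soc := by
        intro x
        induction x using TensorProduct.induction_on with
        | zero => intro u hu; rw [zero_smul]; exact soc.zero_mem
        | tmul a b =>
          intro u hu
          have h2 : (a ⊗ₜ[k] b) • u = b • ((a ⊗ₜ[k] (1 : B)) • u) := by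
            rw [hBsmul, ← mul_smul, Algebra.TensorProduct.tmul_mul_tmul, mul_one, one_mul]
          rw [h2]
          exact soc.smul_mem b (hβ a u hu)
        | add x y hx hy => intro u hu; rw [add_smul]; exact soc.add_mem (hx u hu) (hy u hu)
      set socC : Submodule (A ⊗[k] B) ((P ⊗[k] Q) ⧸ K') :=
        { carrier := soc,
          add_mem' := fun h1 h2 => soc.add_mem h1 h2,
          zero_mem' := soc.zero_mem,
          smul_mem' := fun c u hu => hstab c u hu } with hsocCdef
      have hne : soc ≠ ⊥ := by
        haveI : IsAtomic (Submodule B ((P ⊗[k] Q) ⧸ K')) :=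
          isAtomic_of_orderBot_wellFounded_lt IsWellFounded.wf
        obtain ⟨V, hV⟩ := IsAtomic.exists_atom (α := Submodule B ((P ⊗[k] Q) ⧸ K'))
        exact fun h => hV.1 (le_bot_iff.1 (h ▸ le_sSup hV))
      have hsocCtop : socC = ⊤ := by
        rcases eq_bot_or_eq_top socC with h | h
        · exfalso
          apply hne
          rw [eq_bot_iff]
          intro x hx
          have hx' : x ∈ socC := hx
          rw [h] at hx'
          simpa using hx'
        · exact h
      have hsoctop : soc = ⊤ := by
        rw [eq_top_iff]
        intro u _
        have : u ∈ socC := hsocCtop ▸ Submodule.mem_top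
        exact this
      refine IsSemisimpleModule.of_sSup_simples_eq_top ?_
      rw [show {m' : Submodule B ((P ⊗[k] Q) ⧸ K') | IsSimpleModule B m'}
          = {V : Submodule B ((P ⊗[k] Q) ⧸ K') | IsAtom V} from
        Set.ext fun m' => isSimpleModule_iff_isAtom, ← hsocdef, hsoctop]
    set ψ : Q →ₗ[B] ((P ⊗[k] Q) ⧸ K') :=
      { toFun := fun q' => K'.mkQ (p ⊗ₜ[k] q'),
        map_add' := fun q1 q2 => by rw [tmul_add, map_add],
        map_smul' := fun b q' => by
          rw [RingHom.id_apply, hBsmul, ← map_smul, hactPQ, one_smul] } with hψdef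
    have h0 : ψ m = 0 :=
      psi_zero_on_small (LinearMap.ker g) hgsmall ψ (show m ∈ LinearMap.ker g from hm)
    have h0' : K'.mkQ (p ⊗ₜ[k] m) = 0 := h0
    rwa [Submodule.mkQ_apply, Submodule.Quotient.mk_eq_zero] at h0'
  -- ker F ≤ K'
  have hrange1 : ∀ ξ : P ⊗[k] ↥(LinearMap.ker g'),
      (LinearMap.lTensor P (LinearMap.ker g').subtype) ξ ∈ K' := by
    intro ξ
    induction ξ using TensorProduct.induction_on with
    | zero => rw [map_zero]; exact K'.zero_mem
    | tmul p m =>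
      rw [LinearMap.lTensor_tmul]
      exact keyB (m : Q) (show g (m : Q) = 0 from m.2) p
    | add w1 w2 hw1 hw2 => rw [map_add]; exact K'.add_mem hw1 hw2
  have hrange2 : ∀ ξ : ↥(LinearMap.ker f') ⊗[k] Q,
      (LinearMap.rTensor Q (LinearMap.ker f').subtype) ξ ∈ K' := by
    intro ξ
    induction ξ using TensorProduct.induction_on with
    | zero => rw [map_zero]; exact K'.zero_mem
    | tmul n q =>
      rw [LinearMap.rTensor_tmul]
      exact keyA (n : P) (show f (n : P) = 0 from n.2) q
    | add w1 w2 hw1 hw2 => rw [map_add]; exact K'.add_mem hw1 hw2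
  have hkerle : LinearMap.ker F ≤ K' := by
    intro z hz
    have hzF : F z = 0 := hz
    have hz0 : z ∈ LinearMap.ker (TensorProduct.map f' g') := by
      rw [LinearMap.mem_ker]
      exact hzF
    rw [TensorProduct.map_ker (LinearMap.exact_subtype_ker_map f')
      (show Function.Surjective f' from hfsurj)
      (LinearMap.exact_subtype_ker_map g')
      (show Function.Surjective g' from hgsurj)] at hz0
    obtain ⟨z1, hz1, z2, hz2, rfl⟩ := Submodule.mem_sup.1 hz0
    obtain ⟨ξ1, rfl⟩ := hz1
    obtain ⟨ξ2, rfl⟩ := hz2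
    exact K'.add_mem (hrange1 ξ1) (hrange2 ξ2)
  exact hK'mem.2 (top_le_iff.1 (hK ▸ sup_le hkerle hK'mem.1))
end

section
/- Let H be a finite-dimensional Hopf algebra over a field k and λ ∈ H^* a nonzero right cointegral. Then the k-linear map H → H^* sending h to the functional x ↦ λ(h x) is bijective. -/
universe u v

/-- A right cointegral on a Hopf algebra `H`: a linear functional `λ` with
`(id_H ⊗ λ) ∘ Δ = η ∘ λ`, i.e. `∑ h₍₁₎ λ(h₍₂₎) = λ(h) · 1` for all `h`. -/
def IsRightCointegral (k : Type u) [Field k] (H : Type v) [Ring H] [HopfAlgebra k H]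
    (fl : Module.Dual k H) : Prop :=
  ∀ h : H, (TensorProduct.rid k H) ((LinearMap.lTensor H fl)
      (Coalgebra.comul (R := k) h)) = fl h • (1 : H)

open TensorProduct LinearMap Coalgebra

namespace CointAux

variable {k : Type u} [Field k] {H : Type v} [Ring H] [HopfAlgebra k H]

local notation "S" => HopfAlgebra.antipode (R := k) (A := H)
local notation "μ" => LinearMap.mul' k H
local notation "Δ" => Coalgebra.comul (R := k) (A := H)

lemma rearrange (F : H →ₗ[k] H) :
    μ ∘ₗ rTensor H S ∘ₗ lTensor H (μ ∘ₗ lTensor H F) ∘ₗ (TensorProduct.assoc k H H H).toLinearMap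
      = μ ∘ₗ lTensor H F ∘ₗ rTensor H (μ ∘ₗ rTensor H S) := by
  ext u v w
  simp [mul_assoc]

lemma collapse (F : H →ₗ[k] H) (x : H) :
    (μ ∘ₗ rTensor H S ∘ₗ lTensor H (μ ∘ₗ lTensor H F ∘ₗ Δ) ∘ₗ Δ) x = F x := by
  have h1 : lTensor H (μ ∘ₗ lTensor H F ∘ₗ Δ) (Δ x)
      = lTensor H (μ ∘ₗ lTensor H F) (lTensor H Δ (Δ x)) := by
    conv_rhs => rw [← LinearMap.comp_apply, ← lTensor_comp, LinearMap.comp_assoc]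
  have h2 : lTensor H Δ (Δ x)
      = (TensorProduct.assoc k H H H) (rTensor H Δ (Δ x)) := (Coalgebra.coassoc_apply x).symm
  simp only [LinearMap.comp_apply, h1, h2]
  have h3 := LinearMap.congr_fun (rearrange (k := k) (H := H) F) (rTensor H Δ (Δ x))
  simp only [LinearMap.comp_apply, LinearEquiv.coe_coe] at h3
  rw [h3]
  have h4 : rTensor H (μ ∘ₗ rTensor H S) (rTensor H Δ (Δ x))
      = rTensor H (Algebra.linearMap k H ∘ₗ Coalgebra.counit) (Δ x) := by
    rw [← LinearMap.comp_apply, ← rTensor_comp, LinearMap.comp_assoc,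
      HopfAlgebra.mul_antipode_rTensor_comul]
  rw [h4]
  have h5 : rTensor H (Algebra.linearMap k H ∘ₗ Coalgebra.counit) (Δ x)
      = rTensor H (Algebra.linearMap k H) ((Coalgebra.counit (R := k)).rTensor H (Δ x)) := by
    rw [← LinearMap.comp_apply, rTensor_comp]; rfl
  rw [h5, Coalgebra.rTensor_counit_comul]
  simp

variable (fl : Module.Dual k H)

lemma smul_aux (u : H) (z : H ⊗[k] H) :
    (TensorProduct.rid k H) ((lTensor H fl) ((u ⊗ₜ[k] (1:H)) * z))
      = u * (TensorProduct.rid k H) ((lTensor H fl) z) := by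
  induction z using TensorProduct.induction_on with
  | zero => simp
  | tmul a b => simp [Algebra.TensorProduct.tmul_mul_tmul, mul_smul_comm]
  | add z1 z2 h1 h2 =>
      simp only [mul_add, map_add, h1, h2]

lemma B_zero (hcoint : ∀ g : H, (TensorProduct.rid k H) ((lTensor H fl) (Δ g)) = fl g • 1)
    (h : H) (hJ : ∀ y : H, fl (y * h) = 0) (x : H) :
    (TensorProduct.rid k H) ((lTensor H fl) (((1:H) ⊗ₜ[k] x) * Δ h)) = 0 := by
  set B : H →ₗ[k] H :=
    (TensorProduct.rid k H).toLinearMap ∘ₗ lTensor H fl ∘ₗ mulRight k (Δ h)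
      ∘ₗ (TensorProduct.mk k H H 1) with hB
  have hBapp : ∀ v : H,
      B v = (TensorProduct.rid k H) ((lTensor H fl) (((1:H) ⊗ₜ[k] v) * Δ h)) := fun v => rfl
  have hkey : ∀ z : H ⊗[k] H,
      μ ((lTensor H B) z) = (TensorProduct.rid k H) ((lTensor H fl) (z * Δ h)) := by
    intro z
    induction z using TensorProduct.induction_on with
    | zero => simp
    | tmul u v =>
        have e1 : (u ⊗ₜ[k] v) * Δ h = (u ⊗ₜ[k] (1:H)) * (((1:H) ⊗ₜ[k] v) * Δ h) := by
          rw [← mul_assoc, Algebra.TensorProduct.tmul_mul_tmul, mul_one, one_mul]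
        rw [lTensor_tmul, mul'_apply, e1, smul_aux, hBapp]
    | add z1 z2 h1 h2 =>
        simp only [map_add, add_mul, h1, h2]
  have hQ : (μ ∘ₗ lTensor H B ∘ₗ Δ) = (0 : H →ₗ[k] H) := by
    apply LinearMap.ext
    intro y
    simp only [LinearMap.comp_apply, LinearMap.zero_apply]
    rw [hkey, ← Bialgebra.comul_mul, hcoint, hJ, zero_smul]
  have hc := collapse (k := k) B x
  rw [hQ] at hc
  simp only [lTensor_zero, LinearMap.comp_apply, LinearMap.zero_apply, map_zero] at hc
  rw [← hBapp, ← hc]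

variable (k) in
/-- The "right legs" of `comul h` w.r.t. the canonical finite basis. -/
noncomputable def cointCC [FiniteDimensional k H] (h : H) (i : Fin (Module.finrank k H)) : H :=
  (TensorProduct.lid k H) ((rTensor H ((Module.finBasis k H).coord i)) (Δ h))

lemma coint_expand [FiniteDimensional k H] (T : H ⊗[k] H) :
    ∑ i, (Module.finBasis k H) i ⊗ₜ[k]
      ((TensorProduct.lid k H) ((rTensor H ((Module.finBasis k H).coord i)) T)) = T := by
  induction T using TensorProduct.induction_on with
  | zero => simp
  | tmul u v =>
      simp only [rTensor_tmul, lid_tmul, tmul_smul]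
      simp only [smul_tmul', ← TensorProduct.sum_tmul, Module.Basis.coord_apply, Module.Basis.sum_repr]
  | add z1 z2 h1 h2 =>
      simp only [map_add, tmul_add, Finset.sum_add_distrib, h1, h2]

lemma cointCC_expand [FiniteDimensional k H] (h : H) :
    ∑ i, (Module.finBasis k H) i ⊗ₜ[k] cointCC k h i = Δ h :=
  coint_expand (Δ h)

variable (k) in
/-- A `Repr` of `h` built from the canonical basis. -/
noncomputable def cointRepr [FiniteDimensional k H] (h : H) : Coalgebra.Repr k h (Fin (Module.finrank k H)) where
  index := Finset.univ
  left := fun i => (Module.finBasis k H) i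
  right := fun i => cointCC k h i
  eq := cointCC_expand h

lemma Jmem [FiniteDimensional k H]
    (hcoint : ∀ g : H, (TensorProduct.rid k H) ((lTensor H fl) (Δ g)) = fl g • 1)
    (h : H) (hJ : ∀ y : H, fl (y * h) = 0) (i : Fin (Module.finrank k H)) (v : H) :
    fl (v * cointCC k h i) = 0 := by
  have h0 := B_zero fl hcoint h hJ v
  rw [← cointCC_expand h, Finset.mul_sum] at h0
  simp only [Algebra.TensorProduct.tmul_mul_tmul] at h0
  simp only [one_mul, map_sum, lTensor_tmul, TensorProduct.rid_tmul] at h0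
  have li := Fintype.linearIndependent_iff.mp (Module.finBasis k H).linearIndependent
  exact li _ h0 i

lemma eps_zero [FiniteDimensional k H] (hfl : fl ≠ 0)
    (hcoint : ∀ g : H, (TensorProduct.rid k H) ((lTensor H fl) (Δ g)) = fl g • 1)
    (h : H) (hJ : ∀ y : H, fl (y * h) = 0) : Coalgebra.counit (R := k) h = 0 := by
  obtain ⟨x0, hx0⟩ : ∃ x : H, fl x ≠ 0 := by
    by_contra hall
    push_neg at hall
    exact hfl (LinearMap.ext fun x => hall x)
  have hs := HopfAlgebra.sum_antipode_mul_eq_smul (cointRepr k h)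
  have hz : fl (x0 * (Coalgebra.counit (R := k) h • (1:H))) = 0 := by
    rw [← hs, Finset.mul_sum, map_sum]
    apply Finset.sum_eq_zero
    intro i _
    rw [← mul_assoc]
    exact Jmem fl hcoint h hJ i _
  rw [mul_smul_comm, mul_one, map_smul, smul_eq_mul] at hz
  exact (mul_eq_zero.mp hz).resolve_right hx0

lemma J_zero [FiniteDimensional k H] (hfl : fl ≠ 0)
    (hcoint : ∀ g : H, (TensorProduct.rid k H) ((lTensor H fl) (Δ g)) = fl g • 1)
    (h : H) (hJ : ∀ y : H, fl (y * h) = 0) : h = 0 := by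
  have hs := Coalgebra.sum_tmul_counit_eq (cointRepr k h)
  have := congrArg (TensorProduct.rid k H) hs
  rw [map_sum, TensorProduct.rid_tmul, one_smul] at this
  rw [← this]
  apply Finset.sum_eq_zero
  intro i _
  have : Coalgebra.counit (R := k) (cointCC k h i) = 0 :=
    eps_zero fl hfl hcoint _ (fun v => Jmem fl hcoint h hJ i v)
  show (TensorProduct.rid k H) _ = 0
  rw [TensorProduct.rid_tmul]
  show Coalgebra.counit (R := k) ((cointRepr k h).right i) • _ = 0
  have h2 : (cointRepr k h).right i = cointCC k h i := rfl
  rw [h2, this, zero_smul]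

end CointAux

/-- Let `H` be a finite-dimensional Hopf algebra over a field `k` and
`λ ∈ H^*` a nonzero right cointegral.  Then the `k`-linear map `H → H^*` sending `h` to the
functional `x ↦ λ(h x)` is bijective. -/
theorem cointegral_pairing_bijective
    (k : Type u) [Field k] (H : Type v) [Ring H] [HopfAlgebra k H] [FiniteDimensional k H]
    (fl : Module.Dual k H) (hfl : fl ≠ 0) (hcoint : IsRightCointegral k H fl) :
    Function.Bijective (fun h : H => fl ∘ₗ LinearMap.mulLeft k h) := by
  classical
  have hco : ∀ g : H, (TensorProduct.rid k H) ((LinearMap.lTensor H fl)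
      (Coalgebra.comul (R := k) g)) = fl g • (1 : H) := hcoint
  let ψ : H →ₗ[k] Module.Dual k H :=
    { toFun := fun h => fl ∘ₗ LinearMap.mulRight k h
      map_add' := by
        intro a b; ext x
        simp [mul_add]
      map_smul' := by
        intro c a; ext x
        simp [mul_smul_comm] }
  let φ : H →ₗ[k] Module.Dual k H :=
    { toFun := fun h => fl ∘ₗ LinearMap.mulLeft k h
      map_add' := by
        intro a b; ext x
        simp [add_mul]
      map_smul' := by
        intro c a; ext x
        simp [smul_mul_assoc] }
  have hrk : Module.finrank k H = Module.finrank k (Module.Dual k H) :=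
    (Subspace.dual_finrank_eq (K := k) (V := H)).symm
  have hinjψ : Function.Injective ψ := by
    rw [injective_iff_map_eq_zero]
    intro h hh
    apply CointAux.J_zero fl hfl hco h
    intro y
    have := DFunLike.congr_fun hh y
    simpa [ψ] using this
  have hsurjψ : Function.Surjective ψ :=
    (LinearMap.injective_iff_surjective_of_finrank_eq_finrank hrk).mp hinjψ
  have hinjφ : Function.Injective φ := by
    rw [injective_iff_map_eq_zero]
    intro h hh
    rw [← Module.forall_dual_apply_eq_zero_iff k h]
    intro f
    obtain ⟨y, hy⟩ := hsurjψ f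
    have h1 : fl (h * y) = 0 := by
      have := DFunLike.congr_fun hh y
      simpa [φ] using this
    rw [← hy]
    simpa [ψ] using h1
  have hsurjφ : Function.Surjective φ :=
    (LinearMap.injective_iff_surjective_of_finrank_eq_finrank hrk).mp hinjφ
  exact ⟨hinjφ, hsurjφ⟩
end

section
/- Let H be a finite-dimensional Hopf algebra over a field k, Λ ∈ H a nonzero left integral and λ ∈ H^* a nonzero right cointegral. Then λ(Λ) ≠ 0; in particular, after rescaling one may normalize λ(Λ) = 1. -/
universe u v

open scoped TensorProduct
open Coalgebra

section Aux

variable {k : Type u} [Field k] {H : Type v} [Ring H] [HopfAlgebra k H]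

/-- Counit axiom in Sweedler-sum form: `∑ ε(a₁) • a₂ = a`. -/
lemma aux_counit_sum {ι : Type*} (a : H) (r : Coalgebra.Repr k a ι) :
    ∑ i ∈ r.index, Coalgebra.counit (R := k) (r.left i) • r.right i = a := by
  have h := Coalgebra.sum_counit_tmul_eq r
  have h2 : (TensorProduct.lid k H) (∑ i ∈ r.index,
      Coalgebra.counit (R := k) (r.left i) ⊗ₜ[k] r.right i) =
      ∑ i ∈ r.index, Coalgebra.counit (R := k) (r.left i) • r.right i := by
    rw [map_sum]; simp only [TensorProduct.lid_tmul]
  rw [h] at h2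
  simpa using h2.symm

/-- Counit axiom, other side: `∑ ε(a₂) • a₁ = a`. -/
lemma aux_counit_sum' {ι : Type*} (a : H) (r : Coalgebra.Repr k a ι) :
    ∑ i ∈ r.index, Coalgebra.counit (R := k) (r.right i) • r.left i = a := by
  have h := Coalgebra.sum_tmul_counit_eq r
  have h2 : (TensorProduct.rid k H) (∑ i ∈ r.index,
      r.left i ⊗ₜ[k] Coalgebra.counit (R := k) (r.right i)) =
      ∑ i ∈ r.index, Coalgebra.counit (R := k) (r.right i) • r.left i := by
    rw [map_sum]; simp only [TensorProduct.rid_tmul]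
  rw [h] at h2
  simpa using h2.symm

/-- Cointegral property applied to a product, in double-sum form:
`∑ fl(a₂ b₂) • (a₁ b₁) = fl(ab) • 1`. -/
lemma aux_coint_sum_mul (fl : Module.Dual k H)
    (hcoint : ∀ h : H, (TensorProduct.rid k H) ((LinearMap.lTensor H fl)
      (Coalgebra.comul (R := k) h)) = fl h • (1 : H))
    {ι κ : Type*} (a b : H) (ra : Coalgebra.Repr k a ι) (rb : Coalgebra.Repr k b κ) :
    ∑ i ∈ ra.index, ∑ j ∈ rb.index,
      fl (ra.right i * rb.right j) • (ra.left i * rb.left j) = fl (a * b) • 1 := by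
  have hc : Coalgebra.comul (R := k) (a * b) =
      ∑ i ∈ ra.index, ∑ j ∈ rb.index,
        (ra.left i * rb.left j) ⊗ₜ[k] (ra.right i * rb.right j) := by
    rw [Bialgebra.comul_mul, ← ra.eq, ← rb.eq, Finset.sum_mul_sum]
    simp [Algebra.TensorProduct.tmul_mul_tmul]
  have h := hcoint (a * b)
  rw [hc] at h
  simpa [map_sum] using h

/-- The key lemma: if `fl(x·h) = 0` for all `x`, then for any Sweedler representation of `h`,
`∑ fl(x · h₂) • h₁ = 0` for all `x`.  (This is `∑ h₁ λ(x h₂) = ∑ S(x₁) λ(x₂ h)` in disguise.) -/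
lemma aux_key (fl : Module.Dual k H)
    (hcoint : ∀ h : H, (TensorProduct.rid k H) ((LinearMap.lTensor H fl)
      (Coalgebra.comul (R := k) h)) = fl h • (1 : H))
    (h : H) (hN : ∀ x : H, fl (x * h) = 0) {ι : Type*} (x : H) (rh : Coalgebra.Repr k h ι) :
    ∑ j ∈ rh.index, fl (x * rh.right j) • rh.left j = 0 := by
  classical
  set S : H →ₗ[k] H := HopfAlgebra.antipode (R := k) with hS
  set Ξ : H ⊗[k] H →ₗ[k] H :=
    ∑ j ∈ rh.index, (TensorProduct.rid k H).toLinearMap ∘ₗ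
      TensorProduct.map (LinearMap.mulRight k (rh.left j))
        (fl ∘ₗ LinearMap.mulRight k (rh.right j)) with hΞ
  set Φ : H ⊗[k] (H ⊗[k] H) →ₗ[k] H :=
    Ξ ∘ₗ TensorProduct.map ((LinearMap.mul' k H) ∘ₗ (LinearMap.rTensor H S)) LinearMap.id
      ∘ₗ (TensorProduct.assoc k H H H).symm.toLinearMap with hΦ
  have hΦt : ∀ a b c : H, Φ (a ⊗ₜ[k] (b ⊗ₜ[k] c)) =
      ∑ j ∈ rh.index, fl (c * rh.right j) • (S a * b * rh.left j) := by
    intro a b c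
    simp only [hΦ, hΞ, LinearMap.comp_apply, LinearEquiv.coe_coe,
      TensorProduct.assoc_symm_tmul, TensorProduct.map_tmul, LinearMap.rTensor_tmul,
      LinearMap.mul'_apply, LinearMap.id_coe, id_eq, LinearMap.sum_apply,
      TensorProduct.rid_tmul, LinearMap.mulRight_apply]
  -- apply Φ to the coassociativity identity for x
  let rx := Coalgebra.Repr.arbitrary k x
  let a₁ : (i : H × H) → Coalgebra.Repr k (rx.left i) (H × H) := fun i => Coalgebra.Repr.arbitrary k _
  let a₂ : (i : H × H) → Coalgebra.Repr k (rx.right i) (H × H) := fun i => Coalgebra.Repr.arbitrary k _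
  have coas := Coalgebra.sum_tmul_tmul_eq rx a₁ a₂
  have himg := congrArg Φ coas
  simp only [map_sum, hΦt] at himg
  have hLHS : ∑ i ∈ rx.index, ∑ j' ∈ (a₁ i).index, ∑ j ∈ rh.index,
      fl (rx.right i * rh.right j) • (S ((a₁ i).left j') * (a₁ i).right j' * rh.left j)
      = ∑ j ∈ rh.index, fl (x * rh.right j) • rh.left j := by
    have step1 : ∀ i ∈ rx.index, ∑ j' ∈ (a₁ i).index, ∑ j ∈ rh.index,
        fl (rx.right i * rh.right j) • (S ((a₁ i).left j') * (a₁ i).right j' * rh.left j)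
        = ∑ j ∈ rh.index,
            fl ((Coalgebra.counit (R := k) (rx.left i) • rx.right i) * rh.right j) • rh.left j := by
      intro i _
      rw [Finset.sum_comm]
      refine Finset.sum_congr rfl fun j _ => ?_
      have : ∑ j' ∈ (a₁ i).index,
          fl (rx.right i * rh.right j) • (S ((a₁ i).left j') * (a₁ i).right j' * rh.left j)
          = fl (rx.right i * rh.right j) •
            ((∑ j' ∈ (a₁ i).index, S ((a₁ i).left j') * (a₁ i).right j') * rh.left j) := by
        rw [Finset.sum_mul, Finset.smul_sum]
      rw [this, HopfAlgebra.sum_antipode_mul_eq_smul (a₁ i)]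
      rw [smul_mul_assoc, one_mul, smul_smul, smul_mul_assoc, map_smul, smul_eq_mul, mul_comm]
    rw [Finset.sum_congr rfl step1, Finset.sum_comm]
    refine Finset.sum_congr rfl fun j _ => ?_
    have : ∑ i ∈ rx.index,
        fl ((Coalgebra.counit (R := k) (rx.left i) • rx.right i) * rh.right j) • rh.left j
        = fl ((∑ i ∈ rx.index, Coalgebra.counit (R := k) (rx.left i) • rx.right i)
            * rh.right j) • rh.left j := by
      rw [Finset.sum_mul, map_sum, Finset.sum_smul]
    rw [this, aux_counit_sum x rx]
  have hRHS : ∑ i ∈ rx.index, ∑ j' ∈ (a₂ i).index, ∑ j ∈ rh.index,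
      fl ((a₂ i).right j' * rh.right j) • (S (rx.left i) * (a₂ i).left j' * rh.left j)
      = 0 := by
    have step : ∀ i ∈ rx.index, ∑ j' ∈ (a₂ i).index, ∑ j ∈ rh.index,
        fl ((a₂ i).right j' * rh.right j) • (S (rx.left i) * (a₂ i).left j' * rh.left j)
        = S (rx.left i) * (fl (rx.right i * h) • 1) := by
      intro i _
      have key : ∀ j' ∈ (a₂ i).index, ∀ j ∈ rh.index,
          fl ((a₂ i).right j' * rh.right j) • (S (rx.left i) * (a₂ i).left j' * rh.left j)
          = S (rx.left i) * (fl ((a₂ i).right j' * rh.right j) •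
              ((a₂ i).left j' * rh.left j)) := by
        intro j' _ j _
        rw [mul_smul_comm, mul_assoc]
      calc ∑ j' ∈ (a₂ i).index, ∑ j ∈ rh.index,
            fl ((a₂ i).right j' * rh.right j) • (S (rx.left i) * (a₂ i).left j' * rh.left j)
          = ∑ j' ∈ (a₂ i).index, ∑ j ∈ rh.index,
            S (rx.left i) * (fl ((a₂ i).right j' * rh.right j) •
              ((a₂ i).left j' * rh.left j)) := by
            refine Finset.sum_congr rfl fun j' hj' => Finset.sum_congr rfl fun j hj => ?_
            exact key j' hj' j hj
        _ = S (rx.left i) * ∑ j' ∈ (a₂ i).index, ∑ j ∈ rh.index,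
              fl ((a₂ i).right j' * rh.right j) • ((a₂ i).left j' * rh.left j) := by
            rw [Finset.mul_sum]
            exact Finset.sum_congr rfl fun j' _ => by rw [Finset.mul_sum]
        _ = S (rx.left i) * (fl (rx.right i * h) • 1) := by
            rw [aux_coint_sum_mul fl hcoint _ _ (a₂ i) rh]
    rw [Finset.sum_congr rfl step]
    simp [hN]
  rw [hLHS, hRHS] at himg
  exact himg

/-- Decompose a tensor along a basis in the first leg. -/
lemma aux_basis_decomp [FiniteDimensional k H] (t : H ⊗[k] H) :
    ∑ i, (Module.finBasis k H) i ⊗ₜ[k]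
      (TensorProduct.lid k H) ((LinearMap.rTensor H ((Module.finBasis k H).coord i)) t) = t := by
  set b := Module.finBasis k H
  induction t with
  | zero => simp
  | tmul u v =>
      simp only [LinearMap.rTensor_tmul, TensorProduct.lid_tmul, Module.Basis.coord_apply]
      calc ∑ i, b i ⊗ₜ[k] (b.repr u i • v)
          = ∑ i, (b.repr u i • b i) ⊗ₜ[k] v := by
            refine Finset.sum_congr rfl fun i _ => ?_
            rw [TensorProduct.tmul_smul, TensorProduct.smul_tmul']
        _ = (∑ i, b.repr u i • b i) ⊗ₜ[k] v := by rw [TensorProduct.sum_tmul]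
        _ = u ⊗ₜ[k] v := by rw [b.sum_repr u]
  | add s t hs ht =>
      simp only [map_add, TensorProduct.tmul_add, Finset.sum_add_distrib, hs, ht]

/-- If `fl(x·h) = 0` for all `x`, then `h` admits a Sweedler representation whose first legs
form the chosen basis and whose second legs again satisfy this condition. -/
lemma aux_second_leg [FiniteDimensional k H] (fl : Module.Dual k H)
    (hcoint : ∀ h : H, (TensorProduct.rid k H) ((LinearMap.lTensor H fl)
      (Coalgebra.comul (R := k) h)) = fl h • (1 : H))
    (h : H) (hN : ∀ x : H, fl (x * h) = 0) :
    ∃ v : Fin (Module.finrank k H) → H,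
      (∑ i, (Module.finBasis k H) i ⊗ₜ[k] v i) = Coalgebra.comul (R := k) h ∧
      ∀ i, ∀ x : H, fl (x * v i) = 0 := by
  classical
  set b := Module.finBasis k H with hb
  set v : Fin (Module.finrank k H) → H := fun i =>
    (TensorProduct.lid k H) ((LinearMap.rTensor H (b.coord i)) (Coalgebra.comul (R := k) h)) with hv
  have heq : (∑ i, b i ⊗ₜ[k] v i) = Coalgebra.comul (R := k) h := aux_basis_decomp _
  refine ⟨v, heq, fun i x => ?_⟩
  -- use the key lemma with this representation
  let rh : Coalgebra.Repr k h (Fin (Module.finrank k H)) := ⟨Finset.univ, ⇑b, v, heq⟩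
  have h0 := aux_key fl hcoint h hN x rh
  have h0' : ∑ i, fl (x * v i) • b i = 0 := h0
  exact Fintype.linearIndependent_iff.mp b.linearIndependent (fun i => fl (x * v i)) h0' i

/-- The counit vanishes on `{h : fl(x·h) = 0 ∀ x}` when `fl ≠ 0`. -/
lemma aux_counit_zero [FiniteDimensional k H] (fl : Module.Dual k H) (hfl : fl ≠ 0)
    (hcoint : ∀ h : H, (TensorProduct.rid k H) ((LinearMap.lTensor H fl)
      (Coalgebra.comul (R := k) h)) = fl h • (1 : H))
    (h : H) (hN : ∀ x : H, fl (x * h) = 0) :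
    Coalgebra.counit (R := k) h = 0 := by
  classical
  obtain ⟨v, heq, hv⟩ := aux_second_leg fl hcoint h hN
  set b := Module.finBasis k H
  let rh : Coalgebra.Repr k h (Fin (Module.finrank k H)) := ⟨Finset.univ, ⇑b, v, heq⟩
  have hanti : ∑ i, HopfAlgebra.antipode (R := k) (b i) * v i =
      Coalgebra.counit (R := k) h • (1 : H) := HopfAlgebra.sum_antipode_mul_eq_smul rh
  obtain ⟨x0, hx0⟩ : ∃ x0 : H, fl x0 ≠ 0 := by
    by_contra hc
    push_neg at hc
    exact hfl (LinearMap.ext fun y => by simpa using hc y)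
  have hcalc : Coalgebra.counit (R := k) h * fl x0 = 0 := by
    have h1 : fl (x0 * (Coalgebra.counit (R := k) h • (1 : H)))
        = Coalgebra.counit (R := k) h * fl x0 := by
      rw [mul_smul_comm, mul_one, map_smul, smul_eq_mul]
    have h2 : fl (x0 * (Coalgebra.counit (R := k) h • (1 : H))) = 0 := by
      rw [← hanti, Finset.mul_sum, map_sum]
      refine Finset.sum_eq_zero fun i _ => ?_
      rw [← mul_assoc]
      exact hv i _
    rw [← h1, h2]
  rcases mul_eq_zero.mp hcalc with h' | h'
  · exact h'
  · exact absurd h' hx0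

end Aux

/-- Let `H` be a finite-dimensional Hopf algebra over a field `k`,
`Λ ∈ H` a nonzero left integral and `λ ∈ H^*` a nonzero right cointegral.  Then
`λ(Λ) ≠ 0` (in particular, after rescaling one may normalize `λ(Λ) = 1`). -/
theorem cointegral_of_integral_ne_zero
    (k : Type u) [Field k] (H : Type v) [Ring H] [HopfAlgebra k H] [FiniteDimensional k H]
    (Λ : H) (hΛne : Λ ≠ 0)
    (hΛ : ∀ h : H, h * Λ = CoalgebraStruct.counit (R := k) h • Λ)
    (fl : Module.Dual k H) (hfl : fl ≠ 0) (hcoint : IsRightCointegral k H fl) :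
    fl Λ ≠ 0 := by
  intro hzero
  -- `Λ` lies in `N = {h : fl (x * h) = 0 for all x}`
  have hNΛ : ∀ x : H, fl (x * Λ) = 0 := by
    intro x
    rw [hΛ x, map_smul, smul_eq_mul, hzero, mul_zero]
  -- decompose `comul Λ` with second legs in `N`
  obtain ⟨v, heq, hv⟩ := aux_second_leg fl hcoint Λ hNΛ
  set b := Module.finBasis k H
  let rΛ : Coalgebra.Repr k Λ (Fin (Module.finrank k H)) := ⟨Finset.univ, ⇑b, v, heq⟩
  -- the counit kills all second legs, hence `Λ = 0` by the counit axiom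
  have hΛ0 : Λ = 0 := by
    have hcount := aux_counit_sum' Λ rΛ
    have : ∀ i, Coalgebra.counit (R := k) (v i) = 0 := fun i =>
      aux_counit_zero fl hfl hcoint (v i) (hv i)
    have hz : ∑ i, Coalgebra.counit (R := k) (rΛ.right i) • rΛ.left i = 0 := by
      refine Finset.sum_eq_zero fun i _ => ?_
      show Coalgebra.counit (R := k) (v i) • (b i) = 0
      rw [this i, zero_smul]
    rw [← hcount]
    exact hz
  exact hΛne hΛ0
end

section
/- Let H be a finite-dimensional Hopf algebra over a field k. Then the space of left integrals of H, i.e. the subspace { Λ ∈ H : hΛ = ε(h)Λ for all h ∈ H }, is one-dimensional. -/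
open Coalgebra HopfAlgebra TensorProduct LinearMap

namespace LarsonSweedlerProof

variable {k : Type*} [Field k] {H : Type*} [Ring H] [HopfAlgebra k H]

noncomputable def _root_.Coalgebra.Repr.prodRepr {ιa ιb : Type*} {a b : H} (ra : Coalgebra.Repr k a ιa) (rb : Coalgebra.Repr k b ιb) :
    Coalgebra.Repr k (a * b) (ιa × ιb) where
  index := ra.index ×ˢ rb.index
  left := fun p => ra.left p.1 * rb.left p.2
  right := fun p => ra.right p.1 * rb.right p.2
  eq := by
    rw [Bialgebra.comul_mul, ← ra.eq, ← rb.eq, Finset.sum_mul_sum]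
    rw [Finset.sum_product]
    simp [Algebra.TensorProduct.tmul_mul_tmul]

lemma counit_right_collapse {ι' : Type*} {h : H} (r : Coalgebra.Repr k h ι') :
    ∑ t ∈ r.index, Coalgebra.counit (R := k) (r.right t) • r.left t = h := by
  have h1 := Coalgebra.sum_tmul_counit_eq (R := k) r
  have h2 := congrArg (TensorProduct.rid k H) h1
  simp only [map_sum, TensorProduct.rid_tmul] at h2
  simpa using h2

lemma counit_left_collapse {ι' : Type*} {h : H} (r : Coalgebra.Repr k h ι') :
    ∑ t ∈ r.index, Coalgebra.counit (R := k) (r.left t) • r.right t = h := by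
  have h1 := Coalgebra.sum_counit_tmul_eq (R := k) r
  have h2 := congrArg (TensorProduct.lid k H) h1
  simp only [map_sum, TensorProduct.lid_tmul] at h2
  simpa using h2


section Conv

variable {M : Type*} [AddCommGroup M] [Module k M]

noncomputable def conv (mul : M →ₗ[k] M →ₗ[k] M) (f g : H →ₗ[k] M) : H →ₗ[k] M :=
  TensorProduct.lift mul ∘ₗ TensorProduct.map f g ∘ₗ Coalgebra.comul

lemma conv_repr (mul : M →ₗ[k] M →ₗ[k] M) (f g : H →ₗ[k] M) {ι' : Type*} {c : H} (r : Coalgebra.Repr k c ι') :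
    conv mul f g c = ∑ t ∈ r.index, mul (f (r.left t)) (g (r.right t)) := by
  simp only [conv, comp_apply, ← r.eq, map_sum, TensorProduct.map_tmul, TensorProduct.lift.tmul]

noncomputable def convUnit (e : M) : H →ₗ[k] M where
  toFun c := Coalgebra.counit (R := k) c • e
  map_add' x y := by simp only [map_add, add_smul]
  map_smul' r x := by simp only [map_smul, smul_assoc, RingHom.id_apply]

@[simp] lemma convUnit_apply (e : M) (c : H) :
    (convUnit e : H →ₗ[k] M) c = Coalgebra.counit (R := k) c • e := rfl

lemma conv_unit_left (mul : M →ₗ[k] M →ₗ[k] M) (e : M) (he : ∀ x, mul e x = x)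
    (f : H →ₗ[k] M) : conv mul (convUnit e) f = f := by
  ext c
  rw [conv_repr mul _ f (ℛ k c)]
  simp only [convUnit_apply, map_smul, LinearMap.smul_apply, he]
  conv_rhs => rw [← counit_left_collapse (ℛ k c)]
  rw [map_sum]
  simp only [map_smul]

lemma conv_unit_right (mul : M →ₗ[k] M →ₗ[k] M) (e : M) (he : ∀ x, mul x e = x)
    (f : H →ₗ[k] M) : conv mul f (convUnit e) = f := by
  ext c
  rw [conv_repr mul f _ (ℛ k c)]
  simp only [convUnit_apply, map_smul, he]
  conv_rhs => rw [← counit_right_collapse (ℛ k c)]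
  rw [map_sum]
  simp only [map_smul]

lemma conv_assoc (mul : M →ₗ[k] M →ₗ[k] M)
    (hassoc : ∀ x y z, mul (mul x y) z = mul x (mul y z)) (f g h : H →ₗ[k] M) :
    conv mul (conv mul f g) h = conv mul f (conv mul g h) := by
  ext c
  set r := ℛ k c
  set a₁ : (i : H × H) → Coalgebra.Repr k (r.left i) (H × H) := fun i => ℛ k (r.left i) with ha₁
  set a₂ : (i : H × H) → Coalgebra.Repr k (r.right i) (H × H) := fun i => ℛ k (r.right i) with ha₂
  have key := Coalgebra.sum_map_tmul_tmul_eq (R := k) f g h c (repr := r) (a₁ := a₁) (a₂ := a₂)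
  have key2 := congrArg (TensorProduct.lift (mul.compl₂ (TensorProduct.lift mul))) key
  simp only [map_sum, TensorProduct.lift.tmul, LinearMap.compl₂_apply] at key2
  calc conv mul (conv mul f g) h c
      = ∑ i ∈ r.index, mul (conv mul f g (r.left i)) (h (r.right i)) := conv_repr ..
    _ = ∑ i ∈ r.index, ∑ j ∈ (a₁ i).index,
          mul (mul (f ((a₁ i).left j)) (g ((a₁ i).right j))) (h (r.right i)) := by
        refine Finset.sum_congr rfl fun i _ => ?_
        rw [conv_repr mul f g (a₁ i), map_sum, LinearMap.sum_apply]
    _ = ∑ i ∈ r.index, ∑ j ∈ (a₁ i).index,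
          mul (f ((a₁ i).left j)) (mul (g ((a₁ i).right j)) (h (r.right i))) := by
        simp only [hassoc]
    _ = ∑ i ∈ r.index, ∑ j ∈ (a₂ i).index,
          mul (f (r.left i)) (mul (g ((a₂ i).left j)) (h ((a₂ i).right j))) := key2.symm
    _ = conv mul f (conv mul g h) c := by
        rw [conv_repr mul f _ r]
        refine Finset.sum_congr rfl fun i _ => ?_
        rw [conv_repr mul g h (a₂ i), map_sum]

lemma conv_inv_unique (mul : M →ₗ[k] M →ₗ[k] M)
    (hassoc : ∀ x y z, mul (mul x y) z = mul x (mul y z))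
    (e : M) (hel : ∀ x, mul e x = x) (her : ∀ x, mul x e = x)
    {f g p : H →ₗ[k] M} (h1 : conv mul f p = convUnit e) (h2 : conv mul p g = convUnit e) :
    f = g := by
  have : conv mul f (conv mul p g) = conv mul (conv mul f p) g := (conv_assoc mul hassoc f p g).symm
  rw [h1, h2, conv_unit_right mul e her, conv_unit_left mul e hel] at this
  exact this

end Conv

section AntipodeMul

/-- bilinear convolution product on `H →ₗ[k] H` -/
noncomputable def mul₂ : (H →ₗ[k] H) →ₗ[k] (H →ₗ[k] H) →ₗ[k] (H →ₗ[k] H) :=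
  LinearMap.mk₂ k (conv (LinearMap.mul k H))
    (fun f f' g => by
      unfold conv
      rw [TensorProduct.map_add_left]
      simp only [LinearMap.comp_add, LinearMap.add_comp])
    (fun r f g => by
      unfold conv
      rw [TensorProduct.map_smul_left]
      simp only [LinearMap.comp_smul, LinearMap.smul_comp])
    (fun f g g' => by
      unfold conv
      rw [TensorProduct.map_add_right]
      simp only [LinearMap.comp_add, LinearMap.add_comp])
    (fun r f g => by
      unfold conv
      rw [TensorProduct.map_smul_right]
      simp only [LinearMap.comp_smul, LinearMap.smul_comp])

lemma mul₂_apply (f g : H →ₗ[k] H) : (mul₂ f) g = conv (LinearMap.mul k H) f g := rfl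

lemma mul_assoc' (x y z : H) :
    (LinearMap.mul k H) ((LinearMap.mul k H x) y) z = (LinearMap.mul k H x) ((LinearMap.mul k H y) z) := by
  simp [mul_assoc]

lemma mul₂_assoc (x y z : H →ₗ[k] H) : mul₂ (mul₂ x y) z = mul₂ x (mul₂ y z) := by
  simp only [mul₂_apply]
  exact conv_assoc _ mul_assoc' x y z

noncomputable def u₁ : H →ₗ[k] H := convUnit (1 : H)

lemma mul₂_unit_left (f : H →ₗ[k] H) : mul₂ u₁ f = f :=
  conv_unit_left _ _ (fun x => by simp) f

lemma mul₂_unit_right (f : H →ₗ[k] H) : mul₂ f u₁ = f :=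
  conv_unit_right _ _ (fun x => by simp) f

noncomputable def MuL : H →ₗ[k] H →ₗ[k] H := LinearMap.mul k H
noncomputable def SMu : H →ₗ[k] H →ₗ[k] H := (LinearMap.mul k H).compr₂ (antipode (R := k))
noncomputable def Gm : H →ₗ[k] H →ₗ[k] H :=
  (((LinearMap.mul k H).compl₁₂ (antipode (R := k)) (antipode (R := k)))).flip

lemma SMu_apply (a b : H) : (SMu (k := k) a) b = antipode (R := k) (a * b) := rfl
lemma Gm_apply (a b : H) : (Gm (k := k) a) b = antipode (R := k) b * antipode (R := k) a := rfl
lemma MuL_apply (a b : H) : (MuL (k := k) a) b = a * b := rfl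

lemma conv_SMu_MuL : conv mul₂ SMu MuL = convUnit (u₁ (k := k) (H := H)) := by
  ext c d
  rw [conv_repr mul₂ SMu MuL (ℛ k c)]
  simp only [LinearMap.sum_apply, mul₂_apply]
  have : ∀ t ∈ (ℛ k c).index,
      (conv (LinearMap.mul k H) (SMu ((ℛ k c).left t)) (MuL ((ℛ k c).right t))) d
      = ∑ s ∈ (ℛ k d).index, antipode (R := k) ((ℛ k c).left t * (ℛ k d).left s)
          * ((ℛ k c).right t * (ℛ k d).right s) := by
    intro t _
    rw [conv_repr _ _ _ (ℛ k d)]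
    simp [SMu_apply, MuL_apply]
  rw [Finset.sum_congr rfl this]
  have key := HopfAlgebra.sum_antipode_mul_eq_algebraMap_counit (R := k) ((ℛ k c).prodRepr (ℛ k d))
  rw [Coalgebra.Repr.prodRepr] at key
  simp only [Finset.sum_product] at key
  rw [key]
  simp [u₁, Algebra.algebraMap_eq_smul_one, smul_smul]

lemma conv_MuL_Gm : conv mul₂ MuL Gm = convUnit (u₁ (k := k) (H := H)) := by
  ext c d
  rw [conv_repr mul₂ MuL Gm (ℛ k c)]
  simp only [LinearMap.sum_apply, mul₂_apply]
  have : ∀ t ∈ (ℛ k c).index,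
      (conv (LinearMap.mul k H) (MuL ((ℛ k c).left t)) (Gm ((ℛ k c).right t))) d
      = ((ℛ k c).left t) * (∑ s ∈ (ℛ k d).index,
          (ℛ k d).left s * antipode (R := k) ((ℛ k d).right s)) * antipode (R := k) ((ℛ k c).right t) := by
    intro t _
    rw [conv_repr _ _ _ (ℛ k d)]
    rw [Finset.mul_sum, Finset.sum_mul]
    refine Finset.sum_congr rfl fun s _ => ?_
    simp [MuL_apply, Gm_apply, mul_assoc]
  rw [Finset.sum_congr rfl this]
  rw [HopfAlgebra.sum_mul_antipode_eq_smul (R := k) (ℛ k d)]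
  simp only [mul_smul_comm, smul_mul_assoc, mul_one]
  rw [← Finset.smul_sum, HopfAlgebra.sum_mul_antipode_eq_smul (R := k) (ℛ k c)]
  simp [u₁, smul_smul, mul_comm]

lemma antipode_mul' (a b : H) :
    antipode (R := k) (a * b) = antipode (R := k) b * antipode (R := k) a := by
  have : SMu = (Gm : H →ₗ[k] H →ₗ[k] H) :=
    conv_inv_unique (M := H →ₗ[k] H) mul₂ mul₂_assoc u₁ mul₂_unit_left mul₂_unit_right
      (f := SMu) (g := Gm) (p := MuL) conv_SMu_MuL conv_MuL_Gm
  have h2 := DFunLike.congr_fun (DFunLike.congr_fun this a) b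
  rwa [SMu_apply, Gm_apply] at h2

lemma antipode_one : antipode (R := k) (1 : H) = 1 := by
  have := HopfAlgebra.mul_antipode_rTensor_comul_apply (R := k) (1 : H)
  rw [Bialgebra.comul_one, Algebra.TensorProduct.one_def, LinearMap.rTensor_tmul,
    LinearMap.mul'_apply, mul_one, Bialgebra.counit_one] at this
  simpa using this

lemma counit_antipode (h : H) :
    Coalgebra.counit (R := k) (antipode (R := k) h) = Coalgebra.counit (R := k) h := by
  have key := HopfAlgebra.sum_antipode_mul_eq_algebraMap_counit (R := k) (ℛ k h)
  have := congrArg (Coalgebra.counit (R := k)) key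
  simp only [map_sum, Bialgebra.counit_mul] at this
  calc Coalgebra.counit (R := k) (antipode (R := k) h)
      = Coalgebra.counit (R := k) (antipode (R := k)
          (∑ t ∈ (ℛ k h).index, Coalgebra.counit (R := k) ((ℛ k h).right t) • (ℛ k h).left t)) := by
        rw [counit_right_collapse]
    _ = ∑ t ∈ (ℛ k h).index, Coalgebra.counit (R := k) (antipode (R := k) ((ℛ k h).left t))
          * Coalgebra.counit (R := k) ((ℛ k h).right t) := by
        simp only [map_sum, map_smul, smul_eq_mul]
        exact Finset.sum_congr rfl fun t _ => mul_comm _ _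
    _ = Coalgebra.counit (R := k) h := by
        rw [this]
        simp [Algebra.algebraMap_eq_smul_one]

end AntipodeMul

section Act

/-- `act f n = Σ f(S(n₂)) • n₁` -/
noncomputable def act (f : Module.Dual k H) : H →ₗ[k] H :=
  (TensorProduct.rid k H).toLinearMap ∘ₗ
    LinearMap.lTensor H (f ∘ₗ antipode (R := k)) ∘ₗ (Coalgebra.comul : H →ₗ[k] H ⊗[k] H)

lemma act_repr (f : Module.Dual k H) {ι' : Type*} {n : H} (r : Coalgebra.Repr k n ι') :
    act f n = ∑ t ∈ r.index, f (antipode (R := k) (r.right t)) • r.left t := by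
  simp only [act, comp_apply, ← r.eq, map_sum, LinearMap.lTensor_tmul,
    LinearEquiv.coe_coe, TensorProduct.rid_tmul, comp_apply]

lemma act_add (f g : Module.Dual k H) : act (f + g) = (act f) + act (k := k) g := by
  unfold act
  rw [LinearMap.add_comp, LinearMap.lTensor_add]
  simp only [LinearMap.comp_add, LinearMap.add_comp]

lemma act_smul (c : k) (f : Module.Dual k H) : act (c • f) = c • act (k := k) f := by
  unfold act
  rw [LinearMap.smul_comp, LinearMap.lTensor_smul]
  simp only [LinearMap.comp_smul, LinearMap.smul_comp]

lemma act_sum {ι : Type*} (s : Finset ι) (f : ι → Module.Dual k H) :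
    act (∑ i ∈ s, f i) = ∑ i ∈ s, act (k := k) (f i) := by
  classical
  induction s using Finset.induction with
  | empty => simp only [Finset.sum_empty]; ext x; simp [act]
  | insert a s' hni ih => rw [Finset.sum_insert hni, Finset.sum_insert hni, act_add, ih]

/-- the bilinear map `(v, y) ↦ g y • (v * d)` -/
noncomputable def smulMulBi (g : Module.Dual k H) (d : H) : H →ₗ[k] H →ₗ[k] H :=
  LinearMap.mk₂ k (fun v y => g y • (v * d))
    (fun v v' y => by simp only [add_mul, smul_add])
    (fun c v y => by simp only [smul_mul_assoc]; rw [smul_comm])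
    (fun v y y' => by simp only [map_add, add_smul])
    (fun c v y => by simp only [map_smul, smul_assoc])

@[simp] lemma smulMulBi_apply (g : Module.Dual k H) (d v y : H) :
    smulMulBi g d v y = g y • (v * d) := rfl

end Act

section BasisHelpers

variable {ι : Type*} [Fintype ι] [DecidableEq ι] (b : Module.Basis ι k H)

lemma coord_collapse {V : Type*} [AddCommGroup V] [Module k V] (F : H →ₗ[k] V) (x : H) :
    ∑ i, b.coord i x • F (b i) = F x := by
  calc ∑ i, b.coord i x • F (b i) = F (∑ i, b.coord i x • b i) := by
        rw [map_sum]; simp only [map_smul]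
    _ = F x := by
        congr 1
        simp only [Module.Basis.coord_apply]
        exact b.sum_repr x

/-- expansion of a functional through the basis -/
lemma dual_expand (g : Module.Dual k H) (A : H →ₗ[k] H) :
    g ∘ₗ A = ∑ l, g (A (b l)) • b.coord l := by
  refine LinearMap.ext fun y => ?_
  simp only [comp_apply, LinearMap.sum_apply, LinearMap.smul_apply, smul_eq_mul]
  calc g (A y) = ∑ l, b.coord l y • g (A (b l)) := (coord_collapse b (g ∘ₗ A) y).symm
    _ = _ := by refine Finset.sum_congr rfl fun l _ => mul_comm _ _

end BasisHelpers

section TensorIdentities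

/-- `Σ h₁ ⊗ S(h₂)h₃ = h ⊗ 1` -/
lemma L3Y {ι' κ' : Type*} {h : H} (rh : Coalgebra.Repr k h ι') (rhu : ∀ u : ι', Coalgebra.Repr k (rh.left u) κ') :
    ∑ u ∈ rh.index, ∑ p ∈ (rhu u).index,
      (rhu u).left p ⊗ₜ[k] (antipode (R := k) ((rhu u).right p) * rh.right u) = h ⊗ₜ[k] 1 := by
  have key := Coalgebra.sum_tmul_tmul_eq (R := k) rh rhu (fun u => ℛ k (rh.right u))
  have key2 := congrArg (LinearMap.lTensor H
    (TensorProduct.lift ((LinearMap.mul k H).compl₁₂ (antipode (R := k)) LinearMap.id))) key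
  simp only [map_sum, LinearMap.lTensor_tmul, TensorProduct.lift.tmul,
    LinearMap.compl₁₂_apply, LinearMap.id_coe, id_eq, LinearMap.mul_apply'] at key2
  rw [key2]
  have : ∀ u ∈ rh.index, ∑ q ∈ (ℛ k (rh.right u)).index,
      rh.left u ⊗ₜ[k] (antipode (R := k) ((ℛ k (rh.right u)).left q) * (ℛ k (rh.right u)).right q)
      = Coalgebra.counit (R := k) (rh.right u) • (rh.left u ⊗ₜ[k] (1 : H)) := by
    intro u _
    rw [← TensorProduct.tmul_sum, HopfAlgebra.sum_antipode_mul_eq_smul (R := k) (ℛ k (rh.right u))]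
    rw [TensorProduct.tmul_smul]
  rw [Finset.sum_congr rfl this]
  simp only [TensorProduct.smul_tmul']
  rw [← TensorProduct.sum_tmul, counit_right_collapse rh]

/-- `Σ w₁ ⊗ w₂S(w₃) = w ⊗ 1` -/
lemma L3Z {ι' κ' : Type*} {w : H} (r : Coalgebra.Repr k w ι') (rt : ∀ t : ι', Coalgebra.Repr k (r.left t) κ') :
    ∑ t ∈ r.index, ∑ s ∈ (rt t).index,
      (rt t).left s ⊗ₜ[k] ((rt t).right s * antipode (R := k) (r.right t)) = w ⊗ₜ[k] 1 := by
  have key := Coalgebra.sum_tmul_tmul_eq (R := k) r rt (fun t => ℛ k (r.right t))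
  have key2 := congrArg (LinearMap.lTensor H
    (TensorProduct.lift ((LinearMap.mul k H).compl₁₂ LinearMap.id (antipode (R := k))))) key
  simp only [map_sum, LinearMap.lTensor_tmul, TensorProduct.lift.tmul,
    LinearMap.compl₁₂_apply, LinearMap.id_coe, id_eq, LinearMap.mul_apply'] at key2
  rw [key2]
  have : ∀ t ∈ r.index, ∑ q ∈ (ℛ k (r.right t)).index,
      r.left t ⊗ₜ[k] ((ℛ k (r.right t)).left q * antipode (R := k) ((ℛ k (r.right t)).right q))
      = Coalgebra.counit (R := k) (r.right t) • (r.left t ⊗ₜ[k] (1 : H)) := by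
    intro t _
    rw [← TensorProduct.tmul_sum, HopfAlgebra.sum_mul_antipode_eq_smul (R := k) (ℛ k (r.right t))]
    rw [TensorProduct.tmul_smul]
  rw [Finset.sum_congr rfl this]
  simp only [TensorProduct.smul_tmul']
  rw [← TensorProduct.sum_tmul, counit_right_collapse r]

end TensorIdentities

section MainLemmas

lemma I1G (f : Module.Dual k H) {ι' : Type*} (n h : H) (rh : Coalgebra.Repr k h ι') :
    h * act f n = ∑ u ∈ rh.index, act (f ∘ₗ LinearMap.mulRight k (rh.right u)) (rh.left u * n) := by
  set rn := ℛ k n with hrn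
  set rhu : ∀ u : ι', Coalgebra.Repr k (rh.left u) (H × H) := fun u => ℛ k (rh.left u) with hrhu
  have step1 : ∀ u ∈ rh.index,
      act (f ∘ₗ LinearMap.mulRight k (rh.right u)) (rh.left u * n)
      = ∑ p ∈ (rhu u).index, ∑ t ∈ rn.index,
          f (antipode (R := k) (rn.right t) *
            (antipode (R := k) ((rhu u).right p) * rh.right u)) •
            ((rhu u).left p * rn.left t) := by
    intro u _
    rw [act_repr _ ((rhu u).prodRepr rn), Coalgebra.Repr.prodRepr, Finset.sum_product]
    refine Finset.sum_congr rfl fun p _ => Finset.sum_congr rfl fun t _ => ?_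
    simp only [comp_apply, LinearMap.mulRight_apply]
    rw [antipode_mul', mul_assoc]
  rw [Finset.sum_congr rfl step1]
  have swap : ∑ u ∈ rh.index, ∑ p ∈ (rhu u).index, ∑ t ∈ rn.index,
      f (antipode (R := k) (rn.right t) *
        (antipode (R := k) ((rhu u).right p) * rh.right u)) •
        ((rhu u).left p * rn.left t)
      = ∑ t ∈ rn.index, ∑ u ∈ rh.index, ∑ p ∈ (rhu u).index,
          f (antipode (R := k) (rn.right t) *
            (antipode (R := k) ((rhu u).right p) * rh.right u)) •
            ((rhu u).left p * rn.left t) := by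
    rw [Finset.sum_comm]
    exact Finset.sum_congr rfl fun t _ => Finset.sum_comm.symm
  rw [swap]
  have step2 : ∀ t ∈ rn.index,
      ∑ u ∈ rh.index, ∑ p ∈ (rhu u).index,
        f (antipode (R := k) (rn.right t) *
          (antipode (R := k) ((rhu u).right p) * rh.right u)) •
          ((rhu u).left p * rn.left t)
      = f (antipode (R := k) (rn.right t)) • (h * rn.left t) := by
    intro t _
    have key := congrArg (TensorProduct.lift
      (smulMulBi (f ∘ₗ LinearMap.mulLeft k (antipode (R := k) (rn.right t))) (rn.left t)))
      (L3Y rh rhu)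
    simp only [map_sum, TensorProduct.lift.tmul, smulMulBi_apply, comp_apply,
      LinearMap.mulLeft_apply, mul_one] at key
    exact key
  rw [Finset.sum_congr rfl step2]
  conv_lhs => rw [act_repr f rn]
  rw [Finset.mul_sum]
  exact Finset.sum_congr rfl fun t _ => mul_smul_comm _ _ _

end MainLemmas

section MainLemmas2

lemma counit_left_collapse_map {V : Type*} [AddCommGroup V] [Module k V]
    {ι' : Type*} {h : H} (r : Coalgebra.Repr k h ι') (g : H →ₗ[k] V) :
    ∑ u ∈ r.index, Coalgebra.counit (R := k) (r.left u) • g (r.right u) = g h := by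
  conv_rhs => rw [← counit_left_collapse r]
  rw [map_sum]
  simp only [map_smul]

lemma sum_mul_antipode_collapse_map {V : Type*} [AddCommGroup V] [Module k V]
    {ι' : Type*} {h : H} (r : Coalgebra.Repr k h ι') (g : H →ₗ[k] V) :
    ∑ u ∈ r.index, g (r.left u * antipode (R := k) (r.right u))
      = Coalgebra.counit (R := k) h • g 1 := by
  rw [← map_sum, HopfAlgebra.sum_mul_antipode_eq_smul r, map_smul]

lemma coact {Λ : H} (hΛ : ∀ g : H, g * Λ = Coalgebra.counit (R := k) g • Λ)
    (f : Module.Dual k H) (h : H) :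
    h * act f Λ = act (f ∘ₗ LinearMap.mulRight k h) Λ := by
  set rh := ℛ k h with hrh
  set rΛ := ℛ k Λ with hrΛ
  rw [I1G f Λ h rh]
  have e1 : ∀ u ∈ rh.index, act (f ∘ₗ LinearMap.mulRight k (rh.right u)) (rh.left u * Λ)
      = ∑ t ∈ rΛ.index, Coalgebra.counit (R := k) (rh.left u) •
          (f (antipode (R := k) (rΛ.right t) * rh.right u) • rΛ.left t) := by
    intro u _
    rw [hΛ, map_smul, act_repr _ rΛ, Finset.smul_sum]
    refine Finset.sum_congr rfl fun t _ => ?_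
    simp only [comp_apply, LinearMap.mulRight_apply]
  rw [Finset.sum_congr rfl e1, Finset.sum_comm, act_repr _ rΛ]
  refine Finset.sum_congr rfl fun t _ => ?_
  have := counit_left_collapse_map rh
    (smulMulBi (f ∘ₗ LinearMap.mulLeft k (antipode (R := k) (rΛ.right t))) 1 (rΛ.left t))
  simp only [smulMulBi_apply, comp_apply, LinearMap.mulLeft_apply, LinearMap.mk₂_apply,
    mul_one, LinearMap.mulRight_apply] at this ⊢
  exact this

variable {ι : Type*} [Fintype ι] [DecidableEq ι]

noncomputable def Pmap (b : Module.Basis ι k H) : H →ₗ[k] H :=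
  ∑ i, act (b.coord i ∘ₗ antipode (R := k)) ∘ₗ LinearMap.mulLeft k (b i)

lemma Pmap_apply (b : Module.Basis ι k H) (m : H) :
    Pmap b m = ∑ i, act (b.coord i ∘ₗ antipode (R := k)) (b i * m) := by
  simp only [Pmap, LinearMap.sum_apply, comp_apply, LinearMap.mulLeft_apply]

end MainLemmas2

section C1

variable {ι : Type*} [Fintype ι] [DecidableEq ι]

lemma param_rewrite (b : Module.Basis ι k H) (g : Module.Dual k H) (c : H) :
    (g ∘ₗ antipode (R := k)) ∘ₗ LinearMap.mulRight k c
      = ∑ l, g (antipode (R := k) c * b l) • (b.coord l ∘ₗ antipode (R := k)) := by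
  have expand := dual_expand b g (LinearMap.mulLeft k (antipode (R := k) c))
  refine LinearMap.ext fun y => ?_
  have := DFunLike.congr_fun expand (antipode (R := k) y)
  simp only [comp_apply, LinearMap.mulRight_apply, LinearMap.mulLeft_apply,
    LinearMap.sum_apply, LinearMap.smul_apply, smul_eq_mul] at this ⊢
  rw [antipode_mul']
  exact this

lemma Pmap_integral (b : Module.Basis ι k H) (m h : H) :
    h * Pmap b m = Coalgebra.counit (R := k) h • Pmap b m := by
  set rh := ℛ k h with hrh
  rw [Pmap_apply, Finset.mul_sum]
  have step1 : ∀ i : ι, h * act (b.coord i ∘ₗ antipode (R := k)) (b i * m)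
      = ∑ u ∈ rh.index, ∑ l,
          b.coord i (antipode (R := k) (rh.right u) * b l) •
            act (b.coord l ∘ₗ antipode (R := k)) (rh.left u * (b i * m)) := by
    intro i
    rw [I1G _ _ h rh]
    refine Finset.sum_congr rfl fun u _ => ?_
    rw [param_rewrite b (b.coord i) (rh.right u), act_sum]
    rw [LinearMap.sum_apply]
    refine Finset.sum_congr rfl fun l _ => ?_
    rw [act_smul]
    rfl
  rw [Finset.sum_congr rfl (fun i _ => step1 i)]
  rw [Finset.sum_comm]
  have step2 : ∀ u ∈ rh.index, ∑ i : ι, ∑ l,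
      b.coord i (antipode (R := k) (rh.right u) * b l) •
        act (b.coord l ∘ₗ antipode (R := k)) (rh.left u * (b i * m))
      = ∑ l, act (b.coord l ∘ₗ antipode (R := k))
          ((rh.left u * antipode (R := k) (rh.right u)) * (b l * m)) := by
    intro u _
    rw [Finset.sum_comm]
    refine Finset.sum_congr rfl fun l _ => ?_
    have coll := coord_collapse b
      (act (b.coord l ∘ₗ antipode (R := k)) ∘ₗ LinearMap.mulLeft k (rh.left u)
        ∘ₗ LinearMap.mulRight k m)
      (antipode (R := k) (rh.right u) * b l)
    simp only [comp_apply, LinearMap.mulLeft_apply, LinearMap.mulRight_apply] at coll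
    rw [coll]
    simp only [mul_assoc]
  rw [Finset.sum_congr rfl step2, Finset.sum_comm]
  rw [Finset.smul_sum]
  refine Finset.sum_congr rfl fun l _ => ?_
  have coll2 := sum_mul_antipode_collapse_map rh
    (act (b.coord l ∘ₗ antipode (R := k)) ∘ₗ LinearMap.mulRight k (b l * m))
  simp only [comp_apply, LinearMap.mulRight_apply, one_mul] at coll2
  exact coll2

end C1

section KeyLemma

variable {ι : Type*} [Fintype ι] [DecidableEq ι]

lemma Pmap_key (b : Module.Basis ι k H) {Λ : H}
    (hΛ : ∀ g : H, g * Λ = Coalgebra.counit (R := k) g • Λ)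
    (f : Module.Dual k H) (x : H) :
    Pmap b (x * act f Λ) = f x • Λ := by
  set rΛ := ℛ k Λ with hrΛ
  set rΛt : ∀ t : H × H, Coalgebra.Repr k (rΛ.left t) (H × H) := fun t => ℛ k (rΛ.left t) with hrΛt
  rw [Pmap_apply]
  have step1 : ∀ i : ι, act (b.coord i ∘ₗ antipode (R := k)) (b i * (x * act f Λ))
      = ∑ t ∈ rΛ.index, ∑ s ∈ (rΛt t).index,
          (f (antipode (R := k) (rΛ.right t) * (b i * x)) *
            b.coord i (antipode (R := k) (antipode (R := k) ((rΛt t).right s)))) •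
            (rΛt t).left s := by
    intro i
    rw [← mul_assoc, coact hΛ f (b i * x), act_repr _ rΛ, map_sum]
    refine Finset.sum_congr rfl fun t _ => ?_
    rw [map_smul, act_repr _ (rΛt t), Finset.smul_sum]
    refine Finset.sum_congr rfl fun s _ => ?_
    simp only [comp_apply, LinearMap.mulRight_apply, smul_smul]
  rw [Finset.sum_congr rfl fun i _ => step1 i, Finset.sum_comm]
  have step2 : ∀ t ∈ rΛ.index, ∑ i : ι, ∑ s ∈ (rΛt t).index,
      (f (antipode (R := k) (rΛ.right t) * (b i * x)) *
        b.coord i (antipode (R := k) (antipode (R := k) ((rΛt t).right s)))) •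
        (rΛt t).left s
      = ∑ s ∈ (rΛt t).index,
          f (antipode (R := k) (antipode (R := k) ((rΛt t).right s) * rΛ.right t) * x) •
            (rΛt t).left s := by
    intro t _
    rw [Finset.sum_comm]
    refine Finset.sum_congr rfl fun s _ => ?_
    have coll := coord_collapse b
      (f ∘ₗ LinearMap.mulLeft k (antipode (R := k) (rΛ.right t)) ∘ₗ LinearMap.mulRight k x)
      (antipode (R := k) (antipode (R := k) ((rΛt t).right s)))
    simp only [comp_apply, LinearMap.mulLeft_apply, LinearMap.mulRight_apply] at coll
    rw [← Finset.sum_smul]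
    have : ∀ i : ι,
        f (antipode (R := k) (rΛ.right t) * (b i * x)) *
          b.coord i (antipode (R := k) (antipode (R := k) ((rΛt t).right s)))
        = b.coord i (antipode (R := k) (antipode (R := k) ((rΛt t).right s))) •
            f (antipode (R := k) (rΛ.right t) * (b i * x)) := by
      intro i; rw [smul_eq_mul, mul_comm]
    rw [Finset.sum_congr rfl fun i _ => this i, coll]
    congr 2
    rw [antipode_mul', ← mul_assoc]
  rw [Finset.sum_congr rfl step2]
  have key := congrArg (TensorProduct.lift
    (smulMulBi (f ∘ₗ LinearMap.mulRight k x ∘ₗ antipode (R := k)) 1)) (L3Y rΛ rΛt)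
  simp only [map_sum, TensorProduct.lift.tmul, smulMulBi_apply, comp_apply,
    LinearMap.mulRight_apply, LinearMap.mulLeft_apply, mul_one, antipode_one, one_mul] at key
  exact key

end KeyLemma

section C2

variable {ι : Type*} [Fintype ι] [DecidableEq ι]

lemma coord_mul_collapse (b : Module.Basis ι k H) (l : ι) (X Y : H) :
    ∑ i : ι, ∑ j : ι, b.coord l (b i * b j) * (b.coord i X * b.coord j Y)
      = b.coord l (X * Y) := by
  have inner : ∀ j : ι, ∑ i : ι, b.coord i X • (b.coord l ∘ₗ LinearMap.mulRight k (b j)) (b i)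
      = b.coord l (X * b j) := by
    intro j
    rw [coord_collapse b (b.coord l ∘ₗ LinearMap.mulRight k (b j)) X]
    simp only [comp_apply, LinearMap.mulRight_apply]
  have outer := coord_collapse b (b.coord l ∘ₗ LinearMap.mulLeft k X) Y
  simp only [comp_apply, LinearMap.mulLeft_apply] at outer
  calc ∑ i : ι, ∑ j : ι, b.coord l (b i * b j) * (b.coord i X * b.coord j Y)
      = ∑ j : ι, b.coord j Y • ∑ i : ι, b.coord i X •
          (b.coord l ∘ₗ LinearMap.mulRight k (b j)) (b i) := by
        rw [Finset.sum_comm]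
        refine Finset.sum_congr rfl fun j _ => ?_
        rw [Finset.smul_sum]
        refine Finset.sum_congr rfl fun i _ => ?_
        simp only [comp_apply, LinearMap.mulRight_apply, smul_eq_mul]
        ring
    _ = ∑ j : ι, b.coord j Y • b.coord l (X * b j) := by
        refine Finset.sum_congr rfl fun j _ => by rw [inner j]
    _ = b.coord l (X * Y) := by
        rw [← outer]

lemma C2 (b : Module.Basis ι k H) (m : H) :
    ∑ j : ι, act (b.coord j) (Pmap b (b j * m)) = m := by
  have expand : ∀ j : ι, act (b.coord j) (Pmap b (b j * m))
      = ∑ i : ι, ∑ l : ι, b.coord l (b i * b j) •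
          act (b.coord j) (act (b.coord i ∘ₗ antipode (R := k)) (b l * m)) := by
    intro j
    rw [Pmap_apply, map_sum]
    refine Finset.sum_congr rfl fun i _ => ?_
    have assoc1 : b i * (b j * m) = (b i * b j) * m := by rw [mul_assoc]
    rw [assoc1]
    have coll := coord_collapse b
      (act (b.coord j) ∘ₗ act (b.coord i ∘ₗ antipode (R := k)) ∘ₗ LinearMap.mulRight k m)
      (b i * b j)
    simp only [comp_apply, LinearMap.mulRight_apply] at coll
    rw [← coll]
  rw [Finset.sum_congr rfl fun j _ => expand j]
  -- now reorganize to Σ_l Σ_i Σ_j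
  rw [Finset.sum_comm]
  have rearr : ∀ i : ι, ∑ j : ι, ∑ l : ι, b.coord l (b i * b j) •
      act (b.coord j) (act (b.coord i ∘ₗ antipode (R := k)) (b l * m))
      = ∑ l : ι, ∑ j : ι, b.coord l (b i * b j) •
          act (b.coord j) (act (b.coord i ∘ₗ antipode (R := k)) (b l * m)) :=
    fun i => Finset.sum_comm
  rw [Finset.sum_congr rfl fun i _ => rearr i, Finset.sum_comm]
  -- fix l; expand the two acts with Reprs
  have main : ∀ l : ι, ∑ i : ι, ∑ j : ι, b.coord l (b i * b j) •
      act (b.coord j) (act (b.coord i ∘ₗ antipode (R := k)) (b l * m))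
      = b.coord l 1 • (b l * m) := by
    intro l
    set r := ℛ k (b l * m) with hr
    set rt : ∀ t : H × H, Coalgebra.Repr k (r.left t) (H × H) := fun t => ℛ k (r.left t) with hrt
    have e1 : ∀ i j : ι, act (b.coord j) (act (b.coord i ∘ₗ antipode (R := k)) (b l * m))
        = ∑ t ∈ r.index, ∑ s ∈ (rt t).index,
            (b.coord i (antipode (R := k) (antipode (R := k) (r.right t))) *
              b.coord j (antipode (R := k) ((rt t).right s))) • (rt t).left s := by
      intro i j
      rw [act_repr _ r, map_sum]
      refine Finset.sum_congr rfl fun t _ => ?_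
      rw [map_smul, act_repr _ (rt t), Finset.smul_sum]
      refine Finset.sum_congr rfl fun s _ => ?_
      simp only [comp_apply, smul_smul]
    have e2 : ∑ i : ι, ∑ j : ι, b.coord l (b i * b j) •
        act (b.coord j) (act (b.coord i ∘ₗ antipode (R := k)) (b l * m))
        = ∑ t ∈ r.index, ∑ s ∈ (rt t).index,
            b.coord l (antipode (R := k) (antipode (R := k) (r.right t)) *
              antipode (R := k) ((rt t).right s)) • (rt t).left s := by
      calc ∑ i : ι, ∑ j : ι, b.coord l (b i * b j) •
            act (b.coord j) (act (b.coord i ∘ₗ antipode (R := k)) (b l * m))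
          = ∑ i : ι, ∑ j : ι, ∑ t ∈ r.index, ∑ s ∈ (rt t).index,
              (b.coord l (b i * b j) *
                (b.coord i (antipode (R := k) (antipode (R := k) (r.right t))) *
                  b.coord j (antipode (R := k) ((rt t).right s)))) • (rt t).left s := by
            refine Finset.sum_congr rfl fun i _ => Finset.sum_congr rfl fun j _ => ?_
            rw [e1 i j, Finset.smul_sum]
            refine Finset.sum_congr rfl fun t _ => ?_
            rw [Finset.smul_sum]
            refine Finset.sum_congr rfl fun s _ => ?_
            rw [smul_smul]
        _ = ∑ i : ι, ∑ t ∈ r.index, ∑ j : ι, ∑ s ∈ (rt t).index,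
              (b.coord l (b i * b j) *
                (b.coord i (antipode (R := k) (antipode (R := k) (r.right t))) *
                  b.coord j (antipode (R := k) ((rt t).right s)))) • (rt t).left s :=
            Finset.sum_congr rfl fun i _ => Finset.sum_comm
        _ = ∑ t ∈ r.index, ∑ i : ι, ∑ j : ι, ∑ s ∈ (rt t).index,
              (b.coord l (b i * b j) *
                (b.coord i (antipode (R := k) (antipode (R := k) (r.right t))) *
                  b.coord j (antipode (R := k) ((rt t).right s)))) • (rt t).left s :=
            Finset.sum_comm
        _ = ∑ t ∈ r.index, ∑ i : ι, ∑ s ∈ (rt t).index, ∑ j : ι,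
              (b.coord l (b i * b j) *
                (b.coord i (antipode (R := k) (antipode (R := k) (r.right t))) *
                  b.coord j (antipode (R := k) ((rt t).right s)))) • (rt t).left s :=
            Finset.sum_congr rfl fun t _ => Finset.sum_congr rfl fun i _ => Finset.sum_comm
        _ = ∑ t ∈ r.index, ∑ s ∈ (rt t).index, ∑ i : ι, ∑ j : ι,
              (b.coord l (b i * b j) *
                (b.coord i (antipode (R := k) (antipode (R := k) (r.right t))) *
                  b.coord j (antipode (R := k) ((rt t).right s)))) • (rt t).left s :=
            Finset.sum_congr rfl fun t _ => Finset.sum_comm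
        _ = ∑ t ∈ r.index, ∑ s ∈ (rt t).index,
              b.coord l (antipode (R := k) (antipode (R := k) (r.right t)) *
                antipode (R := k) ((rt t).right s)) • (rt t).left s := by
            refine Finset.sum_congr rfl fun t _ => Finset.sum_congr rfl fun s _ => ?_
            rw [show ∀ (c : ι → ι → k) (v : H), (∑ i : ι, ∑ j : ι, c i j • v)
                = (∑ i : ι, ∑ j : ι, c i j) • v from fun c v => by
              rw [Finset.sum_smul]
              exact Finset.sum_congr rfl fun i _ => by rw [Finset.sum_smul]]
            rw [coord_mul_collapse]
    rw [e2]
    have e3 : ∀ t ∈ r.index, ∀ s ∈ (rt t).index,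
        b.coord l (antipode (R := k) (antipode (R := k) (r.right t)) *
          antipode (R := k) ((rt t).right s))
        = b.coord l (antipode (R := k) ((rt t).right s * antipode (R := k) (r.right t))) := by
      intro t _ s _
      rw [antipode_mul']
    rw [Finset.sum_congr rfl fun t ht => Finset.sum_congr rfl fun s hs => by
      rw [e3 t ht s hs]]
    have key := congrArg (TensorProduct.lift
      (smulMulBi (b.coord l ∘ₗ antipode (R := k)) 1)) (L3Z r rt)
    simp only [map_sum, TensorProduct.lift.tmul, smulMulBi_apply, comp_apply,
      mul_one, antipode_one] at key
    exact key
  rw [Finset.sum_congr rfl fun l _ => main l]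
  have fin := coord_collapse b (LinearMap.mulRight k m) (1 : H)
  simp only [LinearMap.mulRight_apply, one_mul] at fin
  rw [fin]

end C2

end LarsonSweedlerProof

open LarsonSweedlerProof in
example : True := trivial

open LarsonSweedlerProof

universe u v

/-- The space of left integrals of a Hopf algebra `H` over `k`:
the `k`-subspace `{ Λ ∈ H : hΛ = ε(h)Λ for all h ∈ H }`. -/
def leftIntegrals (k : Type u) [Field k] (H : Type v) [Ring H] [HopfAlgebra k H] :
    Submodule k H where
  carrier := {Λ : H | ∀ h : H, h * Λ = CoalgebraStruct.counit (R := k) h • Λ}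
  add_mem' := by
    intro a b ha hb h
    rw [mul_add, ha h, hb h, smul_add]
  zero_mem' := by
    intro h
    rw [mul_zero, smul_zero]
  smul_mem' := by
    intro c a ha h
    rw [mul_smul_comm, ha h, smul_comm]

/-- Let `H` be a finite-dimensional Hopf algebra over a field `k`.
Then the space of left integrals of `H` is one-dimensional. -/
theorem finrank_leftIntegrals_eq_one
    (k : Type u) [Field k] (H : Type v) [Ring H] [HopfAlgebra k H] [FiniteDimensional k H] :
    Module.finrank k (leftIntegrals k H) = 1 := by
  classical
  have hnt : Nontrivial H := by
    refine ⟨1, 0, fun h01 => ?_⟩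
    have := congrArg (Coalgebra.counit (R := k)) h01
    rw [Bialgebra.counit_one, map_zero] at this
    exact one_ne_zero this
  let b : Module.Basis (Fin (Module.finrank k H)) k H := Module.finBasis k H
  let A : H →ₗ[k] (H →ₗ[k] leftIntegrals k H) :=
    { toFun := fun m => LinearMap.codRestrict (leftIntegrals k H)
        (Pmap b ∘ₗ LinearMap.mulRight k m) (fun x h => by
          simpa using Pmap_integral b (x * m) h)
      map_add' := fun m m' => by
        ext x
        show Pmap b (x * (m + m')) = Pmap b (x * m) + Pmap b (x * m')
        simp only [LinearMap.codRestrict_apply, comp_apply, LinearMap.mulRight_apply,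
          LinearMap.add_apply, Submodule.coe_add, mul_add, map_add]
      map_smul' := fun c m => by
        ext x
        show Pmap b (x * (c • m)) = c • Pmap b (x * m)
        simp only [LinearMap.codRestrict_apply, comp_apply, LinearMap.mulRight_apply,
          RingHom.id_apply, LinearMap.smul_apply, SetLike.val_smul, mul_smul_comm, map_smul] }
  let B : (H →ₗ[k] leftIntegrals k H) →ₗ[k] H :=
    ∑ j, act (b.coord j) ∘ₗ (leftIntegrals k H).subtype ∘ₗ LinearMap.applyₗ (b j)
  have hBapp : ∀ φ : H →ₗ[k] leftIntegrals k H,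
      B φ = ∑ j, act (b.coord j) (φ (b j) : H) := by
    intro φ
    simp only [B, LinearMap.sum_apply, comp_apply, LinearMap.applyₗ_apply_apply,
      Submodule.coe_subtype]
  have hBA : ∀ m : H, B (A m) = m := by
    intro m
    rw [hBapp]
    have : ∀ j, ((A m) (b j) : H) = Pmap b (b j * m) := fun j => rfl
    rw [Finset.sum_congr rfl fun j _ => by rw [this j]]
    exact C2 b m
  have hAB : ∀ φ : H →ₗ[k] leftIntegrals k H, A (B φ) = φ := by
    intro φ
    ext x
    have : ((A (B φ)) x : H) = Pmap b (x * B φ) := rfl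
    rw [this, hBapp, Finset.mul_sum, map_sum]
    have step : ∀ j, Pmap b (x * act (b.coord j) (φ (b j) : H)) = b.coord j x • (φ (b j) : H) :=
      fun j => Pmap_key b (fun g => (φ (b j)).2 g) (b.coord j) x
    rw [Finset.sum_congr rfl fun j _ => step j]
    have fin := coord_collapse b ((leftIntegrals k H).subtype ∘ₗ φ) x
    simp only [comp_apply, Submodule.coe_subtype] at fin
    exact fin
  let e : H ≃ₗ[k] (H →ₗ[k] leftIntegrals k H) :=
    LinearEquiv.ofLinear A B (LinearMap.ext hAB) (LinearMap.ext hBA)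
  have hrank : Module.finrank k H = Module.finrank k (H →ₗ[k] leftIntegrals k H) :=
    e.finrank_eq
  rw [Module.finrank_linearMap] at hrank
  have hpos : 0 < Module.finrank k H := Module.finrank_pos
  nlinarith [hrank, hpos]
end

section
/- Let H be a finite-dimensional Hopf algebra over a field k with antipode S, and let Λ ∈ H be a two-sided integral, i.e. hΛ = ε(h)Λ = Λh for all h ∈ H. Then S(Λ) = Λ. -/
universe u v

section integralAux
open Coalgebra TensorProduct HopfAlgebra
variable {k : Type u} [CommRing k] {H : Type v} [Ring H] [HopfAlgebra k H]

lemma sum_smul_counit_right (h : H) (r : Coalgebra.Repr k h (H × H)) :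
    ∑ j ∈ r.index, counit (R := k) (r.right j) • r.left j = h := by
  have := congrArg (TensorProduct.rid k H) (sum_tmul_counit_eq r)
  rw [map_sum] at this
  simp only [TensorProduct.rid_tmul] at this
  simpa using this

lemma sum_smul_counit_left (h : H) (r : Coalgebra.Repr k h (H × H)) :
    ∑ j ∈ r.index, counit (R := k) (r.left j) • r.right j = h := by
  have := congrArg (TensorProduct.lid k H) (sum_counit_tmul_eq r)
  rw [map_sum] at this
  simp only [TensorProduct.lid_tmul] at this
  simpa using this

lemma lemA (Λ : H) (hleft : ∀ h : H, h * Λ = counit (R := k) h • Λ) (h : H) :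
    (antipode (R := k) h ⊗ₜ[k] (1:H)) * comul (R := k) Λ
      = ((1:H) ⊗ₜ[k] h) * comul (R := k) Λ := by
  set dΛ : H ⊗[k] H := comul (R := k) Λ with hdΛ
  obtain ⟨rh⟩ : Nonempty (Coalgebra.Repr k h (H × H)) := ⟨ℛ k h⟩
  have h1 : ∑ j ∈ rh.index, counit (R := k) (rh.right j) • (antipode (R := k) (rh.left j) ⊗ₜ[k] (1:H))
      = antipode (R := k) h ⊗ₜ[k] (1:H) := by
    simp_rw [TensorProduct.smul_tmul', ← TensorProduct.sum_tmul, ← map_smul, ← map_sum,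
      sum_smul_counit_right (k := k) h rh]
  have h2 : ∀ j, counit (R := k) (rh.right j) • dΛ = comul (R := k) (rh.right j) * dΛ := by
    intro j
    rw [hdΛ, ← Bialgebra.comul_mul, hleft, map_smul]
  have h3 : ∑ j ∈ rh.index, (antipode (R := k) (rh.left j) ⊗ₜ[k] (1:H)) * comul (R := k) (rh.right j)
      = (1:H) ⊗ₜ[k] h := by
    -- use coassociativity
    set rc : (j : rh.ι) → Coalgebra.Repr k (rh.left j) (H × H) := fun j => ℛ k (rh.left j) with hrc
    set rd : (j : rh.ι) → Coalgebra.Repr k (rh.right j) (H × H) := fun j => ℛ k (rh.right j) with hrd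
    have coas := sum_tmul_tmul_eq rh rc rd
    -- apply the map x ⊗ (y ⊗ z) ↦ (S x * y) ⊗ z
    set Ξ : H ⊗[k] (H ⊗[k] H) →ₗ[k] H ⊗[k] H :=
      ((LinearMap.mul' k H ∘ₗ (antipode (R := k)).rTensor H).rTensor H)
        ∘ₗ (TensorProduct.assoc k H H H).symm.toLinearMap with hΞ
    have Ξtmul : ∀ x y z : H, Ξ (x ⊗ₜ[k] (y ⊗ₜ[k] z)) = (antipode (R := k) x * y) ⊗ₜ[k] z := by
      intro x y z
      simp [hΞ, TensorProduct.assoc_symm_tmul]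
    have := congrArg Ξ coas
    rw [map_sum, map_sum] at this
    simp_rw [map_sum, Ξtmul] at this
    -- LHS of `this` : Σ_j Σ_m (S (rc j).left m * (rc j).right m) ⊗ rh.right j
    -- collapse with the antipode axiom
    calc ∑ j ∈ rh.index, (antipode (R := k) (rh.left j) ⊗ₜ[k] (1:H)) * comul (R := k) (rh.right j)
        = ∑ j ∈ rh.index, ∑ m ∈ (rd j).index,
            (antipode (R := k) (rh.left j) * (rd j).left m) ⊗ₜ[k] (rd j).right m := by
          refine Finset.sum_congr rfl fun j _ => ?_
          rw [← (rd j).eq, Finset.mul_sum]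
          simp [Algebra.TensorProduct.tmul_mul_tmul]
      _ = ∑ j ∈ rh.index, ∑ m ∈ (rc j).index,
            (antipode (R := k) ((rc j).left m) * (rc j).right m) ⊗ₜ[k] rh.right j := this.symm
      _ = ∑ j ∈ rh.index, (counit (R := k) (rh.left j) • (1:H)) ⊗ₜ[k] rh.right j := by
          refine Finset.sum_congr rfl fun j _ => ?_
          rw [← TensorProduct.sum_tmul, sum_antipode_mul_eq_smul (rc j)]
      _ = (1:H) ⊗ₜ[k] h := by
          simp_rw [TensorProduct.smul_tmul, ← TensorProduct.tmul_sum]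
          rw [sum_smul_counit_left (k := k) h rh]
  calc (antipode (R := k) h ⊗ₜ[k] (1:H)) * dΛ
      = ∑ j ∈ rh.index, (counit (R := k) (rh.right j) • (antipode (R := k) (rh.left j) ⊗ₜ[k] (1:H))) * dΛ := by
        rw [← h1, Finset.sum_mul]
    _ = ∑ j ∈ rh.index, (antipode (R := k) (rh.left j) ⊗ₜ[k] (1:H)) * (counit (R := k) (rh.right j) • dΛ) := by
        simp [smul_mul_assoc, mul_smul_comm]
    _ = ∑ j ∈ rh.index, (antipode (R := k) (rh.left j) ⊗ₜ[k] (1:H)) * (comul (R := k) (rh.right j) * dΛ) := by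
        simp_rw [h2]
    _ = (∑ j ∈ rh.index, (antipode (R := k) (rh.left j) ⊗ₜ[k] (1:H)) * comul (R := k) (rh.right j)) * dΛ := by
        rw [Finset.sum_mul]; simp_rw [mul_assoc]
    _ = ((1:H) ⊗ₜ[k] h) * dΛ := by rw [h3]



/-- The map `x ↦ Σ f(x₂) • x₁`. -/
noncomputable def gmap (f : H →ₗ[k] k) : H →ₗ[k] H :=
  (TensorProduct.rid k H).toLinearMap ∘ₗ LinearMap.lTensor H f ∘ₗ comul

lemma gmap_apply (f : H →ₗ[k] k) (x : H) (r : Coalgebra.Repr k x (H × H)) :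
    gmap f x = ∑ i ∈ r.index, f (r.right i) • r.left i := by
  simp only [gmap, LinearMap.comp_apply, ← r.eq, map_sum, LinearMap.lTensor_tmul,
    LinearEquiv.coe_coe, TensorProduct.rid_tmul]

lemma sum_smul_counit_left' (h : H) (r : Coalgebra.Repr k h (H × H)) :
    ∑ j ∈ r.index, counit (R := k) (r.left j) • r.right j = h := by
  have := congrArg (TensorProduct.lid k H) (sum_counit_tmul_eq r)
  rw [map_sum] at this
  simp only [TensorProduct.lid_tmul] at this
  simpa using this

lemma counit_gmap (f : H →ₗ[k] k) (x : H) : counit (R := k) (gmap f x) = f x := by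
  obtain ⟨r⟩ : Nonempty (Coalgebra.Repr k x (H × H)) := ⟨ℛ k x⟩
  rw [gmap_apply f x r, map_sum]
  have e : ∀ i, counit (R := k) (f (r.right i) • r.left i)
      = f (counit (R := k) (r.left i) • r.right i) := by
    intro i; rw [map_smul, map_smul, smul_eq_mul, smul_eq_mul, mul_comm]
  simp_rw [e, ← map_sum, sum_smul_counit_left' x r]

lemma comul_gmap (f : H →ₗ[k] k) (x : H) (r : Coalgebra.Repr k x (H × H)) :
    comul (R := k) (gmap f x) = ∑ i ∈ r.index, r.left i ⊗ₜ[k] gmap f (r.right i) := by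
  set ra : (i : r.ι) → Coalgebra.Repr k (r.left i) (H × H) := fun i => ℛ k (r.left i) with hra
  set rb : (i : r.ι) → Coalgebra.Repr k (r.right i) (H × H) := fun i => ℛ k (r.right i) with hrb
  have coas := sum_tmul_tmul_eq r ra rb
  set Θ : H ⊗[k] (H ⊗[k] H) →ₗ[k] H ⊗[k] H :=
    (TensorProduct.rid k (H ⊗[k] H)).toLinearMap ∘ₗ LinearMap.lTensor (H ⊗[k] H) f
      ∘ₗ (TensorProduct.assoc k H H H).symm.toLinearMap with hΘ
  have Θtmul : ∀ x y z : H, Θ (x ⊗ₜ[k] (y ⊗ₜ[k] z)) = f z • (x ⊗ₜ[k] y) := by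
    intro x y z
    simp [hΘ, TensorProduct.assoc_symm_tmul]
  have key := congrArg Θ coas
  rw [map_sum, map_sum] at key
  simp_rw [map_sum, Θtmul] at key
  calc comul (R := k) (gmap f x)
      = ∑ i ∈ r.index, f (r.right i) • comul (R := k) (r.left i) := by
        rw [gmap_apply f x r, map_sum]; simp_rw [map_smul]
    _ = ∑ i ∈ r.index, ∑ m ∈ (ra i).index, f (r.right i) • ((ra i).left m ⊗ₜ[k] (ra i).right m) := by
        refine Finset.sum_congr rfl fun i _ => ?_
        rw [← (ra i).eq, Finset.smul_sum]
    _ = ∑ i ∈ r.index, ∑ m ∈ (rb i).index, f ((rb i).right m) • (r.left i ⊗ₜ[k] (rb i).left m) := key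
    _ = ∑ i ∈ r.index, r.left i ⊗ₜ[k] gmap f (r.right i) := by
        refine Finset.sum_congr rfl fun i _ => ?_
        rw [gmap_apply f (r.right i) (rb i), TensorProduct.tmul_sum]
        simp_rw [TensorProduct.tmul_smul]

lemma integral_tmul_left (Λ : H) (hright : ∀ h : H, Λ * h = counit (R := k) h • Λ)
    (r : Coalgebra.Repr k Λ (H × H)) :
    ∑ i ∈ r.index, (Λ * r.left i) ⊗ₜ[k] r.right i = Λ ⊗ₜ[k] Λ := by
  simp_rw [hright, TensorProduct.smul_tmul, ← TensorProduct.tmul_sum]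
  rw [sum_smul_counit_left (k := k) Λ r]

lemma integral_tmul_right (Λ : H) (hright : ∀ h : H, Λ * h = counit (R := k) h • Λ)
    (r : Coalgebra.Repr k Λ (H × H)) :
    ∑ i ∈ r.index, r.left i ⊗ₜ[k] (Λ * r.right i) = Λ ⊗ₜ[k] Λ := by
  simp_rw [hright, TensorProduct.tmul_smul, TensorProduct.smul_tmul' , ← TensorProduct.sum_tmul]
  rw [sum_smul_counit_right (k := k) Λ r]

lemma integral_star_eq_zero (Λ : H)
    (hleft : ∀ h : H, h * Λ = counit (R := k) h • Λ)
    (hright : ∀ h : H, Λ * h = counit (R := k) h • Λ)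
    (r : Coalgebra.Repr k Λ (H × H)) :
    ∑ i ∈ r.index, ((antipode (R := k) Λ - Λ) * r.left i) ⊗ₜ[k] r.right i = 0 := by
  have hA := lemA (k := k) Λ hleft Λ
  have expand : ∀ y : H, (y ⊗ₜ[k] (1:H)) * comul (R := k) Λ
      = ∑ i ∈ r.index, (y * r.left i) ⊗ₜ[k] r.right i := by
    intro y
    rw [← r.eq, Finset.mul_sum]
    simp [Algebra.TensorProduct.tmul_mul_tmul]
  have expand2 : ((1:H) ⊗ₜ[k] Λ) * comul (R := k) Λ
      = ∑ i ∈ r.index, r.left i ⊗ₜ[k] (Λ * r.right i) := by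
    rw [← r.eq, Finset.mul_sum]
    simp [Algebra.TensorProduct.tmul_mul_tmul]
  have key : ∑ i ∈ r.index, (antipode (R := k) Λ * r.left i) ⊗ₜ[k] r.right i
      = ∑ i ∈ r.index, (Λ * r.left i) ⊗ₜ[k] r.right i := by
    calc ∑ i ∈ r.index, (antipode (R := k) Λ * r.left i) ⊗ₜ[k] r.right i
        = (antipode (R := k) Λ ⊗ₜ[k] (1:H)) * comul (R := k) Λ := (expand _).symm
      _ = ((1:H) ⊗ₜ[k] Λ) * comul (R := k) Λ := hA
      _ = ∑ i ∈ r.index, r.left i ⊗ₜ[k] (Λ * r.right i) := expand2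
      _ = Λ ⊗ₜ[k] Λ := integral_tmul_right (k := k) Λ hright r
      _ = ∑ i ∈ r.index, (Λ * r.left i) ⊗ₜ[k] r.right i :=
          (integral_tmul_left (k := k) Λ hright r).symm
  simp_rw [sub_mul, TensorProduct.sub_tmul, Finset.sum_sub_distrib, key, sub_self]


end integralAux

open Coalgebra TensorProduct HopfAlgebra in
/-- Let `H` be a finite-dimensional Hopf algebra over a field `k` with
antipode `S`, and let `Λ ∈ H` be a two-sided integral, i.e. `hΛ = ε(h)Λ = Λh` for all
`h ∈ H`.  Then `S(Λ) = Λ`. -/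
theorem antipode_two_sided_integral_eq_self
    (k : Type u) [Field k] (H : Type v) [Ring H] [HopfAlgebra k H] [FiniteDimensional k H]
    (Λ : H)
    (hleft : ∀ h : H, h * Λ = CoalgebraStruct.counit (R := k) h • Λ)
    (hright : ∀ h : H, Λ * h = CoalgebraStruct.counit (R := k) h • Λ) :
    HopfAlgebra.antipode (R := k) Λ = Λ := by
  by_cases hΛ : Λ = 0
  · rw [hΛ, map_zero]
  -- choose a functional with f Λ = 1
  obtain ⟨φ, hφ⟩ : ∃ φ : Module.Dual k H, φ Λ ≠ 0 := by
    by_contra hcon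
    push_neg at hcon
    exact hΛ ((Module.forall_dual_apply_eq_zero_iff k Λ).mp hcon)
  set f : H →ₗ[k] k := (φ Λ)⁻¹ • φ with hf
  have hfΛ : f Λ = 1 := by
    simp [hf, inv_mul_cancel₀ hφ]
  obtain ⟨r⟩ : Nonempty (Coalgebra.Repr k Λ (H × H)) := ⟨ℛ k Λ⟩
  -- the representation of `comul w` for `w = gmap f Λ`
  set wRepr : Coalgebra.Repr k (gmap f Λ) (H × H) :=
    ⟨r.index, r.left, fun i => gmap f (r.right i), (comul_gmap f Λ r).symm⟩ with hwRepr
  have hone : ∑ i ∈ r.index, r.left i * antipode (R := k) (gmap f (r.right i)) = 1 := by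
    have := sum_mul_antipode_eq_algebraMap_counit (R := k) wRepr
    rw [hwRepr] at this
    simpa [counit_gmap, hfΛ] using this
  set z : H := antipode (R := k) Λ - Λ with hz
  have hstar := integral_star_eq_zero (k := k) Λ hleft hright r
  -- apply the map x ⊗ y ↦ x * S (gmap f y) to hstar
  set Ψ : H ⊗[k] H →ₗ[k] H :=
    LinearMap.mul' k H ∘ₗ LinearMap.lTensor H (antipode (R := k) ∘ₗ gmap f) with hΨ
  have Ψtmul : ∀ x y : H, Ψ (x ⊗ₜ[k] y) = x * antipode (R := k) (gmap f y) := by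
    intro x y; simp [hΨ]
  have hz0 : z = 0 := by
    have h1 := congrArg Ψ hstar
    rw [map_sum, map_zero] at h1
    simp_rw [Ψtmul] at h1
    calc z = z * 1 := (mul_one z).symm
      _ = z * ∑ i ∈ r.index, r.left i * antipode (R := k) (gmap f (r.right i)) := by rw [hone]
      _ = ∑ i ∈ r.index, (z * r.left i) * antipode (R := k) (gmap f (r.right i)) := by
          rw [Finset.mul_sum]; simp_rw [mul_assoc]
      _ = 0 := h1
  rw [hz] at hz0
  exact sub_eq_zero.mp hz0
end

section
/- The antipode S of a finite-dimensional Hopf algebra H over a field k is bijective. -/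
set_option maxHeartbeats 1000000
set_option synthInstance.maxHeartbeats 200000

universe u v

noncomputable section
namespace HopfProof

open TensorProduct LinearMap Coalgebra HopfAlgebra

section Conv

variable {k : Type u} [Field k]
variable {C : Type*} [AddCommGroup C] [Module k C] [Coalgebra k C]
variable {B : Type*} [Ring B] [Algebra k B]

/-- Convolution product on `C →ₗ[k] B`. -/
def conv (f g : C →ₗ[k] B) : C →ₗ[k] B :=
  LinearMap.mul' k B ∘ₗ TensorProduct.map f g ∘ₗ Coalgebra.comul

/-- Convolution unit. -/
def convOne : C →ₗ[k] B := Algebra.linearMap k B ∘ₗ Coalgebra.counit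

lemma conv_repr (f g : C →ₗ[k] B) {c : C} {τ : Type*} (r : Coalgebra.Repr k c τ) :
    conv f g c = ∑ i ∈ r.index, f (r.left i) * g (r.right i) := by
  simp only [conv, LinearMap.comp_apply, ← r.eq, map_sum, TensorProduct.map_tmul,
    LinearMap.mul'_apply]

lemma sum_counit_smul_right {c : C} {τ : Type*} (r : Coalgebra.Repr k c τ) :
    ∑ i ∈ r.index, Coalgebra.counit (R := k) (r.left i) • r.right i = c := by
  have h0 := Coalgebra.sum_counit_tmul_eq (R := k) r
  have := congrArg (TensorProduct.lid k C) h0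
  simp only [map_sum, TensorProduct.lid_tmul, one_smul] at this
  exact this

lemma sum_counit_smul_left {c : C} {τ : Type*} (r : Coalgebra.Repr k c τ) :
    ∑ i ∈ r.index, Coalgebra.counit (R := k) (r.right i) • r.left i = c := by
  have h0 := Coalgebra.sum_tmul_counit_eq (R := k) r
  have := congrArg (TensorProduct.rid k C) h0
  simp only [map_sum, TensorProduct.rid_tmul, one_smul] at this
  exact this

lemma convOne_conv (f : C →ₗ[k] B) : conv convOne f = f := by
  ext c
  rw [conv_repr _ _ (ℛ k c)]
  simp only [convOne, LinearMap.comp_apply, Algebra.linearMap_apply]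
  calc ∑ i ∈ (ℛ k c).index, algebraMap k B (Coalgebra.counit ((ℛ k c).left i)) * f ((ℛ k c).right i)
      = ∑ i ∈ (ℛ k c).index, Coalgebra.counit (R := k) ((ℛ k c).left i) • f ((ℛ k c).right i) := by
        simp [Algebra.smul_def]
    _ = f c := by
        simp only [← map_smul, ← map_sum]
        rw [sum_counit_smul_right]

lemma conv_convOne (f : C →ₗ[k] B) : conv f convOne = f := by
  ext c
  rw [conv_repr _ _ (ℛ k c)]
  simp only [convOne, LinearMap.comp_apply, Algebra.linearMap_apply]
  calc ∑ i ∈ (ℛ k c).index, f ((ℛ k c).left i) * algebraMap k B (Coalgebra.counit ((ℛ k c).right i))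
      = ∑ i ∈ (ℛ k c).index, Coalgebra.counit (R := k) ((ℛ k c).right i) • f ((ℛ k c).left i) := by
        refine Finset.sum_congr rfl fun i _ => ?_
        rw [← Algebra.commutes, Algebra.smul_def]
    _ = f c := by
        simp only [← map_smul, ← map_sum]
        rw [sum_counit_smul_left]

lemma conv_assoc (f g h : C →ₗ[k] B) : conv (conv f g) h = conv f (conv g h) := by
  ext c
  set r := ℛ k c
  set a₁ : (i : r.ι) → Coalgebra.Repr k (r.left i) (C × C) := fun i => ℛ k (r.left i) with ha₁
  set a₂ : (i : r.ι) → Coalgebra.Repr k (r.right i) (C × C) := fun i => ℛ k (r.right i) with ha₂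
  have key := Coalgebra.sum_map_tmul_tmul_eq (R := k) f g h c (repr := r) (a₁ := a₁) (a₂ := a₂)
  have := congrArg (LinearMap.mul' k B ∘ₗ LinearMap.lTensor B (LinearMap.mul' k B)) key
  simp only [map_sum, LinearMap.comp_apply, LinearMap.lTensor_tmul, LinearMap.mul'_apply] at this
  rw [conv_repr _ _ r, conv_repr _ _ r]
  calc ∑ i ∈ r.index, conv f g (r.left i) * h (r.right i)
      = ∑ i ∈ r.index, ∑ j ∈ (a₁ i).index,
          f ((a₁ i).left j) * (g ((a₁ i).right j) * h (r.right i)) := by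
        refine Finset.sum_congr rfl fun i _ => ?_
        rw [conv_repr _ _ (a₁ i), Finset.sum_mul]
        simp [mul_assoc]
    _ = ∑ i ∈ r.index, ∑ j ∈ (a₂ i).index,
          f (r.left i) * (g ((a₂ i).left j) * h ((a₂ i).right j)) := this.symm
    _ = ∑ i ∈ r.index, f (r.left i) * conv g h (r.right i) := by
        refine Finset.sum_congr rfl fun i _ => ?_
        rw [conv_repr _ _ (a₂ i), Finset.mul_sum]

lemma conv_inv_unique {f g₁ g₂ : C →ₗ[k] B} (h₁ : conv g₁ f = convOne)
    (h₂ : conv f g₂ = convOne) : g₁ = g₂ := by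
  have : conv g₁ (conv f g₂) = conv (conv g₁ f) g₂ := (conv_assoc _ _ _).symm
  rwa [h₂, h₁, conv_convOne, convOne_conv] at this

end Conv

section Hopf

variable {k : Type u} [Field k] {H : Type v} [Ring H] [HopfAlgebra k H]


lemma sum4_comm {M : Type*} [AddCommMonoid M] {α β : Type*} {γ : α → Type*} {δ : β → Type*}
    (s : Finset α) (t : Finset β) (u : ∀ a, Finset (γ a)) (v : ∀ b, Finset (δ b))
    (f : ∀ (a : α) (b : β), γ a → δ b → M) :
    ∑ a ∈ s, ∑ b ∈ t, ∑ c ∈ u a, ∑ d ∈ v b, f a b c d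
      = ∑ b ∈ t, ∑ d ∈ v b, ∑ a ∈ s, ∑ c ∈ u a, f a b c d :=
  ((Finset.sum_congr rfl fun a _ => Finset.sum_congr rfl fun b _ => Finset.sum_comm).trans
    Finset.sum_comm).trans (Finset.sum_congr rfl fun _ _ => Finset.sum_comm)

lemma comul_tmul_eq {a b : H} {τ τ' : Type*} (ra : Coalgebra.Repr k a τ) (rb : Coalgebra.Repr k b τ') :
    Coalgebra.comul (R := k) (a ⊗ₜ[k] b) =
      ∑ i ∈ ra.index, ∑ j ∈ rb.index,
        (ra.left i ⊗ₜ[k] rb.left j) ⊗ₜ[k] (ra.right i ⊗ₜ[k] rb.right j) := by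
  rw [TensorProduct.comul_tmul]
  rw [← ra.eq, ← rb.eq]
  rw [TensorProduct.sum_tmul]
  simp only [TensorProduct.tmul_sum, map_sum, TensorProduct.AlgebraTensorModule.tensorTensorTensorComm_tmul]

/-- A `Repr` for a pure tensor in `H ⊗ H`, given `Repr`s of the two factors. -/
def tmulRepr {a b : H} {τ τ' : Type*} (ra : Coalgebra.Repr k a τ) (rb : Coalgebra.Repr k b τ') : Coalgebra.Repr k (a ⊗ₜ[k] b) (τ × τ') where
  index := ra.index ×ˢ rb.index
  left := fun p => ra.left p.1 ⊗ₜ[k] rb.left p.2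
  right := fun p => ra.right p.1 ⊗ₜ[k] rb.right p.2
  eq := by rw [Finset.sum_product, comul_tmul_eq ra rb]

/-- Universe-polymorphic coalgebra instance on `H ⊗ H`. -/
instance tensorCoalgebra : Coalgebra k (H ⊗[k] H) where
  coassoc := by
    apply TensorProduct.ext'
    intro a b
    set ra := ℛ k a with hra; set rb := ℛ k b with hrb
    set rla : (i : ra.ι) → Coalgebra.Repr k (ra.left i) (H × H) := fun i => ℛ k (ra.left i) with hrla
    set rra : (i : ra.ι) → Coalgebra.Repr k (ra.right i) (H × H) := fun i => ℛ k (ra.right i) with hrra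
    set rlb : (j : rb.ι) → Coalgebra.Repr k (rb.left j) (H × H) := fun j => ℛ k (rb.left j) with hrlb
    set rrb : (j : rb.ι) → Coalgebra.Repr k (rb.right j) (H × H) := fun j => ℛ k (rb.right j) with hrrb
    have ta := Coalgebra.sum_tmul_tmul_eq (R := k) ra rla rra
    have tb := Coalgebra.sum_tmul_tmul_eq (R := k) rb rlb rrb
    have k1 := congrArg (TensorProduct.tensorTensorTensorComm k H (H ⊗[k] H) H (H ⊗[k] H)).toLinearMap
      (congrArg₂ (· ⊗ₜ[k] ·) ta tb)
    have k2 := congrArg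
      (LinearMap.lTensor (H ⊗[k] H) (TensorProduct.tensorTensorTensorComm k H H H H).toLinearMap) k1
    simp only [TensorProduct.sum_tmul, TensorProduct.tmul_sum, map_sum,
      TensorProduct.tensorTensorTensorComm_tmul, LinearMap.lTensor_tmul,
      LinearEquiv.coe_coe] at k2
    -- Now massage both sides of the goal into the two sides of k2.
    simp only [LinearMap.comp_apply, LinearEquiv.coe_coe]
    rw [comul_tmul_eq ra rb]
    simp only [map_sum, LinearMap.rTensor_tmul, LinearMap.lTensor_tmul]
    calc
      ∑ i ∈ ra.index, ∑ j ∈ rb.index,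
          (TensorProduct.assoc k (H ⊗[k] H) (H ⊗[k] H) (H ⊗[k] H))
            ((Coalgebra.comul (R := k) (ra.left i ⊗ₜ[k] rb.left j)) ⊗ₜ[k]
              (ra.right i ⊗ₜ[k] rb.right j))
        = ∑ i ∈ ra.index, ∑ j ∈ rb.index, ∑ m ∈ (rla i).index, ∑ n ∈ (rlb j).index,
            ((rla i).left m ⊗ₜ[k] (rlb j).left n) ⊗ₜ[k]
              (((rla i).right m ⊗ₜ[k] (rlb j).right n) ⊗ₜ[k] (ra.right i ⊗ₜ[k] rb.right j)) := by
          refine Finset.sum_congr rfl fun i _ => Finset.sum_congr rfl fun j _ => ?_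
          rw [comul_tmul_eq (rla i) (rlb j)]
          rw [TensorProduct.sum_tmul]
          simp only [TensorProduct.sum_tmul, map_sum, TensorProduct.assoc_tmul]
      _ = ∑ j ∈ rb.index, ∑ n ∈ (rlb j).index, ∑ i ∈ ra.index, ∑ m ∈ (rla i).index,
            ((rla i).left m ⊗ₜ[k] (rlb j).left n) ⊗ₜ[k]
              (((rla i).right m ⊗ₜ[k] (rlb j).right n) ⊗ₜ[k] (ra.right i ⊗ₜ[k] rb.right j)) :=
          sum4_comm _ _ _ _ _
      _ = ∑ j ∈ rb.index, ∑ n ∈ (rrb j).index, ∑ i ∈ ra.index, ∑ q ∈ (rra i).index,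
            (ra.left i ⊗ₜ[k] rb.left j) ⊗ₜ[k]
              (((rra i).left q ⊗ₜ[k] (rrb j).left n) ⊗ₜ[k]
                ((rra i).right q ⊗ₜ[k] (rrb j).right n)) := k2
      _ = ∑ i ∈ ra.index, ∑ j ∈ rb.index, ∑ q ∈ (rra i).index, ∑ n ∈ (rrb j).index,
            (ra.left i ⊗ₜ[k] rb.left j) ⊗ₜ[k]
              (((rra i).left q ⊗ₜ[k] (rrb j).left n) ⊗ₜ[k]
                ((rra i).right q ⊗ₜ[k] (rrb j).right n)) :=
          (sum4_comm _ _ _ _ _).symm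
      _ = ∑ i ∈ ra.index, ∑ j ∈ rb.index,
            (ra.left i ⊗ₜ[k] rb.left j) ⊗ₜ[k]
              (Coalgebra.comul (R := k) (ra.right i ⊗ₜ[k] rb.right j)) := by
          refine Finset.sum_congr rfl fun i _ => Finset.sum_congr rfl fun j _ => ?_
          rw [comul_tmul_eq (rra i) (rrb j)]
          simp only [TensorProduct.tmul_sum]
  rTensor_counit_comp_comul := by
    apply TensorProduct.ext'
    intro a b
    set ra := ℛ k a; set rb := ℛ k b
    have ha := Coalgebra.sum_counit_tmul_eq (R := k) ra
    have hb := Coalgebra.sum_counit_tmul_eq (R := k) rb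
    have k1 := congrArg (TensorProduct.tensorTensorTensorComm k k H k H).toLinearMap
      (congrArg₂ (· ⊗ₜ[k] ·) ha hb)
    have k2 := congrArg
      (LinearMap.rTensor (H ⊗[k] H) (LinearMap.mul' k k)) k1
    simp only [TensorProduct.sum_tmul, TensorProduct.tmul_sum, map_sum,
      TensorProduct.tensorTensorTensorComm_tmul, LinearMap.rTensor_tmul,
      LinearEquiv.coe_coe, LinearMap.mul'_apply, one_mul] at k2
    simp only [LinearMap.comp_apply]
    rw [comul_tmul_eq ra rb]
    simp only [map_sum, LinearMap.rTensor_tmul, TensorProduct.counit_tmul,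
      LinearMap.comp_apply, TensorProduct.map_tmul, LinearMap.mul'_apply,
      TensorProduct.mk_apply]
    rw [Finset.sum_comm]
    simpa only [smul_eq_mul, mul_comm] using k2
  lTensor_counit_comp_comul := by
    apply TensorProduct.ext'
    intro a b
    set ra := ℛ k a; set rb := ℛ k b
    have ha := Coalgebra.sum_tmul_counit_eq (R := k) ra
    have hb := Coalgebra.sum_tmul_counit_eq (R := k) rb
    have k1 := congrArg (TensorProduct.tensorTensorTensorComm k H k H k).toLinearMap
      (congrArg₂ (· ⊗ₜ[k] ·) ha hb)
    have k2 := congrArg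
      (LinearMap.lTensor (H ⊗[k] H) (LinearMap.mul' k k)) k1
    simp only [TensorProduct.sum_tmul, TensorProduct.tmul_sum, map_sum,
      TensorProduct.tensorTensorTensorComm_tmul, LinearMap.lTensor_tmul,
      LinearEquiv.coe_coe, LinearMap.mul'_apply, one_mul] at k2
    simp only [LinearMap.comp_apply]
    rw [comul_tmul_eq ra rb]
    simp only [map_sum, LinearMap.lTensor_tmul, TensorProduct.counit_tmul,
      LinearMap.comp_apply, TensorProduct.map_tmul, LinearMap.mul'_apply,
      TensorProduct.mk_apply, LinearMap.flip_apply]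
    rw [Finset.sum_comm]
    simpa only [smul_eq_mul, mul_comm] using k2


local notation "S" => (HopfAlgebra.antipode (R := k) (A := H))
local notation "ε" => (Coalgebra.counit (R := k) (A := H))

/-- A `Repr` for a product, given `Repr`s of the two factors. -/
def mulRepr {a b : H} {τ τ' : Type*} (ra : Coalgebra.Repr k a τ) (rb : Coalgebra.Repr k b τ') : Coalgebra.Repr k (a * b) (τ × τ') where
  index := ra.index ×ˢ rb.index
  left := fun p => ra.left p.1 * rb.left p.2
  right := fun p => ra.right p.1 * rb.right p.2
  eq := by
    rw [Finset.sum_product, Bialgebra.comul_mul, ← ra.eq, ← rb.eq, Finset.sum_mul_sum]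
    simp only [Algebra.TensorProduct.tmul_mul_tmul]

lemma conv_antipode_id : conv (k := k) (HopfAlgebra.antipode (R := k) (A := H)) .id = convOne := by
  ext x
  rw [conv_repr _ _ (ℛ k x)]
  simp only [LinearMap.id_coe, id_eq, HopfAlgebra.sum_antipode_mul_eq_algebraMap_counit]
  simp [convOne]

lemma conv_id_antipode : conv (k := k) .id (HopfAlgebra.antipode (R := k) (A := H)) = convOne := by
  ext x
  rw [conv_repr _ _ (ℛ k x)]
  simp only [LinearMap.id_coe, id_eq, HopfAlgebra.sum_mul_antipode_eq_algebraMap_counit]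
  simp [convOne]

lemma antipode_one' : S (1 : H) = 1 := by
  have := HopfAlgebra.mul_antipode_rTensor_comul_apply (R := k) (A := H) (1 : H)
  rw [Bialgebra.comul_one, Algebra.TensorProduct.one_def] at this
  simpa using this

/-- The "opposite comultiplication composed with the antipode" map. -/
def Gmap : H →ₗ[k] H ⊗[k] H :=
  (TensorProduct.comm k H H).toLinearMap ∘ₗ TensorProduct.map S S ∘ₗ Coalgebra.comul

lemma conv_comul_comulS :
    conv (k := k) Coalgebra.comul (Coalgebra.comul ∘ₗ S) = convOne (C := H) (B := H ⊗[k] H) := by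
  ext x
  rw [conv_repr _ _ (ℛ k x)]
  simp only [LinearMap.comp_apply]
  calc ∑ i ∈ (ℛ k x).index,
        Coalgebra.comul (R := k) ((ℛ k x).left i) * Coalgebra.comul (R := k) (S ((ℛ k x).right i))
      = Coalgebra.comul (R := k) (∑ i ∈ (ℛ k x).index, (ℛ k x).left i * S ((ℛ k x).right i)) := by
        rw [map_sum]; simp only [Bialgebra.comul_mul]
    _ = convOne x := by
        rw [HopfAlgebra.sum_mul_antipode_eq_algebraMap_counit]
        simp [convOne, Bialgebra.comul_algebraMap]

lemma conv_Gmap_comul :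
    conv (k := k) Gmap Coalgebra.comul = convOne (C := H) (B := H ⊗[k] H) := by
  ext x
  set r := ℛ k x with hr
  set rl : (i : r.ι) → Coalgebra.Repr k (r.left i) (H × H) := fun i => ℛ k (r.left i) with hrl
  set rr : (i : r.ι) → Coalgebra.Repr k (r.right i) (H × H) := fun i => ℛ k (r.right i) with hrr
  rw [conv_repr _ _ r]
  -- the reassociation map M'
  set M' : H ⊗[k] (H ⊗[k] H) →ₗ[k] H ⊗[k] H :=
    LinearMap.mul' k (H ⊗[k] H) ∘ₗ
      TensorProduct.map (TensorProduct.map S S ∘ₗ (TensorProduct.comm k H H).toLinearMap)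
        Coalgebra.comul ∘ₗ
      (TensorProduct.assoc k H H H).symm.toLinearMap with hM'
  have hM'app : ∀ (c d w : H), M' (c ⊗ₜ[k] (d ⊗ₜ[k] w)) =
      (S d ⊗ₜ[k] S c) * Coalgebra.comul (R := k) w := by
    intro c d w
    simp [hM', TensorProduct.assoc_symm_tmul]
  have key := congrArg M' (Coalgebra.sum_tmul_tmul_eq (R := k) r rl rr)
  simp only [map_sum, hM'app] at key
  calc ∑ i ∈ r.index, Gmap ((r).left i) * Coalgebra.comul (R := k) (r.right i)
      = ∑ i ∈ r.index, ∑ m ∈ (rl i).index,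
          (S ((rl i).right m) ⊗ₜ[k] S ((rl i).left m)) * Coalgebra.comul (R := k) (r.right i) := by
        refine Finset.sum_congr rfl fun i _ => ?_
        rw [show Gmap (r.left i) = ∑ m ∈ (rl i).index,
            S ((rl i).right m) ⊗ₜ[k] S ((rl i).left m) by
          simp only [Gmap, LinearMap.comp_apply, ← (rl i).eq, map_sum, TensorProduct.map_tmul,
            LinearEquiv.coe_coe, TensorProduct.comm_tmul]]
        rw [Finset.sum_mul]
    _ = ∑ i ∈ r.index, ∑ n ∈ (rr i).index,
          (S ((rr i).left n) ⊗ₜ[k] S (r.left i)) * Coalgebra.comul (R := k) ((rr i).right n) :=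
        key
    _ = ∑ i ∈ r.index, (1 : H) ⊗ₜ[k] (S (r.left i) * r.right i) := by
        refine Finset.sum_congr rfl fun i _ => ?_
        set re : (n : (rr i).ι) → Coalgebra.Repr k ((rr i).left n) (H × H) := fun n => ℛ k ((rr i).left n) with hre
        set rd : (n : (rr i).ι) → Coalgebra.Repr k ((rr i).right n) (H × H) := fun n => ℛ k ((rr i).right n) with hrd
        set N : H ⊗[k] (H ⊗[k] H) →ₗ[k] H ⊗[k] H :=
          TensorProduct.map (LinearMap.mul' k H ∘ₗ TensorProduct.map S LinearMap.id)
              (LinearMap.mulLeft k (S (r.left i))) ∘ₗ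
            (TensorProduct.assoc k H H H).symm.toLinearMap with hN
        have hNapp : ∀ (A B C : H), N (A ⊗ₜ[k] (B ⊗ₜ[k] C)) =
            (S A * B) ⊗ₜ[k] (S (r.left i) * C) := by
          intro A B C
          simp [hN, TensorProduct.assoc_symm_tmul]
        have key2 := congrArg N (Coalgebra.sum_tmul_tmul_eq (R := k) (rr i) re rd)
        simp only [map_sum, hNapp] at key2
        calc ∑ n ∈ (rr i).index,
              (S ((rr i).left n) ⊗ₜ[k] S (r.left i)) * Coalgebra.comul (R := k) ((rr i).right n)
            = ∑ n ∈ (rr i).index, ∑ q ∈ (rd n).index,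
                (S ((rr i).left n) * (rd n).left q) ⊗ₜ[k] (S (r.left i) * (rd n).right q) := by
              refine Finset.sum_congr rfl fun n _ => ?_
              rw [← (rd n).eq, Finset.mul_sum]
              simp only [Algebra.TensorProduct.tmul_mul_tmul]
          _ = ∑ n ∈ (rr i).index, ∑ q ∈ (re n).index,
                (S ((re n).left q) * (re n).right q) ⊗ₜ[k]
                  (S (r.left i) * (rr i).right n) := key2.symm
          _ = ∑ n ∈ (rr i).index,
                (algebraMap k H (Coalgebra.counit ((rr i).left n))) ⊗ₜ[k]
                  (S (r.left i) * (rr i).right n) := by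
              refine Finset.sum_congr rfl fun n _ => ?_
              rw [← TensorProduct.sum_tmul, HopfAlgebra.sum_antipode_mul_eq_algebraMap_counit (re n)]
          _ = (1 : H) ⊗ₜ[k] (S (r.left i) * r.right i) := by
              calc ∑ n ∈ (rr i).index,
                    (algebraMap k H (Coalgebra.counit ((rr i).left n))) ⊗ₜ[k]
                      (S (r.left i) * (rr i).right n)
                  = ∑ n ∈ (rr i).index, (1 : H) ⊗ₜ[k]
                      (S (r.left i) * (Coalgebra.counit (R := k) ((rr i).left n) • (rr i).right n)) := by
                    refine Finset.sum_congr rfl fun n _ => ?_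
                    rw [Algebra.algebraMap_eq_smul_one, TensorProduct.smul_tmul, mul_smul_comm]
                _ = (1 : H) ⊗ₜ[k] (S (r.left i) * r.right i) := by
                    rw [← TensorProduct.tmul_sum, ← Finset.mul_sum, sum_counit_smul_right]
    _ = convOne x := by
        rw [← TensorProduct.tmul_sum, HopfAlgebra.sum_antipode_mul_eq_algebraMap_counit r]
        rw [Algebra.algebraMap_eq_smul_one, TensorProduct.tmul_smul]
        simp [convOne, Algebra.algebraMap_eq_smul_one, Algebra.TensorProduct.one_def]

lemma comul_antipode : Gmap (k := k) (H := H) = Coalgebra.comul ∘ₗ S :=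
  conv_inv_unique conv_Gmap_comul conv_comul_comulS

lemma comul_antipode_repr {x : H} {τ : Type*} (r : Coalgebra.Repr k x τ) :
    Coalgebra.comul (R := k) (S x) =
      ∑ i ∈ r.index, S (r.right i) ⊗ₜ[k] S (r.left i) := by
  have : Gmap (k := k) (H := H) x = Coalgebra.comul (R := k) (S x) :=
    LinearMap.congr_fun comul_antipode x
  rw [← this]
  simp only [Gmap, LinearMap.comp_apply, ← r.eq, map_sum, TensorProduct.map_tmul,
    LinearEquiv.coe_coe, TensorProduct.comm_tmul]

lemma conv_mul_SmulS :
    conv (k := k) (LinearMap.mul' k H)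
      (LinearMap.mul' k H ∘ₗ TensorProduct.map S S ∘ₗ (TensorProduct.comm k H H).toLinearMap)
      = convOne := by
  apply TensorProduct.ext'
  intro a b
  have hc : conv (k := k) (LinearMap.mul' k H)
      (LinearMap.mul' k H ∘ₗ TensorProduct.map S S ∘ₗ (TensorProduct.comm k H H).toLinearMap)
      (a ⊗ₜ[k] b) = ∑ i ∈ (ℛ k a).index, ∑ j ∈ (ℛ k b).index,
        ((ℛ k a).left i * (ℛ k b).left j) *
          (S ((ℛ k b).right j) * S ((ℛ k a).right i)) := by
    rw [conv_repr _ _ (tmulRepr (ℛ k a) (ℛ k b))]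
    simp only [tmulRepr]
    rw [Finset.sum_product]
    simp
  rw [hc]
  have : ∀ i ∈ (ℛ k a).index, ∑ j ∈ (ℛ k b).index,
      ((ℛ k a).left i * (ℛ k b).left j) * (S ((ℛ k b).right j) * S ((ℛ k a).right i))
      = Coalgebra.counit (R := k) b • ((ℛ k a).left i * S ((ℛ k a).right i)) := by
    intro i _
    calc ∑ j ∈ (ℛ k b).index,
          ((ℛ k a).left i * (ℛ k b).left j) * (S ((ℛ k b).right j) * S ((ℛ k a).right i))
        = (ℛ k a).left i * (∑ j ∈ (ℛ k b).index, (ℛ k b).left j * S ((ℛ k b).right j)) *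
            S ((ℛ k a).right i) := by
          rw [Finset.mul_sum, Finset.sum_mul]
          refine Finset.sum_congr rfl fun j _ => by simp [mul_assoc]
      _ = Coalgebra.counit (R := k) b • ((ℛ k a).left i * S ((ℛ k a).right i)) := by
          rw [HopfAlgebra.sum_mul_antipode_eq_algebraMap_counit]
          rw [Algebra.algebraMap_eq_smul_one]
          rw [mul_smul_comm, smul_mul_assoc, mul_one]
  rw [Finset.sum_congr rfl this, ← Finset.smul_sum, HopfAlgebra.sum_mul_antipode_eq_algebraMap_counit]
  simp only [convOne, Algebra.smul_def, TensorProduct.counit_tmul,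
    LinearMap.comp_apply, TensorProduct.map_tmul, LinearMap.mul'_apply,
    Algebra.linearMap_apply, ← map_mul]
  rw [mul_comm]
  rw [Algebra.algebraMap_self, RingHom.id_apply, mul_comm]

lemma conv_Smul_mul :
    conv (k := k) (S ∘ₗ LinearMap.mul' k H) (LinearMap.mul' k H) = convOne := by
  apply TensorProduct.ext'
  intro a b
  rw [conv_repr _ _ (tmulRepr (ℛ k a) (ℛ k b))]
  calc ∑ p ∈ (tmulRepr (ℛ k a) (ℛ k b)).index,
        (S ∘ₗ LinearMap.mul' k H) ((tmulRepr (ℛ k a) (ℛ k b)).left p) *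
          (LinearMap.mul' k H) ((tmulRepr (ℛ k a) (ℛ k b)).right p)
      = ∑ p ∈ (mulRepr (ℛ k a) (ℛ k b)).index,
          S ((mulRepr (ℛ k a) (ℛ k b)).left p) * (mulRepr (ℛ k a) (ℛ k b)).right p :=
        Finset.sum_congr rfl fun p _ => by simp [tmulRepr, mulRepr]
    _ = algebraMap k H (Coalgebra.counit (R := k) (a * b)) :=
        HopfAlgebra.sum_antipode_mul_eq_algebraMap_counit (mulRepr (ℛ k a) (ℛ k b))
    _ = convOne (a ⊗ₜ[k] b) := by
        simp [convOne, TensorProduct.counit_tmul]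
        exact Algebra.commutes _ _

lemma antipode_mul_anti (a b : H) : S (a * b) = S b * S a := by
  have h := conv_inv_unique (k := k) (C := H ⊗[k] H) (B := H) (f := LinearMap.mul' k H) conv_Smul_mul conv_mul_SmulS
  have := LinearMap.congr_fun h (a ⊗ₜ[k] b)
  simpa using this

/-- `Repr` for `S y` from a `Repr` of `y`. -/
def antipodeRepr {y : H} {τ : Type*} (r : Coalgebra.Repr k y τ) : Coalgebra.Repr k (S y) τ where
  index := r.index
  left := fun i => S (r.right i)
  right := fun i => S (r.left i)
  eq := (comul_antipode_repr r).symm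

/-- The operator form of the right comodule structure on the dual:
`Rmap f x = ∑ f(x₂) • x₁`. -/
def Rmap : Module.Dual k H →ₗ[k] H →ₗ[k] H where
  toFun f := (TensorProduct.rid k H).toLinearMap ∘ₗ LinearMap.lTensor H f ∘ₗ Coalgebra.comul
  map_add' f g := by
    ext x
    simp [LinearMap.lTensor_add]
  map_smul' c f := by
    ext x
    simp [LinearMap.lTensor_smul]

lemma Rmap_apply (f : Module.Dual k H) {x : H} {τ : Type*} (r : Coalgebra.Repr k x τ) :
    Rmap f x = ∑ i ∈ r.index, f (r.right i) • r.left i := by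
  simp only [Rmap, LinearMap.coe_mk, AddHom.coe_mk, LinearMap.comp_apply, ← r.eq, map_sum,
    LinearMap.lTensor_tmul, LinearEquiv.coe_coe, TensorProduct.rid_tmul]

lemma counit_Rmap (f : Module.Dual k H) (x : H) :
    Coalgebra.counit (R := k) (Rmap f x) = f x := by
  rw [Rmap_apply f (ℛ k x)]
  rw [map_sum]
  have hx := sum_counit_smul_right (ℛ k x)
  calc ∑ i ∈ (ℛ k x).index,
        Coalgebra.counit (R := k) (f ((ℛ k x).right i) • (ℛ k x).left i)
      = ∑ i ∈ (ℛ k x).index,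
          f (Coalgebra.counit (R := k) ((ℛ k x).left i) • (ℛ k x).right i) := by
        refine Finset.sum_congr rfl fun i _ => ?_
        simp [smul_eq_mul, mul_comm]
    _ = f x := by rw [← map_sum, hx]

/-- The right action of `H` on the dual: `(ract f h) x = f (x * S h)`. -/
def ract (f : Module.Dual k H) (h : H) : Module.Dual k H :=
  f ∘ₗ LinearMap.mulRight k (S h)

lemma ract_apply (f : Module.Dual k H) (h x : H) : ract f h x = f (x * S h) := rfl

lemma ract_ract (f : Module.Dual k H) (a c : H) : ract (ract f a) c = ract f (a * c) := by
  ext x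
  simp [ract, antipode_mul_anti, mul_assoc]

/-- Compatibility of `Rmap` with the action (the Hopf-module axiom, in operator form). -/
lemma Rmap_ract (f : Module.Dual k H) {h : H} {τ : Type*} (rh : Coalgebra.Repr k h τ) (x : H) :
    Rmap (ract f h) x = ∑ j ∈ rh.index, Rmap f (x * S (rh.left j)) * rh.right j := by
  set rx := ℛ k x with hrx
  set rl : (j : rh.ι) → Coalgebra.Repr k (rh.left j) (H × H) := fun j => ℛ k (rh.left j) with hrl
  set rr : (j : rh.ι) → Coalgebra.Repr k (rh.right j) (H × H) := fun j => ℛ k (rh.right j) with hrr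
  set β : H →ₗ[k] H →ₗ[k] H := LinearMap.mk₂ k
    (fun A w => ∑ i ∈ rx.index, f (rx.right i * S A) • (rx.left i * w))
    (fun A A' w => by
      simp only [map_add, mul_add, add_smul, ← Finset.sum_add_distrib])
    (fun c A w => by
      simp only [map_smul, mul_smul_comm, smul_eq_mul, mul_smul, Finset.smul_sum])
    (fun A w w' => by
      simp only [mul_add, smul_add, ← Finset.sum_add_distrib])
    (fun c A w => by
      simp only [mul_smul_comm, Finset.smul_sum]
      exact Finset.sum_congr rfl fun i _ => smul_comm _ _ _) with hβ
  have hβapp : ∀ A w : H, β A w = ∑ i ∈ rx.index, f (rx.right i * S A) • (rx.left i * w) :=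
    fun A w => rfl
  set Φ : H ⊗[k] (H ⊗[k] H) →ₗ[k] H :=
    TensorProduct.lift β ∘ₗ
      LinearMap.lTensor H (LinearMap.mul' k H ∘ₗ TensorProduct.map S LinearMap.id) with hΦ
  have hΦapp : ∀ A B C : H, Φ (A ⊗ₜ[k] (B ⊗ₜ[k] C)) =
      ∑ i ∈ rx.index, f (rx.right i * S A) • (rx.left i * (S B * C)) := by
    intro A B C
    simp [hΦ, hβapp]
  have key := congrArg Φ (Coalgebra.sum_tmul_tmul_eq (R := k) rh rl rr)
  simp only [map_sum, hΦapp] at key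
  refine Eq.symm ?_
  calc ∑ j ∈ rh.index, Rmap f (x * S (rh.left j)) * rh.right j
      = ∑ j ∈ rh.index, ∑ m ∈ (rl j).index, ∑ i ∈ rx.index,
          f (rx.right i * S ((rl j).left m)) •
            (rx.left i * (S ((rl j).right m) * rh.right j)) := by
        refine Finset.sum_congr rfl fun j _ => ?_
        have e1 : Rmap f (x * S (rh.left j)) = ∑ p ∈ rx.index ×ˢ (rl j).index,
            f (rx.right p.1 * S ((rl j).left p.2)) • (rx.left p.1 * S ((rl j).right p.2)) :=
          Rmap_apply f (mulRepr rx (antipodeRepr (rl j)))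
        rw [e1, Finset.sum_product, Finset.sum_mul]
        simp only [Finset.sum_mul, smul_mul_assoc, mul_assoc]
        exact Finset.sum_comm
    _ = ∑ j ∈ rh.index, ∑ n ∈ (rr j).index, ∑ i ∈ rx.index,
          f (rx.right i * S (rh.left j)) •
            (rx.left i * (S ((rr j).left n) * (rr j).right n)) := key
    _ = ∑ j ∈ rh.index, ∑ i ∈ rx.index,
          Coalgebra.counit (R := k) (rh.right j) •
            f (rx.right i * S (rh.left j)) • rx.left i := by
        refine Finset.sum_congr rfl fun j _ => ?_
        rw [Finset.sum_comm]
        refine Finset.sum_congr rfl fun i _ => ?_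
        rw [← Finset.smul_sum, ← Finset.mul_sum, HopfAlgebra.sum_antipode_mul_eq_algebraMap_counit (rr j),
          Algebra.algebraMap_eq_smul_one, mul_smul_comm, mul_one, smul_comm]
    _ = ∑ i ∈ rx.index, f (rx.right i * S h) • rx.left i := by
        rw [Finset.sum_comm]
        refine Finset.sum_congr rfl fun i _ => ?_
        conv_rhs => rw [← sum_counit_smul_left rh]
        rw [map_sum, Finset.mul_sum, map_sum, Finset.sum_smul]
        refine Finset.sum_congr rfl fun j _ => ?_
        rw [map_smul, mul_smul_comm, map_smul, smul_eq_mul, mul_smul]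
    _ = Rmap (ract f h) x := by
        rw [Rmap_apply _ rx]
        rfl

section FinDim

variable [FiniteDimensional k H]

local notation "ι" => Module.Free.ChooseBasisIndex k H
local notation "bH" => Module.Free.chooseBasis k H

lemma dth_inj {N : Type*} [AddCommGroup N] [Module k N] :
    Function.Injective ⇑(dualTensorHom k H N) := by
  intro u v huv
  exact (dualTensorHomEquivOfBasis (N := N) bH).injective huv

/-- Tensor-level coassociativity of the dual comodule, operator form. -/
lemma C2'' (f : Module.Dual k H) (x : H) :
    ∑ i : ι, (Rmap ((bH).coord i ∘ₗ Rmap f) x) ⊗ₜ[k] (bH) i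
      = Coalgebra.comul (R := k) (Rmap f x) := by
  set rx := ℛ k x with hrx
  set rlx : (t : rx.ι) → Coalgebra.Repr k (rx.left t) (H × H) := fun t => ℛ k (rx.left t) with hrlx
  set rrx : (t : rx.ι) → Coalgebra.Repr k (rx.right t) (H × H) := fun t => ℛ k (rx.right t) with hrrx
  set W : H ⊗[k] (H ⊗[k] H) →ₗ[k] H ⊗[k] H :=
    LinearMap.lTensor H ((TensorProduct.rid k H).toLinearMap ∘ₗ LinearMap.lTensor H f) with hW
  have hWapp : ∀ A B C : H, W (A ⊗ₜ[k] (B ⊗ₜ[k] C)) = A ⊗ₜ[k] (f C • B) := by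
    intro A B C
    simp [hW]
  have key := congrArg W (Coalgebra.sum_tmul_tmul_eq (R := k) rx rlx rrx)
  simp only [map_sum, hWapp] at key
  calc ∑ i : ι, (Rmap ((bH).coord i ∘ₗ Rmap f) x) ⊗ₜ[k] (bH) i
      = ∑ i : ι, ∑ t ∈ rx.index,
          ((bH).coord i (Rmap f (rx.right t)) • rx.left t) ⊗ₜ[k] (bH) i := by
        refine Finset.sum_congr rfl fun i _ => ?_
        rw [Rmap_apply _ rx, TensorProduct.sum_tmul]
        rfl
    _ = ∑ t ∈ rx.index, rx.left t ⊗ₜ[k]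
          (∑ i : ι, (bH).coord i (Rmap f (rx.right t)) • (bH) i) := by
        rw [Finset.sum_comm]
        refine Finset.sum_congr rfl fun t _ => ?_
        rw [TensorProduct.tmul_sum]
        refine Finset.sum_congr rfl fun i _ => ?_
        rw [TensorProduct.smul_tmul]
    _ = ∑ t ∈ rx.index, rx.left t ⊗ₜ[k] Rmap f (rx.right t) := by
        refine Finset.sum_congr rfl fun t _ => ?_
        congr 1
        simp only [Module.Basis.coord_apply]
        exact Module.Basis.sum_repr _ _
    _ = ∑ t ∈ rx.index, ∑ m ∈ (rrx t).index,
          rx.left t ⊗ₜ[k] (f ((rrx t).right m) • (rrx t).left m) := by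
        refine Finset.sum_congr rfl fun t _ => ?_
        rw [Rmap_apply f (rrx t), TensorProduct.tmul_sum]
    _ = ∑ t ∈ rx.index, ∑ m ∈ (rlx t).index,
          (rlx t).left m ⊗ₜ[k] (f (rx.right t) • (rlx t).right m) := key.symm
    _ = Coalgebra.comul (R := k) (Rmap f x) := by
        rw [Rmap_apply f rx, map_sum]
        refine Finset.sum_congr rfl fun t _ => ?_
        rw [map_smul, ← (rlx t).eq, Finset.smul_sum]
        refine Finset.sum_congr rfl fun m _ => ?_
        rw [TensorProduct.tmul_smul]

/-- Tensor-level coassociativity of the dual comodule. -/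
lemma C2 (f : Module.Dual k H) :
    (∑ i : ι, ∑ j : ι,
        ((bH).coord j ∘ₗ Rmap ((bH).coord i ∘ₗ Rmap f)) ⊗ₜ[k] ((bH) j ⊗ₜ[k] (bH) i))
      = ∑ i : ι, ((bH).coord i ∘ₗ Rmap f) ⊗ₜ[k] Coalgebra.comul (R := k) ((bH) i) := by
  apply dth_inj (N := H ⊗[k] H)
  apply LinearMap.ext
  intro x
  simp only [map_sum, dualTensorHom_apply, LinearMap.sum_apply]
  calc ∑ i : ι, ∑ j : ι,
        ((bH).coord j ∘ₗ Rmap ((bH).coord i ∘ₗ Rmap f)) x • ((bH) j ⊗ₜ[k] (bH) i)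
      = ∑ i : ι, (Rmap ((bH).coord i ∘ₗ Rmap f) x) ⊗ₜ[k] (bH) i := by
        refine Finset.sum_congr rfl fun i _ => ?_
        calc ∑ j : ι, ((bH).coord j ∘ₗ Rmap ((bH).coord i ∘ₗ Rmap f)) x • ((bH) j ⊗ₜ[k] (bH) i)
            = (∑ j : ι, ((bH).coord j ∘ₗ Rmap ((bH).coord i ∘ₗ Rmap f)) x • (bH) j) ⊗ₜ[k]
                (bH) i := by
              rw [TensorProduct.sum_tmul]
              exact Finset.sum_congr rfl fun j _ => (TensorProduct.smul_tmul' _ _ _).symm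
          _ = (Rmap ((bH).coord i ∘ₗ Rmap f) x) ⊗ₜ[k] (bH) i := by
              congr 1
              simp only [LinearMap.comp_apply, Module.Basis.coord_apply]
              exact Module.Basis.sum_repr _ _
    _ = Coalgebra.comul (R := k) (Rmap f x) := C2'' f x
    _ = ∑ i : ι, ((bH).coord i ∘ₗ Rmap f) x • Coalgebra.comul (R := k) ((bH) i) := by
        conv_lhs => rw [show Rmap f x = ∑ i : ι, (bH).repr (Rmap f x) i • (bH) i from
          (Module.Basis.sum_repr _ _).symm]
        rw [map_sum]
        refine Finset.sum_congr rfl fun i _ => ?_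
        rw [map_smul, LinearMap.comp_apply, Module.Basis.coord_apply]

/-- The projection onto integrals coming from the fundamental theorem of Hopf modules. -/
def Pmap (g : Module.Dual k H) : Module.Dual k H :=
  ∑ j : ι, ract ((bH).coord j ∘ₗ Rmap g) (S ((bH) j))

lemma sum_comp_mulRight {α : Type*} (s : Finset α) (g : Module.Dual k H) (w : α → H) :
    ∑ m ∈ s, g ∘ₗ LinearMap.mulRight k (S (w m))
      = g ∘ₗ LinearMap.mulRight k (S (∑ m ∈ s, w m)) := by
  ext y
  simp only [LinearMap.coe_sum, Finset.sum_apply, LinearMap.comp_apply,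
    LinearMap.mulRight_apply, map_sum, Finset.mul_sum]

lemma comp_mulRight_algebraMap (g : Module.Dual k H) (c : k) :
    g ∘ₗ LinearMap.mulRight k (algebraMap k H c) = c • g := by
  ext y
  simp [Algebra.algebraMap_eq_smul_one, mul_smul_comm]

lemma antipode_algebraMap (c : k) : S (algebraMap k H c) = algebraMap k H c := by
  rw [Algebra.algebraMap_eq_smul_one, map_smul, antipode_one']

/-- `Pmap g` is a left integral. -/
lemma Rmap_Pmap (g : Module.Dual k H) (x : H) : Rmap (Pmap g) x = Pmap g x • 1 := by
  set rbi : (i : ι) → Coalgebra.Repr k ((bH) i) (H × H) := fun i => ℛ k ((bH) i) with hrbi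
  -- the transport map κ
  set γ : Module.Dual k H →ₗ[k] H →ₗ[k] H := LinearMap.mk₂ k
    (fun g' v => Rmap g' (x * S (S v)))
    (fun g' g'' v => by rw [map_add, LinearMap.add_apply])
    (fun c g' v => by rw [map_smul, LinearMap.smul_apply])
    (fun g' v v' => by rw [map_add, map_add, mul_add, map_add])
    (fun c g' v => by rw [map_smul, map_smul, mul_smul_comm, map_smul]) with hγ
  set κ : Module.Dual k H ⊗[k] (H ⊗[k] H) →ₗ[k] H :=
    LinearMap.mul' k H ∘ₗ TensorProduct.map LinearMap.id S ∘ₗ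
      LinearMap.rTensor H (TensorProduct.lift γ) ∘ₗ
      (TensorProduct.assoc k (Module.Dual k H) H H).symm.toLinearMap ∘ₗ
      LinearMap.lTensor (Module.Dual k H) (TensorProduct.comm k H H).toLinearMap with hκ
  have hκapp : ∀ (g' : Module.Dual k H) (u v : H),
      κ (g' ⊗ₜ[k] (u ⊗ₜ[k] v)) = Rmap g' (x * S (S v)) * S u := by
    intro g' u v
    simp [hκ, TensorProduct.assoc_symm_tmul, hγ]
  have hrhs : (∑ i : ι, ((bH).coord i ∘ₗ Rmap g) ⊗ₜ[k] Coalgebra.comul (R := k) ((bH) i))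
      = ∑ i : ι, ∑ m ∈ (rbi i).index,
          ((bH).coord i ∘ₗ Rmap g) ⊗ₜ[k] ((rbi i).left m ⊗ₜ[k] (rbi i).right m) :=
    Finset.sum_congr rfl fun i _ => by rw [← (rbi i).eq, TensorProduct.tmul_sum]
  have key := congrArg κ ((C2 g).trans hrhs)
  simp only [map_sum, hκapp] at key
  calc Rmap (Pmap g) x
      = ∑ i : ι, ∑ m ∈ (rbi i).index,
          Rmap ((bH).coord i ∘ₗ Rmap g) (x * S (S ((rbi i).right m))) * S ((rbi i).left m) := by
        rw [Pmap, map_sum, LinearMap.sum_apply]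
        refine Finset.sum_congr rfl fun i _ => ?_
        exact Rmap_ract _ (antipodeRepr (rbi i)) x
    _ = ∑ i : ι, ∑ j : ι,
          Rmap ((bH).coord j ∘ₗ Rmap ((bH).coord i ∘ₗ Rmap g)) (x * S (S ((bH) i))) *
            S ((bH) j) := key.symm
    _ = ∑ i : ι, (((bH).coord i ∘ₗ Rmap g) (x * S (S ((bH) i)))) • 1 := by
        refine Finset.sum_congr rfl fun i _ => ?_
        set y : H := x * S (S ((bH) i)) with hy
        have hm := congrArg (LinearMap.mul' k H ∘ₗ TensorProduct.map LinearMap.id S)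
          (C2'' ((bH).coord i ∘ₗ Rmap g) y)
        simp only [map_sum, LinearMap.comp_apply, TensorProduct.map_tmul,
          LinearMap.mul'_apply, LinearMap.id_coe, id_eq] at hm
        rw [hm]
        set v : H := Rmap ((bH).coord i ∘ₗ Rmap g) y with hv
        calc (LinearMap.mul' k H) ((TensorProduct.map LinearMap.id S)
              (Coalgebra.comul (R := k) v))
            = ∑ m ∈ (ℛ k v).index, (ℛ k v).left m * S ((ℛ k v).right m) := by
              rw [← (ℛ k v).eq, map_sum, map_sum]
              simp
          _ = algebraMap k H (Coalgebra.counit (R := k) v) :=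
              HopfAlgebra.sum_mul_antipode_eq_algebraMap_counit (ℛ k v)
          _ = (((bH).coord i ∘ₗ Rmap g) y) • 1 := by
              rw [Algebra.algebraMap_eq_smul_one, hv, counit_Rmap]
    _ = Pmap g x • 1 := by
        rw [Pmap, LinearMap.sum_apply, Finset.sum_smul]
        rfl

/-- Reconstruction: every functional is built from the projections (fundamental theorem). -/
lemma proj_eq (f : Module.Dual k H) :
    ∑ i : ι, ract (Pmap ((bH).coord i ∘ₗ Rmap f)) ((bH) i) = f := by
  set rbi : (i : ι) → Coalgebra.Repr k ((bH) i) (H × H) := fun i => ℛ k ((bH) i) with hrbi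
  set ractBil : Module.Dual k H →ₗ[k] H →ₗ[k] Module.Dual k H := LinearMap.mk₂ k
    (fun g w => g ∘ₗ LinearMap.mulRight k (S w))
    (fun g g' w => LinearMap.add_comp _ _ _)
    (fun c g w => LinearMap.smul_comp _ _ _)
    (fun g w w' => by ext y; simp [mul_add])
    (fun c g w => by ext y; simp [mul_smul_comm]) with hractBil
  set Ψ : Module.Dual k H ⊗[k] (H ⊗[k] H) →ₗ[k] Module.Dual k H :=
    TensorProduct.lift ractBil ∘ₗ
      LinearMap.lTensor (Module.Dual k H)
        (LinearMap.mul' k H ∘ₗ TensorProduct.map S LinearMap.id) with hΨ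
  have hΨapp : ∀ (g : Module.Dual k H) (u v : H),
      Ψ (g ⊗ₜ[k] (u ⊗ₜ[k] v)) = g ∘ₗ LinearMap.mulRight k (S (S u * v)) := by
    intro g u v
    simp [hΨ, hractBil]
  have hrhs : (∑ i : ι, ((bH).coord i ∘ₗ Rmap f) ⊗ₜ[k] Coalgebra.comul (R := k) ((bH) i))
      = ∑ i : ι, ∑ m ∈ (rbi i).index,
          ((bH).coord i ∘ₗ Rmap f) ⊗ₜ[k] ((rbi i).left m ⊗ₜ[k] (rbi i).right m) :=
    Finset.sum_congr rfl fun i _ => by rw [← (rbi i).eq, TensorProduct.tmul_sum]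
  have key := congrArg Ψ ((C2 f).trans hrhs)
  simp only [map_sum, hΨapp] at key
  calc ∑ i : ι, ract (Pmap ((bH).coord i ∘ₗ Rmap f)) ((bH) i)
      = ∑ i : ι, ∑ j : ι,
          ((bH).coord j ∘ₗ Rmap ((bH).coord i ∘ₗ Rmap f)) ∘ₗ
            LinearMap.mulRight k (S (S ((bH) j) * (bH) i)) := by
        refine Finset.sum_congr rfl fun i _ => ?_
        ext y
        simp only [ract, Pmap, LinearMap.comp_apply, LinearMap.coe_sum, Finset.sum_apply,
          LinearMap.mulRight_apply, antipode_mul_anti, mul_assoc]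
    _ = ∑ i : ι, ∑ m ∈ (rbi i).index,
          ((bH).coord i ∘ₗ Rmap f) ∘ₗ
            LinearMap.mulRight k (S (S ((rbi i).left m) * (rbi i).right m)) := key
    _ = ∑ i : ι, Coalgebra.counit (R := k) ((bH) i) • ((bH).coord i ∘ₗ Rmap f) := by
        refine Finset.sum_congr rfl fun i _ => ?_
        rw [sum_comp_mulRight, HopfAlgebra.sum_antipode_mul_eq_algebraMap_counit (rbi i), antipode_algebraMap,
          comp_mulRight_algebraMap]
    _ = f := by
        ext y
        simp only [LinearMap.coe_sum, Finset.sum_apply, LinearMap.smul_apply,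
          LinearMap.comp_apply, Module.Basis.coord_apply, smul_eq_mul]
        calc ∑ i : ι, Coalgebra.counit (R := k) ((bH) i) * (bH).repr (Rmap f y) i
            = Coalgebra.counit (R := k) (∑ i : ι, (bH).repr (Rmap f y) i • (bH) i) := by
              rw [map_sum]
              exact Finset.sum_congr rfl fun i _ => by rw [map_smul, smul_eq_mul, mul_comm]
          _ = f y := by rw [Module.Basis.sum_repr, counit_Rmap]

lemma exists_integral :
    ∃ lam : Module.Dual k H, lam ≠ 0 ∧ ∀ x, Rmap lam x = lam x • 1 := by
  by_contra hcon
  push_neg at hcon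
  have hz : ∀ g : Module.Dual k H, Pmap g = 0 := by
    intro g
    by_contra hne
    obtain ⟨x, hx⟩ := hcon _ hne
    exact hx (Rmap_Pmap g x)
  have hE := proj_eq (Coalgebra.counit (R := k) (A := H))
  have h0 : ∀ i : ι, ract (Pmap ((bH).coord i ∘ₗ
      Rmap (Coalgebra.counit (R := k) (A := H)))) ((bH) i) = 0 := by
    intro i
    rw [hz]
    exact LinearMap.zero_comp _
  rw [Finset.sum_congr rfl (fun i _ => h0 i), Finset.sum_const, smul_zero] at hE
  have : (0 : Module.Dual k H) 1 = Coalgebra.counit (R := k) (A := H) 1 := by rw [hE]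
  rw [Bialgebra.counit_one, LinearMap.zero_apply] at this
  exact zero_ne_one this

lemma antipode_injective : Function.Injective ⇑(HopfAlgebra.antipode (R := k) (A := H)) := by
  obtain ⟨lam, hne, hint⟩ := exists_integral (k := k) (H := H)
  obtain ⟨x₀, hx₀⟩ : ∃ x₀, lam x₀ ≠ 0 := by
    by_contra hall
    push_neg at hall
    exact hne (LinearMap.ext fun y => by rw [hall y, LinearMap.zero_apply])
  rw [← LinearMap.ker_eq_bot, LinearMap.ker_eq_bot']
  intro h hS
  set rh := ℛ k h with hrh
  have hA : ∀ x : H, ∑ j ∈ rh.index, lam (x * S (rh.left j)) • rh.right j = 0 := by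
    intro x
    have h0 : ract lam h = 0 := by
      ext y
      simp [ract, hS]
    have hcomp := Rmap_ract lam rh x
    rw [h0, map_zero, LinearMap.zero_apply] at hcomp
    rw [Finset.sum_congr rfl (fun j _ => by
      rw [hint (x * S (rh.left j)), smul_mul_assoc, one_mul])] at hcomp
    exact hcomp.symm
  have hB : (∑ j ∈ rh.index,
      (lam ∘ₗ LinearMap.mulRight k (S (rh.left j))) ⊗ₜ[k] rh.right j
      : Module.Dual k H ⊗[k] H) = 0 := by
    apply dth_inj (N := H)
    rw [map_sum, map_zero]
    apply LinearMap.ext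
    intro x
    simp only [LinearMap.sum_apply, dualTensorHom_apply, LinearMap.comp_apply,
      LinearMap.mulRight_apply, LinearMap.zero_apply]
    exact hA x
  set rlh : (j : rh.ι) → Coalgebra.Repr k (rh.left j) (H × H) := fun j => ℛ k (rh.left j) with hrlh
  set rrh : (j : rh.ι) → Coalgebra.Repr k (rh.right j) (H × H) := fun j => ℛ k (rh.right j) with hrrh
  set Θ : Module.Dual k H ⊗[k] H →ₗ[k] H :=
    (TensorProduct.lid k H).toLinearMap ∘ₗ
      LinearMap.rTensor H (contractLeft k H) ∘ₗ
      (TensorProduct.assoc k (Module.Dual k H) H H).symm.toLinearMap ∘ₗ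
      LinearMap.lTensor (Module.Dual k H)
        ((TensorProduct.map (LinearMap.mulLeft k x₀ ∘ₗ S ∘ₗ S) LinearMap.id) ∘ₗ
          Coalgebra.comul) with hΘ
  have hΘapp : ∀ (g : Module.Dual k H) (y : H) (ry : Coalgebra.Repr k y (H × H)),
      Θ (g ⊗ₜ[k] y) = ∑ m ∈ ry.index, g (x₀ * S (S (ry.left m))) • ry.right m := by
    intro g y ry
    conv_lhs => rw [hΘ]
    simp only [LinearMap.comp_apply, LinearMap.lTensor_tmul]
    rw [← ry.eq]
    simp only [map_sum, TensorProduct.map_tmul, TensorProduct.tmul_sum,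
      LinearMap.mulLeft_apply, LinearMap.id_coe, id_eq, LinearEquiv.coe_coe,
      TensorProduct.assoc_symm_tmul, LinearMap.rTensor_tmul, contractLeft_apply,
      TensorProduct.lid_tmul, LinearMap.comp_apply]
  have hΘ0 := congrArg Θ hB
  rw [map_zero, map_sum] at hΘ0
  have hΘt : ∑ j ∈ rh.index,
      Θ ((lam ∘ₗ LinearMap.mulRight k (S (rh.left j))) ⊗ₜ[k] rh.right j)
      = ∑ j ∈ rh.index, ∑ m ∈ (rrh j).index,
          lam (x₀ * S (rh.left j * S ((rrh j).left m))) • (rrh j).right m := by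
    refine Finset.sum_congr rfl fun j _ => ?_
    rw [hΘapp _ _ (rrh j)]
    refine Finset.sum_congr rfl fun m _ => ?_
    rw [LinearMap.comp_apply, LinearMap.mulRight_apply, antipode_mul_anti, mul_assoc]
  set χ : H ⊗[k] H →ₗ[k] k :=
    lam ∘ₗ LinearMap.mulLeft k x₀ ∘ₗ S ∘ₗ LinearMap.mul' k H ∘ₗ
      TensorProduct.map LinearMap.id S with hχ
  set Ξ : H ⊗[k] (H ⊗[k] H) →ₗ[k] H :=
    (TensorProduct.lid k H).toLinearMap ∘ₗ LinearMap.rTensor H χ ∘ₗ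
      (TensorProduct.assoc k H H H).symm.toLinearMap with hΞ
  have hΞapp : ∀ A B C : H, Ξ (A ⊗ₜ[k] (B ⊗ₜ[k] C)) = lam (x₀ * S (A * S B)) • C := by
    intro A B C
    simp [hΞ, hχ, TensorProduct.assoc_symm_tmul]
  have key := congrArg Ξ (Coalgebra.sum_tmul_tmul_eq (R := k) rh rlh rrh)
  simp only [map_sum, hΞapp] at key
  have hfin : lam x₀ • h = 0 := by
    calc lam x₀ • h
        = lam x₀ • ∑ j ∈ rh.index, Coalgebra.counit (R := k) (rh.left j) • rh.right j := by
          rw [sum_counit_smul_right rh]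
      _ = ∑ j ∈ rh.index, ∑ m ∈ (rlh j).index,
            lam (x₀ * S ((rlh j).left m * S ((rlh j).right m))) • rh.right j := by
          rw [Finset.smul_sum]
          refine Finset.sum_congr rfl fun j _ => ?_
          have hsum : ∑ m ∈ (rlh j).index, (rlh j).left m * S ((rlh j).right m)
              = algebraMap k H (Coalgebra.counit (R := k) (rh.left j)) :=
            HopfAlgebra.sum_mul_antipode_eq_algebraMap_counit (rlh j)
          rw [smul_smul, ← Finset.sum_smul]
          congr 1
          calc lam x₀ * Coalgebra.counit (R := k) (rh.left j)
              = Coalgebra.counit (R := k) (rh.left j) * lam x₀ := mul_comm _ _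
            _ = lam (x₀ * S (∑ m ∈ (rlh j).index,
                  (rlh j).left m * S ((rlh j).right m))) := by
                rw [hsum, antipode_algebraMap, Algebra.algebraMap_eq_smul_one, mul_smul_comm,
                  mul_one, map_smul, smul_eq_mul]
            _ = ∑ m ∈ (rlh j).index,
                  lam (x₀ * S ((rlh j).left m * S ((rlh j).right m))) := by
                rw [map_sum, Finset.mul_sum, map_sum]
      _ = ∑ j ∈ rh.index, ∑ m ∈ (rrh j).index,
            lam (x₀ * S (rh.left j * S ((rrh j).left m))) • (rrh j).right m := key
      _ = ∑ j ∈ rh.index,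
          Θ ((lam ∘ₗ LinearMap.mulRight k (S (rh.left j))) ⊗ₜ[k] rh.right j) := hΘt.symm
      _ = 0 := hΘ0
  rcases smul_eq_zero.mp hfin with hc | hh
  · exact absurd hc hx₀
  · exact hh

end FinDim

end Hopf
end HopfProof

/-- The antipode of a finite-dimensional Hopf algebra `H` over a field `k`
is bijective. -/
theorem antipode_bijective_of_finiteDimensional
    (k : Type u) [Field k] (H : Type v) [Ring H] [HopfAlgebra k H] [FiniteDimensional k H] :
    Function.Bijective (HopfAlgebra.antipode (R := k) (A := H)) := by
  have hinj : Function.Injective ⇑(HopfAlgebra.antipode (R := k) (A := H)) :=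
    HopfProof.antipode_injective
  exact ⟨hinj, LinearMap.injective_iff_surjective.mp hinj⟩
end
end
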